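/- arXiv:1212.4816 — 11 statements merged into one kernel-verified Lean document; each statement's English description precedes it below -/
import Mathlib

section
/- Let m ≥ 3 and n ≥ 3 be integers. Then the determinant of the adjacency matrix of the Cartesian product C_m □ C_n of the cycle graphs on m and n vertices equals 4^gcd(m,n) if both m and n are odd, and equals 0 otherwise. -/
open Finset

open SimpleGraph

-- L1: roots of unity products
lemma prod_sub_pow_aux {ω : ℂ} {m : ℕ} (hm : 0 < m) (hω : IsPrimitiveRoot ω m) (x : ℂ) :
    ∏ j ∈ Finset.range m, (x - ω ^ j) = x ^ m - 1 := by
  have h := Polynomial.X_pow_sub_one_eq_prod hm hω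
  have heval := congrArg (Polynomial.eval x) h
  simp only [Polynomial.eval_sub, Polynomial.eval_pow, Polynomial.eval_X, Polynomial.eval_one,
    Polynomial.eval_prod, Polynomial.eval_C] at heval
  have himg : (Finset.range m).image (fun j => ω ^ j) = Polynomial.nthRootsFinset m (1 : ℂ) := by
    apply Finset.eq_of_subset_of_card_le
    · intro z hz
      simp only [Finset.mem_image, Finset.mem_range] at hz
      obtain ⟨j, hj, rfl⟩ := hz
      exact (Polynomial.mem_nthRootsFinset hm 1).2 (by
        rw [← pow_mul, mul_comm, pow_mul, hω.pow_eq_one, one_pow])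
    · rw [hω.card_nthRootsFinset, Finset.card_image_of_injOn hω.injOn_pow, Finset.card_range]
  rw [heval, ← himg, Finset.prod_image]
  intro i hi j hj hij
  exact hω.pow_inj (mem_range.1 hi) (mem_range.1 hj) hij

lemma prod_add_pow_aux {ω : ℂ} {m : ℕ} (hm : 0 < m) (hω : IsPrimitiveRoot ω m) (x : ℂ) :
    ∏ j ∈ Finset.range m, (x + ω ^ j) = x ^ m - (-1) ^ m := by
  have h1 : ∏ j ∈ Finset.range m, (-x - ω ^ j) = (-x) ^ m - 1 := prod_sub_pow_aux hm hω (-x)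
  have h2 : ∏ j ∈ Finset.range m, (-x - ω ^ j) = (-1) ^ m * ∏ j ∈ Finset.range m, (x + ω ^ j) := by
    have he : ∀ j ∈ Finset.range m, (-x - ω ^ j) = (-1) * (x + ω ^ j) := by intros; ring
    rw [Finset.prod_congr rfl he, Finset.prod_mul_distrib, Finset.prod_const, Finset.card_range]
  have hmu : ((-1 : ℂ) ^ m) * ((-1 : ℂ) ^ m) = 1 := by
    rw [← pow_add]; exact Even.neg_one_pow ⟨m, rfl⟩
  have := h2.symm.trans h1
  calc ∏ j ∈ Finset.range m, (x + ω ^ j)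
      = ((-1 : ℂ) ^ m * (-1 : ℂ) ^ m) * ∏ j ∈ Finset.range m, (x + ω ^ j) := by rw [hmu, one_mul]
    _ = (-1 : ℂ) ^ m * ((-x) ^ m - 1) := by rw [mul_assoc, this]
    _ = x ^ m - (-1) ^ m := by rw [neg_pow x m, mul_sub, ← mul_assoc, hmu, one_mul, mul_one]

lemma prod_range_mul_periodic {M : Type*} [CommMonoid M] (f : ℕ → M) (p a : ℕ)
    (hf : ∀ k, f (k + p) = f k) :
    ∏ k ∈ Finset.range (a * p), f k = (∏ k ∈ Finset.range p, f k) ^ a := by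
  have hshift : ∀ a k, f (a * p + k) = f k := by
    intro a
    induction a with
    | zero => simp
    | succ a ihh =>
      intro k
      rw [Nat.succ_mul, add_comm (a*p) p, add_assoc, add_comm p _, hf, ihh]
  induction a with
  | zero => simp
  | succ a ih =>
    rw [Nat.succ_mul, Finset.prod_range_add, ih, pow_succ]
    congr 1
    exact Finset.prod_congr rfl fun i _ => hshift a i

lemma prod_one_add_pow {ζ : ℂ} {m n : ℕ} (hm : Odd m) (hn : Odd n) (hm0 : 0 < m) (hn0 : 0 < n)
    (hζ : IsPrimitiveRoot ζ n) :
    ∏ k ∈ Finset.range n, (1 + ζ ^ (m * k)) = 2 ^ Nat.gcd m n := by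
  set d := Nat.gcd m n with hd
  have hd0 : 0 < d := Nat.gcd_pos_of_pos_left n hm0
  set p := n / d with hp
  have hdn : d ∣ n := Nat.gcd_dvd_right m n
  have hnp : n = d * p := (Nat.mul_div_cancel' hdn).symm
  have hp0 : 0 < p := Nat.div_pos (Nat.le_of_dvd hn0 hdn) hd0
  have hpodd : Odd p := by
    rcases Nat.even_or_odd p with he | ho
    · exfalso; exact (Nat.not_even_iff_odd.mpr hn) (hnp ▸ he.mul_left d)
    · exact ho
  -- η = ζ^m is a primitive p-th root of unity
  have hη : IsPrimitiveRoot (ζ ^ m) p := by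
    have h1 : orderOf (ζ ^ m) = orderOf ζ / Nat.gcd (orderOf ζ) m := orderOf_pow' ζ hm0.ne'
    have h2 : orderOf ζ = n := hζ.eq_orderOf.symm
    have h3 : orderOf (ζ ^ m) = p := by rw [h1, h2, Nat.gcd_comm n m, ← hd, hp]
    exact h3 ▸ IsPrimitiveRoot.orderOf (ζ ^ m)
  have hper : ∀ k, (1 : ℂ) + (ζ ^ m) ^ (k + p) = 1 + (ζ ^ m) ^ k := by
    intro k; rw [pow_add, hη.pow_eq_one, mul_one]
  calc ∏ k ∈ Finset.range n, (1 + ζ ^ (m * k))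
      = ∏ k ∈ Finset.range (d * p), (1 + (ζ ^ m) ^ k) := by
        rw [← hnp]; exact Finset.prod_congr rfl fun k _ => by rw [pow_mul]
    _ = (∏ k ∈ Finset.range p, (1 + (ζ ^ m) ^ k)) ^ d :=
        prod_range_mul_periodic _ p d hper
    _ = (2 : ℂ) ^ d := by
        rw [prod_add_pow_aux hp0 hη 1, one_pow, hpodd.neg_one_pow]; norm_num
    _ = 2 ^ Nat.gcd m n := by rw [hd]

lemma pow_val_add {x : ℂ} {m : ℕ} [NeZero m] (hx : x ^ m = 1) (a b : Fin m) :
    x ^ ((a + b) : Fin m).val = x ^ a.val * x ^ b.val := by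
  have h : ((a + b) : Fin m).val = (a.val + b.val) % m := Fin.add_def a b ▸ rfl
  have h2 : a.val + b.val = m * ((a.val + b.val) / m) + (a.val + b.val) % m :=
    (Nat.div_add_mod _ _).symm
  rw [← pow_add, h2, pow_add, pow_mul, hx, one_pow, one_mul, h]

open scoped Classical in
lemma det_adjMatrix_eq_prod (m n : ℕ) (hm : 3 ≤ m) (hn : 3 ≤ n)
    {ω ζ : ℂ} (hω : IsPrimitiveRoot ω m) (hζ : IsPrimitiveRoot ζ n) :
    (((cycleGraph m).boxProd (cycleGraph n)).adjMatrix ℂ).det =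
      ∏ p : Fin m × Fin n,
        (ω ^ p.1.val + (ω ^ p.1.val)⁻¹ + ζ ^ p.2.val + (ζ ^ p.2.val)⁻¹) := by
  obtain ⟨m', rfl⟩ : ∃ m', m = m' + 2 := ⟨m - 2, by omega⟩
  obtain ⟨n', rfl⟩ : ∃ n', n = n' + 2 := ⟨n - 2, by omega⟩
  set m := m' + 2
  set n := n' + 2
  have hω0 : ω ≠ 0 := hω.ne_zero (by omega)
  have hζ0 : ζ ≠ 0 := hζ.ne_zero (by omega)
  set G := (cycleGraph m).boxProd (cycleGraph n) with hG
  set lam : Fin m × Fin n → ℂ := fun p =>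
    ω ^ p.1.val + (ω ^ p.1.val)⁻¹ + ζ ^ p.2.val + (ζ ^ p.2.val)⁻¹ with hlam
  set V : Matrix (Fin m × Fin n) (Fin m × Fin n) ℂ := fun p q =>
    ω ^ (p.1.val * q.1.val) * ζ ^ (p.2.val * q.2.val) with hV
  have key : V * (G.adjMatrix ℂ) = Matrix.diagonal lam * V := by
    ext p q
    rw [SimpleGraph.mul_adjMatrix_apply, Matrix.diagonal_mul]
    have hne1 : q.1 - 1 ≠ q.1 + 1 := by
      intro h
      have h2 : (-1 : Fin m) = 1 := by
        have := congrArg (fun z => z - q.1) h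
        simpa [sub_sub_cancel_left, add_sub_cancel_left, sub_eq_add_neg, add_comm] using this
      have := congrArg Fin.val h2
      rw [Fin.coe_neg_one, Fin.val_one] at this
      omega
    have hne2 : q.2 - 1 ≠ q.2 + 1 := by
      intro h
      have h2 : (-1 : Fin n) = 1 := by
        have := congrArg (fun z => z - q.2) h
        simpa [sub_sub_cancel_left, add_sub_cancel_left, sub_eq_add_neg, add_comm] using this
      have := congrArg Fin.val h2
      rw [Fin.coe_neg_one, Fin.val_one] at this
      omega
    have hdisj : Disjoint ((cycleGraph m).neighborFinset q.1 ×ˢ ({q.2} : Finset (Fin n)))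
        (({q.1} : Finset (Fin m)) ×ˢ (cycleGraph n).neighborFinset q.2) := by
      rw [Finset.disjoint_left]
      rintro ⟨a, b⟩ h1 h2
      simp only [Finset.mem_product, Finset.mem_singleton, mem_neighborFinset] at h1 h2
      exact (cycleGraph m).irrefl (h2.1 ▸ h1.1)
    have hsum : ∀ (inst : Fintype (G.neighborSet q)),
        (∑ u ∈ @SimpleGraph.neighborFinset _ G q inst, V p u) =
          (V p (q.1 - 1, q.2) + V p (q.1 + 1, q.2)) +
            (V p (q.1, q.2 - 1) + V p (q.1, q.2 + 1)) := by
      intro inst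
      have h1 : @SimpleGraph.neighborFinset _ G q inst =
          ((cycleGraph m).neighborFinset q.1 ×ˢ {q.2}) ∪
            ({q.1} ×ˢ (cycleGraph n).neighborFinset q.2) := by
        ext u
        rw [SimpleGraph.mem_neighborFinset]
        simp only [hG, boxProd_adj, Finset.mem_union, Finset.mem_product, Finset.mem_singleton,
          mem_neighborFinset]
        constructor
        · rintro (⟨h1, h2⟩ | ⟨h1, h2⟩)
          · exact Or.inl ⟨h1, h2.symm⟩
          · exact Or.inr ⟨h2.symm, h1⟩
        · rintro (⟨h1, h2⟩ | ⟨h1, h2⟩)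
          · exact Or.inl ⟨h1, h2.symm⟩
          · exact Or.inr ⟨h2, h1.symm⟩
      rw [h1, Finset.sum_union hdisj, cycleGraph_neighborFinset, cycleGraph_neighborFinset]
      rw [Finset.sum_product, Finset.sum_product, Finset.sum_singleton, Finset.sum_pair hne1,
        Finset.sum_singleton, Finset.sum_singleton, Finset.sum_pair hne2]
    rw [hsum]
    set μ : ℂ := ω ^ p.1.val with hμ
    set ν : ℂ := ζ ^ p.2.val with hν
    have hμm : μ ^ m = 1 := by rw [hμ, ← pow_mul, mul_comm, pow_mul, hω.pow_eq_one, one_pow]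
    have hνn : ν ^ n = 1 := by rw [hν, ← pow_mul, mul_comm, pow_mul, hζ.pow_eq_one, one_pow]
    have hμ0 : μ ≠ 0 := pow_ne_zero _ hω0
    have hν0 : ν ≠ 0 := pow_ne_zero _ hζ0
    have hVform : ∀ a : Fin m, ∀ b : Fin n, V p (a, b) = μ ^ a.val * ν ^ b.val := by
      intro a b; rw [hV]; simp only [hμ, hν, ← pow_mul]
    have hmul1 : ∀ a : Fin m, μ ^ ((a + 1 : Fin m)).val = μ ^ a.val * μ := by
      intro a
      rw [pow_val_add hμm a 1, Fin.val_one, pow_one]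
    have hsub1 : ∀ a : Fin m, μ ^ ((a - 1 : Fin m)).val = μ ^ a.val * μ⁻¹ := by
      intro a
      have := hmul1 (a - 1)
      rw [sub_add_cancel] at this
      field_simp [this]
      exact this.symm
    have hmul2 : ∀ b : Fin n, ν ^ ((b + 1 : Fin n)).val = ν ^ b.val * ν := by
      intro b
      rw [pow_val_add hνn b 1, Fin.val_one, pow_one]
    have hsub2 : ∀ b : Fin n, ν ^ ((b - 1 : Fin n)).val = ν ^ b.val * ν⁻¹ := by
      intro b
      have := hmul2 (b - 1)
      rw [sub_add_cancel] at this
      field_simp [this]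
      exact this.symm
    rw [hVform (q.1 - 1) q.2, hVform (q.1 + 1) q.2, hVform q.1 (q.2 - 1),
      hVform q.1 (q.2 + 1), hVform q.1 q.2, hsub1, hmul1, hsub2, hmul2, hlam]
    simp only
    rw [hμ, hν]
    field_simp
    ring
  have hdetV : V.det ≠ 0 := by
    classical
    set W₁ := Matrix.vandermonde (fun j : Fin m => ω ^ (j : ℕ)) with hW1
    set W₂ := Matrix.vandermonde (fun k : Fin n => ζ ^ (k : ℕ)) with hW2
    have hVK : V = Matrix.kroneckerMap (· * ·) W₁ W₂ := by
      ext p q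
      rw [hV, Matrix.kroneckerMap_apply, hW1, hW2]
      simp [Matrix.vandermonde, pow_mul]
    rw [hVK, Matrix.det_kronecker]
    have h1 : W₁.det ≠ 0 := by
      rw [hW1, Matrix.det_vandermonde]
      apply Finset.prod_ne_zero_iff.mpr
      intro i _
      apply Finset.prod_ne_zero_iff.mpr
      intro j hj
      have hij : i < j := Finset.mem_Ioi.mp hj
      refine sub_ne_zero.mpr fun h => ?_
      exact absurd (hω.pow_inj j.isLt i.isLt h) (by omega)
    have h2 : W₂.det ≠ 0 := by
      rw [hW2, Matrix.det_vandermonde]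
      apply Finset.prod_ne_zero_iff.mpr
      intro i _
      apply Finset.prod_ne_zero_iff.mpr
      intro j hj
      have hij : i < j := Finset.mem_Ioi.mp hj
      refine sub_ne_zero.mpr fun h => ?_
      exact absurd (hζ.pow_inj j.isLt i.isLt h) (by omega)
    exact mul_ne_zero (pow_ne_zero _ h1) (pow_ne_zero _ h2)
  have hdets := congrArg Matrix.det key
  rw [Matrix.det_mul, Matrix.det_mul, Matrix.det_diagonal] at hdets
  have h := mul_left_cancel₀ hdetV (hdets.trans (mul_comm _ _))
  rw [h, hlam]

lemma inner_prod_aux {ω : ℂ} {m : ℕ} (hm0 : 0 < m) (hmodd : Odd m)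
    (hω : IsPrimitiveRoot ω m) {c : ℂ} (hc : c ≠ 0) :
    ∏ j ∈ Finset.range m, (ω ^ j + (ω ^ j)⁻¹ + c + c⁻¹) = (c ^ m)⁻¹ * (1 + c ^ m) ^ 2 := by
  have hω0 : ω ≠ 0 := hω.ne_zero hm0.ne'
  have hcm : c ^ m ≠ 0 := pow_ne_zero _ hc
  have hprodω : ∏ j ∈ Finset.range m, ω ^ j = 1 := by
    rw [Finset.prod_pow_eq_pow_sum, Finset.sum_range_id]
    obtain ⟨t, ht⟩ := hmodd
    have h : m * (m - 1) / 2 = m * t := by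
      subst ht
      have h1 : 2 * t + 1 - 1 = 2 * t := by omega
      rw [h1]
      have h2 : (2 * t + 1) * (2 * t) = (2 * t + 1) * t * 2 := by ring
      rw [h2, Nat.mul_div_cancel _ (by norm_num : 0 < 2)]
    rw [h, pow_mul, hω.pow_eq_one, one_pow]
  have hfac : ∀ j ∈ Finset.range m, ω ^ j + (ω ^ j)⁻¹ + c + c⁻¹ =
      ((ω ^ j)⁻¹ * c⁻¹) * ((c + ω ^ j) * ((c⁻¹ + ω ^ j) * c)) := by
    intro j _
    have h0 : ω ^ j ≠ 0 := pow_ne_zero j hω0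
    field_simp
    ring
  rw [Finset.prod_congr rfl hfac, Finset.prod_mul_distrib, Finset.prod_mul_distrib,
    Finset.prod_mul_distrib, Finset.prod_mul_distrib, Finset.prod_inv_distrib, hprodω, inv_one,
    Finset.prod_const, Finset.card_range, Finset.prod_const, Finset.card_range,
    prod_add_pow_aux hm0 hω c, prod_add_pow_aux hm0 hω c⁻¹, hmodd.neg_one_pow, inv_pow]
  have h1 : (c ^ m)⁻¹ * c ^ m = 1 := inv_mul_cancel₀ hcm
  field_simp
  ring

open scoped Classical in
theorem det_adjMatrix_torus (m n : ℕ) (hm : 3 ≤ m) (hn : 3 ≤ n) :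
    (((cycleGraph m).boxProd (cycleGraph n)).adjMatrix ℤ).det =
      if Odd m ∧ Odd n then (4 : ℤ) ^ Nat.gcd m n else 0 := by
  have hm0 : 0 < m := by omega
  have hn0 : 0 < n := by omega
  set ω : ℂ := Complex.exp (2 * Real.pi * Complex.I / m) with hωdef
  set ζ : ℂ := Complex.exp (2 * Real.pi * Complex.I / n) with hζdef
  have hω : IsPrimitiveRoot ω m := Complex.isPrimitiveRoot_exp m hm0.ne'
  have hζ : IsPrimitiveRoot ζ n := Complex.isPrimitiveRoot_exp n hn0.ne'
  set G := (cycleGraph m).boxProd (cycleGraph n) with hG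
  have hcast : ((G.adjMatrix ℤ).det : ℂ) = (G.adjMatrix ℂ).det := by
    have h := RingHom.map_det (Int.castRingHom ℂ) (G.adjMatrix ℤ)
    simp only [eq_intCast] at h
    rw [h]
    congr 1
    ext p q
    by_cases hadj : G.Adj p q <;> simp [hadj, Matrix.map_apply]
  have hprod := det_adjMatrix_eq_prod m n hm hn hω hζ
  apply Int.cast_injective (α := ℂ)
  rw [hcast, hprod]
  push_cast
  by_cases hodd : Odd m ∧ Odd n
  · rw [if_pos hodd]
    obtain ⟨hmodd, hnodd⟩ := hodd
    have hζ0 : ζ ≠ 0 := hζ.ne_zero hn0.ne'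
    calc ∏ p : Fin m × Fin n,
          (ω ^ p.1.val + (ω ^ p.1.val)⁻¹ + ζ ^ p.2.val + (ζ ^ p.2.val)⁻¹)
        = ∏ j : Fin m, ∏ k : Fin n,
            (ω ^ j.val + (ω ^ j.val)⁻¹ + ζ ^ k.val + (ζ ^ k.val)⁻¹) :=
          Fintype.prod_prod_type _
      _ = ∏ k : Fin n, ∏ j : Fin m,
            (ω ^ j.val + (ω ^ j.val)⁻¹ + ζ ^ k.val + (ζ ^ k.val)⁻¹) := Finset.prod_comm
      _ = ∏ k : Fin n, ((ζ ^ k.val) ^ m)⁻¹ * (1 + (ζ ^ k.val) ^ m) ^ 2 := by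
          refine Finset.prod_congr rfl fun k _ => ?_
          rw [Fin.prod_univ_eq_prod_range
            (fun j => ω ^ j + (ω ^ j)⁻¹ + ζ ^ k.val + (ζ ^ k.val)⁻¹) m]
          exact inner_prod_aux hm0 hmodd hω (pow_ne_zero _ hζ0)
      _ = ∏ k ∈ Finset.range n, (ζ ^ (m * k))⁻¹ * (1 + ζ ^ (m * k)) ^ 2 := by
          rw [Fin.prod_univ_eq_prod_range (fun k => ((ζ ^ k) ^ m)⁻¹ * (1 + (ζ ^ k) ^ m) ^ 2) n]
          refine Finset.prod_congr rfl fun k _ => ?_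
          rw [← pow_mul, mul_comm k m]
      _ = (∏ k ∈ Finset.range n, (ζ ^ (m * k)))⁻¹ *
            (∏ k ∈ Finset.range n, (1 + ζ ^ (m * k))) ^ 2 := by
          rw [Finset.prod_mul_distrib, Finset.prod_inv_distrib, Finset.prod_pow]
      _ = (4 : ℂ) ^ Nat.gcd m n := by
          rw [prod_one_add_pow hmodd hnodd hm0 hn0 hζ]
          have hunit : ∏ k ∈ Finset.range n, ζ ^ (m * k) = 1 := by
            rw [Finset.prod_pow_eq_pow_sum, ← Finset.mul_sum, Finset.sum_range_id]
            obtain ⟨t, ht⟩ := hnodd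
            have hq : n * (n - 1) / 2 = n * t := by
              subst ht
              have h1 : 2 * t + 1 - 1 = 2 * t := by omega
              rw [h1]
              have h2 : (2 * t + 1) * (2 * t) = (2 * t + 1) * t * 2 := by ring
              rw [h2, Nat.mul_div_cancel _ (by norm_num : 0 < 2)]
            have h : m * (n * (n - 1) / 2) = n * (m * t) := by rw [hq]; ring
            rw [h, pow_mul, hζ.pow_eq_one, one_pow]
          rw [hunit, inv_one, one_mul, ← pow_mul,
            show (4 : ℂ) = 2 ^ 2 by norm_num, ← pow_mul, mul_comm]
  · rw [if_neg hodd]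
    rw [Decidable.not_and_iff_or_not, Nat.not_odd_iff_even, Nat.not_odd_iff_even] at hodd
    have hzero : ∀ (x : ℂ) (k : ℕ) (hk0 : 0 < k) (hkeven : Even k)
        (hx : IsPrimitiveRoot x k), x ^ (k / 2) + (x ^ (k / 2))⁻¹ = -2 := by
      intro x k hk0 hkeven hx
      obtain ⟨t, ht⟩ := hkeven
      have h2 : x ^ (k / 2) * x ^ (k / 2) = 1 := by
        rw [← pow_add]
        have : k / 2 + k / 2 = k := by omega
        rw [this, hx.pow_eq_one]
      have hne : x ^ (k / 2) ≠ 1 := by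
        intro h
        have := hx.dvd_of_pow_eq_one _ h
        have h1 : 0 < k / 2 := by omega
        have h2 : k / 2 < k := by omega
        exact absurd (Nat.le_of_dvd h1 this) (by omega)
      have := (mul_self_eq_one_iff.mp h2).resolve_left hne
      rw [this]
      norm_num
    rcases hodd with hme | hne
    · refine Finset.prod_eq_zero
        (Finset.mem_univ ((⟨m / 2, by omega⟩ : Fin m), (⟨0, by omega⟩ : Fin n))) ?_
      have h0 : ((⟨0, by omega⟩ : Fin n) : ℕ) = 0 := rfl
      have h1 : ((⟨m / 2, by omega⟩ : Fin m) : ℕ) = m / 2 := rfl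
      rw [h0, h1, pow_zero, inv_one]
      linear_combination hzero ω m hm0 hme hω
    · refine Finset.prod_eq_zero
        (Finset.mem_univ ((⟨0, by omega⟩ : Fin m), (⟨n / 2, by omega⟩ : Fin n))) ?_
      have h0 : ((⟨0, by omega⟩ : Fin m) : ℕ) = 0 := rfl
      have h1 : ((⟨n / 2, by omega⟩ : Fin n) : ℕ) = n / 2 := rfl
      rw [h0, h1, pow_zero, inv_one]
      linear_combination hzero ζ n hn0 hne hζ
end

section
/- Let m > 1 and n ≥ 3 be integers. Then the determinant of the adjacency matrix of the Cartesian product P_{m-1} □ C_n of the path graph on m-1 vertices and the cycle graph on n vertices equals m if n is odd and gcd(m,n) = 1; equals (-1)^(m-1) · m^2 if n is even and gcd(m, n/2) = 1; and equals 0 otherwise. -/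
open SimpleGraph

namespace DetCyl
open Finset Matrix SimpleGraph Kronecker


lemma pow_mod_eq {η : ℂ} {N : ℕ} (hη : η ^ N = 1) (a : ℕ) : η ^ (a % N) = η ^ a := by
  conv_rhs => rw [← Nat.div_add_mod a N]
  rw [pow_add, pow_mul, hη, one_pow, one_mul]

lemma mem_Ico_mul_mod {N c k : ℕ} (hc : Nat.Coprime c N) (hk : k ∈ Ico 1 N) :
    c * k % N ∈ Ico 1 N := by
  simp only [mem_Ico] at hk ⊢
  have hN : 0 < N := by omega
  refine ⟨?_, Nat.mod_lt _ hN⟩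
  by_contra h
  have h0 : c * k % N = 0 := by omega
  have : N ∣ c * k := Nat.dvd_of_mod_eq_zero h0
  have : N ∣ k := (Nat.Coprime.dvd_of_dvd_mul_left (Nat.coprime_comm.mp hc) this)
  have := Nat.le_of_dvd (by omega) this
  omega

lemma prod_Ico_reindex {N : ℕ} (hN : 0 < N) {c : ℕ} (hc : Nat.Coprime c N) (F : ℕ → ℂ) :
    ∏ k ∈ Ico 1 N, F (c * k % N) = ∏ k ∈ Ico 1 N, F k := by
  rcases eq_or_lt_of_le (show 1 ≤ N from hN) with h1 | h1
  · simp [← h1]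
  obtain ⟨c', -, hcc'⟩ := Nat.exists_mul_mod_eq_one_of_coprime hc h1
  have hmodeq : (c * c') % N = 1 % N := by rw [hcc', Nat.mod_eq_of_lt h1]
  have hc' : Nat.Coprime c' N := by
    have h2 : Nat.Coprime (c' * c) N := by
      have : Nat.gcd (c' * c) N = Nat.gcd (c' * c % N) N := by
        rw [Nat.gcd_comm, Nat.gcd_rec]
      unfold Nat.Coprime
      rw [this, mul_comm, hcc', Nat.gcd_one_left]
    exact Nat.Coprime.coprime_dvd_left (Dvd.intro c rfl) h2
  have key : ∀ a b k : ℕ, a * b % N = 1 % N → k ∈ Ico 1 N → a * (b * k % N) % N = k := by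
    intro a b k hab hk
    simp only [mem_Ico] at hk
    have h3 : a * (b * k % N) ≡ a * (b * k) [MOD N] := Nat.ModEq.mul_left a (Nat.mod_modEq _ N)
    have h4 : a * (b * k) = (a * b) * k := by ring
    have h5 : (a * b) * k ≡ 1 * k [MOD N] := Nat.ModEq.mul_right k hab
    have h6 : a * (b * k % N) ≡ k [MOD N] := by
      calc a * (b * k % N) ≡ a * (b * k) [MOD N] := h3
        _ = (a * b) * k := h4
        _ ≡ 1 * k [MOD N] := h5
        _ = k := one_mul k
    have h7 : a * (b * k % N) % N = k % N := h6
    rwa [Nat.mod_eq_of_lt hk.2] at h7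
  refine Finset.prod_nbij' (fun k => c * k % N) (fun k => c' * k % N) ?_ ?_ ?_ ?_ ?_
  · intro k hk; exact mem_Ico_mul_mod hc hk
  · intro k hk; exact mem_Ico_mul_mod hc' hk
  · intro k hk; exact key c' c k (by rwa [mul_comm]) hk
  · intro k hk; exact key c c' k hmodeq hk
  · intro k hk; rfl



lemma prod_gg {N : ℕ} (hN : 0 < N) {η : ℂ} (hη : IsPrimitiveRoot η N) (m : ℕ) (hm : 0 < m) :
    ∏ k ∈ range N, (∑ j ∈ range m, (η ^ k) ^ j) =
      if Nat.gcd m N = 1 then (m : ℂ) else 0 := by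
  have hη1 : η ^ N = 1 := hη.pow_eq_one
  have hne1 : ∀ k ∈ Ico 1 N, η ^ k ≠ 1 := by
    intro k hk
    simp only [mem_Ico] at hk
    intro h
    have := (hη.pow_eq_one_iff_dvd k).mp h
    have := Nat.le_of_dvd (by omega) this
    omega
  split_ifs with hgcd
  · have hsplit : ∏ k ∈ range N, (∑ j ∈ range m, (η ^ k) ^ j)
        = (∑ j ∈ range m, ((η:ℂ) ^ 0) ^ j) * ∏ k ∈ Ico 1 N, (∑ j ∈ range m, (η ^ k) ^ j) := by
      rw [range_eq_Ico, ← Finset.prod_Ico_consecutive _ (Nat.zero_le 1) hN]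
      congr 1
      simp
    rw [hsplit]
    simp only [pow_zero, one_pow]
    rw [Finset.sum_const, card_range, nsmul_eq_mul, mul_one]
    have hIco : ∏ k ∈ Ico 1 N, (∑ j ∈ range m, (η ^ k) ^ j) = 1 := by
      have hg : ∀ k ∈ Ico 1 N, (∑ j ∈ range m, (η ^ k) ^ j) = ((η ^ k) ^ m - 1) / (η ^ k - 1) :=
        fun k hk => geom_sum_eq (hne1 k hk) m
      rw [Finset.prod_congr rfl hg, Finset.prod_div_distrib]
      have hnum : ∏ k ∈ Ico 1 N, ((η ^ k) ^ m - 1) = ∏ k ∈ Ico 1 N, (η ^ k - 1) := by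
        have h1 : ∀ k ∈ Ico 1 N, (η ^ k) ^ m - 1 = (fun t => η ^ t - 1) (m * k % N) := by
          intro k hk
          simp only
          rw [pow_mod_eq hη1, ← pow_mul, mul_comm]
        rw [Finset.prod_congr rfl h1]
        simpa using prod_Ico_reindex hN hgcd (fun t => η ^ t - 1)
      rw [hnum, div_self]
      apply Finset.prod_ne_zero_iff.mpr
      intro k hk
      exact sub_ne_zero_of_ne (hne1 k hk)
    rw [hIco, mul_one]
  · set d := Nat.gcd m N with hd
    have hdN : d ∣ N := Nat.gcd_dvd_right m N
    have hdm : d ∣ m := Nat.gcd_dvd_left m N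
    have hd0 : d ≠ 0 := by
      intro h
      have := Nat.eq_zero_of_gcd_eq_zero_left (hd ▸ h)
      omega
    have hd2 : 2 ≤ d := by omega
    set k₀ := N / d with hk₀
    have hk₀N : k₀ < N := Nat.div_lt_self hN hd2
    have hk₀1 : 1 ≤ k₀ := Nat.div_pos (Nat.le_of_dvd hN hdN) (by omega)
    apply Finset.prod_eq_zero (mem_range.mpr hk₀N)
    have e1 : N / d * d = N := Nat.div_mul_cancel hdN
    have e2 : m / d * d = m := Nat.div_mul_cancel hdm
    have hdvd : N ∣ k₀ * m := by
      refine ⟨m / d, ?_⟩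
      calc k₀ * m = N / d * (m / d * d) := by rw [e2]
        _ = (N / d * d) * (m / d) := by ring
        _ = N * (m / d) := by rw [e1]
    have h1 : (η ^ k₀) ^ m = 1 := by
      rw [← pow_mul, hη.pow_eq_one_iff_dvd]
      exact hdvd
    rw [geom_sum_eq (hne1 k₀ (mem_Ico.mpr ⟨hk₀1, hk₀N⟩)) m, h1, sub_self, zero_div]



/-- continuant of the tridiagonal matrix with `μ` on the diagonal, `1` off it -/
def pp : ℕ → ℂ → ℂ
  | 0, _ => 1
  | 1, μ => μ
  | (s+2), μ => μ * pp (s+1) μ - pp s μ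

lemma pp_cheb (z : ℂ) (hz : z ≠ 0) (s : ℕ) :
    z ^ s * pp s (z + z⁻¹) = ∑ j ∈ range (s + 1), z ^ (2 * j) := by
  induction s using Nat.twoStepInduction with
  | zero => simp [pp]
  | one =>
    simp [pp, Finset.sum_range_succ]
    field_simp
    ring
  | more s ih1 ih2 =>
    have hexp : z ^ (s + 2) * ((z + z⁻¹) * pp (s + 1) (z + z⁻¹))
        = (z ^ 2 + 1) * (z ^ (s + 1) * pp (s + 1) (z + z⁻¹)) := by
      field_simp
      ring
    calc z ^ (s + 2) * pp (s + 2) (z + z⁻¹)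
        = z ^ (s + 2) * ((z + z⁻¹) * pp (s + 1) (z + z⁻¹)) - z ^ 2 * (z ^ s * pp s (z + z⁻¹)) := by
          rw [show pp (s+2) (z + z⁻¹) = (z + z⁻¹) * pp (s+1) (z + z⁻¹) - pp s (z + z⁻¹) from rfl]
          ring
      _ = (z ^ 2 + 1) * (∑ j ∈ range (s + 2), z ^ (2 * j)) - z ^ 2 * (∑ j ∈ range (s + 1), z ^ (2 * j)) := by
          rw [hexp, ih2, ih1]
      _ = ∑ j ∈ range (s + 3), z ^ (2 * j) := by
          rw [add_mul, one_mul]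
          have h1 : z ^ 2 * (∑ j ∈ range (s + 2), z ^ (2 * j)) = ∑ j ∈ range (s + 2), z ^ (2 * (j + 1)) := by
            rw [Finset.mul_sum]
            refine Finset.sum_congr rfl fun j _ => ?_
            rw [← pow_add]
            ring_nf
          have h2 : z ^ 2 * (∑ j ∈ range (s + 1), z ^ (2 * j)) = ∑ j ∈ range (s + 1), z ^ (2 * (j + 1)) := by
            rw [Finset.mul_sum]
            refine Finset.sum_congr rfl fun j _ => ?_
            rw [← pow_add]
            ring_nf
          rw [h1, h2]
          rw [show ∑ j ∈ range (s + 2), z ^ (2 * (j+1)) = ∑ j ∈ range (s + 1), z ^ (2 * (j+1)) + z ^ (2 * (s + 2)) from Finset.sum_range_succ _ _]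
          rw [Finset.sum_range_succ _ (s + 2)]
          ring




def pathM (s : ℕ) (μ : ℂ) : Matrix (Fin s) (Fin s) ℂ :=
  Matrix.of fun i j =>
    (if (i:ℕ)+1 = (j:ℕ) ∨ (j:ℕ)+1 = (i:ℕ) then 1 else 0) + (if i = j then μ else 0)

lemma det_pathM (μ : ℂ) : ∀ s, (pathM s μ).det = pp s μ := by
  intro s
  induction s using Nat.twoStepInduction with
  | zero => simp [pp, Matrix.det_fin_zero]
  | one => simp [pp, Matrix.det_fin_one, pathM]
  | more s ih1 ih2 =>
    set A := pathM (s+2) μ with hA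
    have sub00 : A.submatrix Fin.succ Fin.succ = pathM (s+1) μ := by
      ext i j
      simp [pathM, Fin.succ_inj, hA]
    have hA00 : A 0 0 = μ := by simp [pathM, hA]
    have hA01 : A 0 (Fin.succ 0) = 1 := by
      simp [pathM, hA]
    have hA0j : ∀ j : Fin s, A 0 (Fin.succ (Fin.succ j)) = 0 := by
      intro j
      simp [pathM, hA, Fin.val_succ, Fin.succ_ne_zero, (Fin.succ_ne_zero _).symm]
    set B := A.submatrix Fin.succ (Fin.succ (0 : Fin (s+1))).succAbove with hB
    have hsa0 : (Fin.succ (0 : Fin (s+1))).succAbove (0 : Fin (s+1)) = 0 := by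
      rw [Fin.succAbove_of_castSucc_lt]
      · simp
      · simp
    have hB00 : B 0 0 = 1 := by
      rw [hB]
      simp only [Matrix.submatrix_apply, hsa0]
      simp [pathM, hA]
    have hBi0 : ∀ i : Fin s, B (Fin.succ i) 0 = 0 := by
      intro i
      rw [hB]
      simp only [Matrix.submatrix_apply, hsa0]
      simp [pathM, hA, Fin.val_succ, Fin.succ_ne_zero]
    have hBsub : B.submatrix Fin.succ Fin.succ = pathM s μ := by
      rw [hB]
      ext i j
      have hcs : (Fin.succ (0 : Fin (s+1))).succAbove (Fin.succ j) = Fin.succ (Fin.succ j) := by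
        rw [Fin.succAbove_of_le_castSucc]
        simp [Fin.le_def]
      simp only [Matrix.submatrix_apply, hcs]
      simp [hA, pathM, Fin.succ_inj]
    rw [Matrix.det_succ_row_zero, Fin.sum_univ_succ, Fin.sum_univ_succ]
    have hzero : ∑ j : Fin s, (-1 : ℂ) ^ ((Fin.succ (Fin.succ j) : Fin (s+2)) : ℕ)
        * A 0 (Fin.succ (Fin.succ j)) * (A.submatrix Fin.succ (Fin.succ (Fin.succ j)).succAbove).det = 0 := by
      apply Finset.sum_eq_zero
      intro j _
      rw [hA0j j]
      ring
    rw [hzero, hA00, hA01]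
    have hdetB : B.det = pp s μ := by
      rw [Matrix.det_succ_column_zero, Fin.sum_univ_succ]
      have hz2 : ∑ i : Fin s, (-1 : ℂ) ^ ((Fin.succ i : Fin (s+1)) : ℕ)
          * B (Fin.succ i) 0 * (B.submatrix (Fin.succ i).succAbove Fin.succ).det = 0 := by
        apply Finset.sum_eq_zero
        intro i _
        rw [hBi0 i]
        ring
      rw [hz2, hB00]
      simp only [Fin.val_zero, pow_zero, one_mul, mul_one, Fin.succAbove_zero, add_zero]
      rw [hBsub, ih1]
    rw [Fin.succAbove_zero, sub00, hdetB, ih2]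
    simp [pp]
    ring




def Tmat (s : ℕ) : Matrix (Fin s) (Fin s) ℂ :=
  Matrix.of fun i j => if (i:ℕ)+1 = (j:ℕ) ∨ (j:ℕ)+1 = (i:ℕ) then 1 else 0

def Cmat (n : ℕ) : Matrix (Fin n) (Fin n) ℂ :=
  Matrix.of fun i j => if (i - j : Fin n).val = 1 ∨ (j - i : Fin n).val = 1 then 1 else 0

def Fmat (n : ℕ) (ω : ℂ) : Matrix (Fin n) (Fin n) ℂ :=
  Matrix.of fun i j => ω ^ ((i:ℕ) * (j:ℕ))

open scoped Classical in
lemma adjM_eq (m' n : ℕ) :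
    ((((pathGraph m').boxProd (cycleGraph n)).adjMatrix ℤ).map (Int.cast : ℤ → ℂ))
      = Tmat m' ⊗ₖ (1 : Matrix (Fin n) (Fin n) ℂ)
        + (1 : Matrix (Fin m') (Fin m') ℂ) ⊗ₖ Cmat n := by
  ext ⟨a, b⟩ ⟨c, d⟩
  have hpath : (pathGraph m').Adj a c ↔ ((a:ℕ)+1 = (c:ℕ) ∨ (c:ℕ)+1 = (a:ℕ)) := pathGraph_adj
  have hcyc : (cycleGraph n).Adj b d ↔ ((b - d : Fin n).val = 1 ∨ (d - b : Fin n).val = 1) :=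
    cycleGraph_adj'
  have h13 : ((a:ℕ)+1 = (c:ℕ) ∨ (c:ℕ)+1 = (a:ℕ)) → ¬ (a = c) := by
    intro h he; subst he; omega
  have h24 : ((b - d : Fin n).val = 1 ∨ (d - b : Fin n).val = 1) → ¬ (b = d) := by
    intro h he; subst he
    haveI : NeZero n := ⟨fun h0 => (h0 ▸ b).elim0⟩
    rw [sub_self] at h
    simp [Fin.val_zero] at h
  simp only [Matrix.map_apply, SimpleGraph.adjMatrix_apply, Matrix.add_apply,
    Matrix.kroneckerMap_apply, Matrix.one_apply, Tmat, Cmat, Matrix.of_apply,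
    SimpleGraph.boxProd_adj, hpath, hcyc]
  by_cases h1 : (a:ℕ)+1 = (c:ℕ) ∨ (c:ℕ)+1 = (a:ℕ) <;>
    by_cases h2 : b = d <;>
    by_cases h3 : a = c <;>
    by_cases h4 : (b - d : Fin n).val = 1 ∨ (d - b : Fin n).val = 1 <;>
    simp_all


lemma pathM_eq (s : ℕ) (μ : ℂ) :
    Tmat s + μ • (1 : Matrix (Fin s) (Fin s) ℂ) = pathM s μ := by
  ext i j
  by_cases h : i = j <;>
    simp [Tmat, pathM, Matrix.one_apply, h, smul_eq_mul]

lemma CF_eq {n : ℕ} (hn : 3 ≤ n) {ω : ℂ} (hω : IsPrimitiveRoot ω n) :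
    Cmat n * Fmat n ω =
      Fmat n ω * Matrix.diagonal (fun k : Fin n => ω ^ (k:ℕ) + (ω ^ (k:ℕ))⁻¹) := by
  haveI : NeZero n := ⟨by omega⟩
  have hω1 : ω ^ n = 1 := hω.pow_eq_one
  have hω0 : ω ≠ 0 := fun h => by
    rw [h, zero_pow (by omega : n ≠ 0)] at hω1
    exact zero_ne_one hω1
  have hval1 : ((1 : Fin n)).val = 1 := by
    rw [Fin.val_one']
    exact Nat.mod_eq_of_lt (by omega)
  have key : ∀ (i l : Fin n), Fmat n ω (i+1) l = Fmat n ω i l * ω ^ (l:ℕ) := by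
    intro i l
    have hval : ((i+1 : Fin n)).val = ((i:ℕ)+1) % n := by
      rw [Fin.val_add, hval1]
    have h2 : ω ^ (((((i:ℕ)+1)) % n) * (l:ℕ)) = ω ^ (((i:ℕ)+1) * (l:ℕ)) := by
      rw [← pow_mod_eq hω1 (((((i:ℕ)+1)) % n) * (l:ℕ)), ← pow_mod_eq hω1 (((i:ℕ)+1) * (l:ℕ))]
      congr 1
      exact Nat.ModEq.mul_right _ (Nat.mod_modEq _ n)
    calc Fmat n ω (i+1) l = ω ^ ((((i:ℕ)+1) % n) * (l:ℕ)) := by rw [Fmat, Matrix.of_apply, hval]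
      _ = ω ^ (((i:ℕ)+1) * (l:ℕ)) := h2
      _ = ω ^ ((i:ℕ)*(l:ℕ) + (l:ℕ)) := by ring_nf
      _ = Fmat n ω i l * ω ^ (l:ℕ) := by rw [pow_add]; rfl
  have hsub : ∀ i : Fin n, i - 1 + 1 = i := fun i => sub_add_cancel i 1
  ext i l
  have hentry : ∀ j : Fin n, Cmat n i j
      = (if j = i - 1 then 1 else 0) + (if j = i + 1 then 1 else 0) := by
    intro j
    have e1 : (i - j : Fin n).val = 1 ↔ j = i - 1 := by
      rw [show ((i - j : Fin n).val = 1 ↔ i - j = 1) from by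
        rw [Fin.ext_iff, hval1]]
      constructor
      · intro h; rw [← h, sub_sub_cancel]
      · intro h; rw [h, sub_sub_cancel]
    have e2 : (j - i : Fin n).val = 1 ↔ j = i + 1 := by
      rw [show ((j - i : Fin n).val = 1 ↔ j - i = 1) from by
        rw [Fin.ext_iff, hval1]]
      rw [sub_eq_iff_eq_add, add_comm]
    have hexcl : ¬(i - 1 = i + 1) := by
      intro h
      have h2 : i - 1 + 1 = i + 1 + 1 := by rw [h]
      rw [hsub] at h2
      have h3 : (1 + 1 : Fin n) = 0 := by
        have := congrArg (fun x => x - i) h2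
        simpa [add_assoc, add_sub_cancel_left, sub_self] using this.symm
      have h4 : ((1 + 1 : Fin n)).val = 2 := by
        rw [Fin.val_add, hval1]
        exact Nat.mod_eq_of_lt (by omega)
      rw [h3] at h4
      simp at h4
    rw [Cmat, Matrix.of_apply]
    by_cases c1 : j = i - 1 <;> by_cases c2 : j = i + 1 <;> simp_all [e1, e2]
  have lhs_eq : (Cmat n * Fmat n ω) i l = Fmat n ω (i-1) l + Fmat n ω (i+1) l := by
    rw [Matrix.mul_apply]
    calc ∑ j, Cmat n i j * Fmat n ω j l
        = ∑ j, ((if j = i - 1 then Fmat n ω j l else 0)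
            + (if j = i + 1 then Fmat n ω j l else 0)) := by
          refine Finset.sum_congr rfl fun j _ => ?_
          rw [hentry j, add_mul, ite_mul, ite_mul, one_mul, zero_mul]
      _ = Fmat n ω (i-1) l + Fmat n ω (i+1) l := by
          rw [Finset.sum_add_distrib, Finset.sum_ite_eq' Finset.univ (i-1),
            Finset.sum_ite_eq' Finset.univ (i+1)]
          simp
  rw [lhs_eq, Matrix.mul_diagonal]
  have k1 : Fmat n ω (i-1) l * ω ^ (l:ℕ) = Fmat n ω i l := by
    rw [← key (i-1) l, hsub]
  have hωl : (ω:ℂ) ^ (l:ℕ) ≠ 0 := pow_ne_zero _ hω0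
  field_simp
  rw [key i l]
  rw [← k1]
  ring

lemma detF_ne {n : ℕ} {ω : ℂ} (hω : IsPrimitiveRoot ω n) : (Fmat n ω).det ≠ 0 := by
  have hF : Fmat n ω = Matrix.vandermonde (fun i : Fin n => ω ^ (i:ℕ)) := by
    ext i j
    simp [Fmat, Matrix.vandermonde, pow_mul]
  rw [hF, Matrix.det_vandermonde]
  apply Finset.prod_ne_zero_iff.mpr
  intro i _
  apply Finset.prod_ne_zero_iff.mpr
  intro j hj
  have hij : i < j := Finset.mem_Ioi.mp hj
  refine sub_ne_zero_of_ne fun h => ?_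
  have := hω.pow_inj j.isLt i.isLt h
  rw [Fin.lt_iff_val_lt_val] at hij
  omega

lemma conj_eq {m' n : ℕ} {F D : Matrix (Fin n) (Fin n) ℂ} (hC : Cmat n * F = F * D) :
    (Tmat m' ⊗ₖ 1 + (1 : Matrix (Fin m') (Fin m') ℂ) ⊗ₖ Cmat n) * (1 ⊗ₖ F)
      = (1 ⊗ₖ F) * (Tmat m' ⊗ₖ 1 + 1 ⊗ₖ D) := by
  simp only [add_mul, mul_add, ← Matrix.mul_kronecker_mul, Matrix.one_mul, Matrix.mul_one, hC]

lemma blockdiag_eq {m' n : ℕ} (μ : Fin n → ℂ) :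
    Tmat m' ⊗ₖ (1 : Matrix (Fin n) (Fin n) ℂ)
      + (1 : Matrix (Fin m') (Fin m') ℂ) ⊗ₖ Matrix.diagonal μ
      = Matrix.blockDiagonal (fun k => pathM m' (μ k)) := by
  ext ⟨j, k⟩ ⟨j', k'⟩
  by_cases h1 : k = k' <;> by_cases h2 : j = j' <;>
    simp [Matrix.one_apply, Matrix.diagonal_apply, Matrix.blockDiagonal_apply, h1, h2, Tmat, pathM]


lemma prod_range_split {n : ℕ} (hn : 0 < n) (f : ℕ → ℂ) :
    ∏ k ∈ range n, f k = f 0 * ∏ k ∈ Ico 1 n, f k := by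
  rw [range_eq_Ico, ← Finset.prod_Ico_consecutive f (Nat.zero_le 1) hn]
  congr 1
  simp

lemma omega_sum_pow {n : ℕ} (hn : 3 ≤ n) {ω : ℂ} (hω : IsPrimitiveRoot ω n) :
    ω ^ (∑ k ∈ range n, k) = if Odd n then 1 else -1 := by
  have hω1 : ω ^ n = 1 := hω.pow_eq_one
  have hmul : (∑ i ∈ range n, i) * 2 = n * (n - 1) := Finset.sum_range_id_mul_two n
  split_ifs with hodd
  · obtain ⟨t, ht⟩ : ∃ t, n - 1 = 2 * t := by
      rcases hodd with ⟨s, hs⟩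
      exact ⟨s, by omega⟩
    have h2 : (∑ i ∈ range n, i) * 2 = (n * t) * 2 := by
      rw [hmul, ht]; ring
    have h3 : (∑ i ∈ range n, i) = n * t := Nat.eq_of_mul_eq_mul_right (by norm_num) h2
    rw [h3, pow_mul, hω1, one_pow]
  · obtain ⟨s, hs⟩ : ∃ s, n = 2 * s := by
      rcases Nat.not_odd_iff_even.mp hodd with ⟨s, hs⟩
      exact ⟨s, by omega⟩
    have h2 : (∑ i ∈ range n, i) * 2 = (s * (n - 1)) * 2 := by
      rw [hmul, hs]; ring
    have h3 : (∑ i ∈ range n, i) = s * (n - 1) := Nat.eq_of_mul_eq_mul_right (by norm_num) h2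
    have hpow_s : ω ^ s = -1 := by
      have hsq : ω ^ s * ω ^ s = 1 := by
        rw [← pow_add, show s + s = n by omega, hω1]
      rcases mul_self_eq_one_iff.mp hsq with h | h
      · exfalso
        have := (hω.pow_eq_one_iff_dvd s).mp h
        have := Nat.le_of_dvd (by omega) this
        omega
      · exact h
    have hodd' : Odd (n - 1) := ⟨s - 1, by omega⟩
    rw [h3, pow_mul, hpow_s, hodd'.neg_one_pow]

lemma prod_shift_odd {n : ℕ} (hn : 3 ≤ n) (hodd : Odd n) {ω : ℂ} (hω : IsPrimitiveRoot ω n)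
    (m : ℕ) :
    ∏ k ∈ range n, (∑ j ∈ range m, (ω ^ (2 * k)) ^ j)
      = ∏ k ∈ range n, (∑ j ∈ range m, (ω ^ k) ^ j) := by
  have hω1 : ω ^ n = 1 := hω.pow_eq_one
  have hn0 : 0 < n := by omega
  have hcop : Nat.Coprime 2 n := Nat.coprime_two_left.mpr hodd
  have hrw : ∀ k ∈ Ico 1 n, (∑ j ∈ range m, (ω ^ (2 * k)) ^ j)
      = (fun t => ∑ j ∈ range m, (ω ^ t) ^ j) (2 * k % n) := by
    intro k _
    simp only
    rw [pow_mod_eq hω1]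
  rw [prod_range_split hn0, prod_range_split hn0 (fun k => ∑ j ∈ range m, (ω ^ k) ^ j)]
  have hIco : ∏ k ∈ Ico 1 n, (∑ j ∈ range m, (ω ^ (2 * k)) ^ j)
      = ∏ k ∈ Ico 1 n, (∑ j ∈ range m, (ω ^ k) ^ j) := by
    rw [Finset.prod_congr rfl hrw]
    simpa using prod_Ico_reindex hn0 hcop (fun t => ∑ j ∈ range m, (ω ^ t) ^ j)
  rw [hIco]

lemma prod_shift_even {n N : ℕ} (hN : n = 2 * N) {ω : ℂ} (hω1 : ω ^ n = 1) (m : ℕ) :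
    ∏ k ∈ range n, (∑ j ∈ range m, (ω ^ (2 * k)) ^ j)
      = (∏ k ∈ range N, (∑ j ∈ range m, ((ω ^ 2) ^ k) ^ j)) ^ 2 := by
  subst hN
  rw [show 2 * N = N + N by ring, Finset.prod_range_add]
  have h1 : ∀ k, (ω : ℂ) ^ (2 * k) = (ω ^ 2) ^ k := fun k => pow_mul ω 2 k
  have h2 : ∀ k, (ω : ℂ) ^ (2 * (N + k)) = (ω ^ 2) ^ k := by
    intro k
    have : 2 * (N + k) = 2 * N + 2 * k := by ring
    rw [this, pow_add, hω1, one_mul, h1]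
  rw [sq]
  congr 1
  · exact Finset.prod_congr rfl fun k _ => by rw [h1]
  · exact Finset.prod_congr rfl fun k _ => by rw [h2]

end DetCyl

open DetCyl Finset Matrix Kronecker in
open scoped Classical in
theorem det_adjMatrix_cylinder (m n : ℕ) (hm : 1 < m) (hn : 3 ≤ n) :
    (((pathGraph (m - 1)).boxProd (cycleGraph n)).adjMatrix ℤ).det =
      if Odd n ∧ Nat.gcd m n = 1 then (m : ℤ)
      else if Even n ∧ Nat.gcd m (n / 2) = 1 then (-1 : ℤ) ^ (m - 1) * (m : ℤ) ^ 2
      else 0 := by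
  haveI : NeZero n := ⟨by omega⟩
  set m' := m - 1 with hm'def
  have hm'1 : m' + 1 = m := by omega
  set ω : ℂ := Complex.exp (2 * Real.pi * Complex.I / n) with hωdef
  have hω : IsPrimitiveRoot ω n := Complex.isPrimitiveRoot_exp n (by omega)
  have hω1 : ω ^ n = 1 := hω.pow_eq_one
  have hω0 : ω ≠ 0 := fun h => by
    rw [h, zero_pow (by omega : n ≠ 0)] at hω1
    exact zero_ne_one hω1
  set μ : Fin n → ℂ := fun k => ω ^ (k : ℕ) + (ω ^ (k : ℕ))⁻¹ with hμ
  set M := ((pathGraph m').boxProd (cycleGraph n)).adjMatrix ℤ with hM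
  -- determinant over ℂ
  have hdetC : ((M.det : ℤ) : ℂ) = (Tmat m' ⊗ₖ 1 + 1 ⊗ₖ Cmat n).det := by
    have h0 := RingHom.map_det (Int.castRingHom ℂ) M
    simp only [RingHom.mapMatrix_apply, Int.coe_castRingHom] at h0
    exact h0.trans (by rw [hM, adjM_eq m' n])
  -- conjugate by 1 ⊗ F
  have hGdet : ((1 : Matrix (Fin m') (Fin m') ℂ) ⊗ₖ Fmat n ω).det ≠ 0 := by
    rw [Matrix.det_kronecker, Matrix.det_one, one_pow, one_mul]
    exact pow_ne_zero _ (detF_ne hω)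
  have hconj := conj_eq (m' := m') (CF_eq hn hω)
  have hdet2 : (Tmat m' ⊗ₖ 1 + 1 ⊗ₖ Cmat n).det
      = (Tmat m' ⊗ₖ 1 + (1 : Matrix (Fin m') (Fin m') ℂ) ⊗ₖ Matrix.diagonal μ).det := by
    have h1 := congrArg Matrix.det hconj
    rw [Matrix.det_mul, Matrix.det_mul, mul_comm (((1 : Matrix (Fin m') (Fin m') ℂ) ⊗ₖ Fmat n ω).det)] at h1
    exact mul_right_cancel₀ hGdet h1
  rw [blockdiag_eq μ, Matrix.det_blockDiagonal] at hdet2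
  have hdet3 : (Tmat m' ⊗ₖ 1 + 1 ⊗ₖ Cmat n).det = ∏ k : Fin n, pp m' (μ k) := by
    rw [hdet2]
    exact Finset.prod_congr rfl fun k _ => det_pathM (μ k) m'
  -- each factor via Chebyshev
  have hfac : ∀ k : Fin n, (ω ^ (k : ℕ)) ^ m' * pp m' (μ k)
      = ∑ j ∈ range m, (ω ^ (2 * (k : ℕ))) ^ j := by
    intro k
    have h1 := pp_cheb (ω ^ (k : ℕ)) (pow_ne_zero _ hω0) m'
    rw [hm'1] at h1
    rw [hμ]
    simp only
    rw [h1]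
    refine Finset.sum_congr rfl fun j _ => ?_
    rw [← pow_mul, ← pow_mul]
    congr 1
    ring
  have hprodfac : (∏ k : Fin n, (ω ^ (k : ℕ)) ^ m') * ∏ k : Fin n, pp m' (μ k)
      = ∏ k ∈ range n, (∑ j ∈ range m, (ω ^ (2 * k)) ^ j) := by
    rw [← Finset.prod_mul_distrib, Finset.prod_congr rfl fun k _ => hfac k]
    exact Fin.prod_univ_eq_prod_range (fun k => ∑ j ∈ range m, (ω ^ (2 * k)) ^ j) n
  set E : ℂ := if Odd n then 1 else -1 with hE
  have heps : ∏ k : Fin n, (ω ^ (k : ℕ)) ^ m' = E ^ m' := by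
    have h1 : ∏ k : Fin n, (ω ^ (k : ℕ)) ^ m' = (∏ k : Fin n, ω ^ (k : ℕ)) ^ m' := by
      rw [Finset.prod_pow]
    have h2 : ∏ k : Fin n, ω ^ (k : ℕ) = ω ^ (∑ k ∈ range n, k) := by
      rw [Finset.prod_pow_eq_pow_sum]
      congr 1
      exact Fin.sum_univ_eq_sum_range (fun k => k) n
    rw [h1, h2, omega_sum_pow hn hω]
  have hEE : E * E = 1 := by
    rw [hE]; split_ifs <;> norm_num
  have hdet4 : (Tmat m' ⊗ₖ 1 + 1 ⊗ₖ Cmat n).det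
      = E ^ m' * ∏ k ∈ range n, (∑ j ∈ range m, (ω ^ (2 * k)) ^ j) := by
    have hEpow : E ^ m' * E ^ m' = 1 := by
      rw [← mul_pow, hEE, one_pow]
    calc (Tmat m' ⊗ₖ 1 + 1 ⊗ₖ Cmat n).det
        = (E ^ m' * E ^ m') * ∏ k : Fin n, pp m' (μ k) := by rw [hEpow, one_mul, hdet3]
      _ = E ^ m' * ((∏ k : Fin n, (ω ^ (k : ℕ)) ^ m') * ∏ k : Fin n, pp m' (μ k)) := by
          rw [heps]; ring
      _ = E ^ m' * ∏ k ∈ range n, (∑ j ∈ range m, (ω ^ (2 * k)) ^ j) := by rw [hprodfac]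
  -- now split on parity
  apply Int.cast_injective (α := ℂ)
  rw [hdetC, hdet4]
  rcases Nat.even_or_odd n with heven | hodd
  · -- even case
    have hoddn : ¬ Odd n := Nat.not_odd_iff_even.mpr heven
    set N := n / 2 with hNdef
    obtain ⟨r, hr⟩ := id heven
    have hn2 : n = 2 * N := by omega
    have hN0 : 0 < N := by omega
    have hη : IsPrimitiveRoot (ω ^ 2) N := hω.pow (by omega) hn2
    rw [prod_shift_even hn2 hω1 m, prod_gg hN0 hη m (by omega)]
    rw [hE, if_neg hoddn]
    rw [if_neg (show ¬(Odd n ∧ Nat.gcd m n = 1) from fun h => hoddn h.1)]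
    by_cases hgcd : Nat.gcd m N = 1
    · rw [if_pos hgcd, if_pos (show Even n ∧ Nat.gcd m N = 1 from ⟨heven, hgcd⟩)]
      push_cast
      ring
    · rw [if_neg hgcd, if_neg (show ¬(Even n ∧ Nat.gcd m N = 1) from fun h => hgcd h.2)]
      norm_num
  · -- odd case
    have hevn : ¬ Even n := Nat.not_even_iff_odd.mpr hodd
    rw [prod_shift_odd hn hodd hω m, prod_gg (by omega : 0 < n) hω m (by omega)]
    rw [hE, if_pos hodd, one_pow, one_mul]
    by_cases hgcd : Nat.gcd m n = 1
    · rw [if_pos hgcd, if_pos (show Odd n ∧ Nat.gcd m n = 1 from ⟨hodd, hgcd⟩)]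
      norm_num
    · rw [if_neg hgcd, if_neg (show ¬(Odd n ∧ Nat.gcd m n = 1) from fun h => hgcd h.2),
        if_neg (show ¬(Even n ∧ Nat.gcd m (n / 2) = 1) from fun h => hevn h.1)]
      norm_num
end

section
/- Let n > 1 be an integer. Then the determinant of the adjacency matrix of the Möbius ladder M_{2n} equals -3 if n ≡ 2 or n ≡ -2 (mod 6); equals -9 if n ≡ 1 or n ≡ -1 (mod 6); and equals 0 if n ≡ 0 or n ≡ 3 (mod 6). -/
open SimpleGraph

/-- The Möbius ladder on `2 * n` vertices: vertices `i` and `j` in `ZMod (2 * n)` are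
adjacent if and only if `i - j ≡ 1, -1` or `n (mod 2 * n)`. -/
def mobiusLadder (n : ℕ) : SimpleGraph (ZMod (2 * n)) :=
  SimpleGraph.fromRel (fun i j => i - j = 1 ∨ i - j = (n : ZMod (2 * n)))

namespace MobiusDetAux

lemma prod_range_even_odd (f : ℕ → ℂ) (n : ℕ) :
    ∏ k ∈ Finset.range (2 * n), f k =
      (∏ m ∈ Finset.range n, f (2 * m)) * ∏ m ∈ Finset.range n, f (2 * m + 1) := by
  induction n with
  | zero => simp
  | succ n ih =>
      rw [show 2 * (n+1) = (2*n+1)+1 by ring, Finset.prod_range_succ, Finset.prod_range_succ,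
        ih, Finset.prod_range_succ, Finset.prod_range_succ]
      ring

lemma prod_sub_pow {n : ℕ} (hn : 0 < n) {ξ : ℂ} (hξ : IsPrimitiveRoot ξ n) (c : ℂ) :
    ∏ m ∈ Finset.range n, (c - ξ ^ m) = c ^ n - 1 := by
  have himg : (Finset.range n).image (ξ ^ ·) = Polynomial.nthRootsFinset n (1 : ℂ) := by
    apply Finset.eq_of_subset_of_card_le
    · intro x hx
      simp only [Finset.mem_image] at hx
      obtain ⟨m, -, rfl⟩ := hx
      rw [Polynomial.mem_nthRootsFinset hn, ← pow_mul, mul_comm, pow_mul, hξ.pow_eq_one, one_pow]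
    · rw [hξ.card_nthRootsFinset, Finset.card_image_of_injOn hξ.injOn_pow, Finset.card_range]
  have hpoly := Polynomial.X_pow_sub_one_eq_prod hn hξ
  rw [← himg, Finset.prod_image hξ.injOn_pow] at hpoly
  have := congrArg (Polynomial.eval c) hpoly
  simpa [Polynomial.eval_prod] using this.symm

lemma mobius_adj {n : ℕ} (hn : 1 < n) (k i : ZMod (2 * n)) :
    (mobiusLadder n).Adj k i ↔ (i = k + 1 ∨ i = k - 1 ∨ i = k + (n : ZMod (2 * n))) := by
  haveI : NeZero (2 * n) := ⟨by omega⟩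
  have h1 : (1 : ZMod (2 * n)) ≠ 0 := by
    intro h
    have h' : ((1 : ℕ) : ZMod (2 * n)) = 0 := by exact_mod_cast h
    rw [ZMod.natCast_eq_zero_iff] at h'
    have := Nat.le_of_dvd one_pos h'
    omega
  have hn0 : ((n : ℕ) : ZMod (2 * n)) ≠ 0 := by
    intro h
    rw [ZMod.natCast_eq_zero_iff] at h
    have := Nat.le_of_dvd (by omega) h
    omega
  have hnn : ((n : ℕ) : ZMod (2 * n)) = -((n : ℕ) : ZMod (2 * n)) := by
    have h2n : ((2 * n : ℕ) : ZMod (2 * n)) = 0 := ZMod.natCast_self _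
    push_cast at h2n
    linear_combination h2n
  simp only [mobiusLadder, SimpleGraph.fromRel_adj]
  constructor
  · rintro ⟨hne, (h | h) | (h | h)⟩
    · exact Or.inr (Or.inl (by linear_combination -h))
    · exact Or.inr (Or.inr (by linear_combination -h - hnn))
    · exact Or.inl (by linear_combination h)
    · exact Or.inr (Or.inr (by linear_combination h))
  · rintro (h | h | h)
    · exact ⟨fun he => h1 (by linear_combination -h - he), Or.inr (Or.inl (by linear_combination h))⟩
    · exact ⟨fun he => h1 (by linear_combination h + he), Or.inl (Or.inl (by linear_combination -h))⟩
    · exact ⟨fun he => hn0 (by linear_combination -h - he), Or.inl (Or.inr (by linear_combination -h - hnn))⟩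

end MobiusDetAux

open MobiusDetAux in
open scoped Classical in
theorem det_adjMatrix_mobiusLadder (n : ℕ) (hn : 1 < n) :
    haveI : NeZero (2 * n) := ⟨by omega⟩
    ((mobiusLadder n).adjMatrix ℤ).det =
      if n % 6 = 2 ∨ n % 6 = 4 then -3
      else if n % 6 = 1 ∨ n % 6 = 5 then -9
      else 0 := by
  haveI : NeZero (2 * n) := ⟨by omega⟩
  set N := 2 * n with hN
  have hNpos : 0 < N := by omega
  -- the primitive 2n-th root of unity
  set ψ : ℂ := Complex.exp (2 * Real.pi * Complex.I / N) with hψdef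
  have hψ : IsPrimitiveRoot ψ N := Complex.isPrimitiveRoot_exp N (by omega)
  have hψN : ψ ^ N = 1 := hψ.pow_eq_one
  have hψ0 : ψ ≠ 0 := hψ.ne_zero (by omega)
  have hper : ∀ m : ℕ, ψ ^ (m % N) = ψ ^ m := by
    intro m
    conv_rhs => rw [← Nat.div_add_mod m N, pow_add, pow_mul, hψN, one_pow]
    exact (one_mul _).symm
  have hval : ∀ m : ℕ, ψ ^ ((m : ZMod N)).val = ψ ^ m := by
    intro m; rw [ZMod.val_natCast, hper]
  have hkey : ∀ a b : ZMod N, ψ ^ (a + b).val = ψ ^ a.val * ψ ^ b.val := by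
    intro a b
    have h : ((a.val + b.val : ℕ) : ZMod N) = a + b := by
      push_cast
      rw [ZMod.natCast_zmod_val, ZMod.natCast_zmod_val]
    rw [← h, hval, pow_add, ← hval a.val, ← hval b.val,
      ZMod.natCast_zmod_val, ZMod.natCast_zmod_val]
  have hinv : ∀ a : ZMod N, ψ ^ (-a).val = (ψ ^ a.val)⁻¹ := by
    intro a
    have h := hkey (-a) a
    rw [neg_add_cancel] at h
    simp only [ZMod.val_zero, pow_zero] at h
    exact eq_inv_of_mul_eq_one_left h.symm
  -- matrices
  set A : Matrix (ZMod N) (ZMod N) ℂ :=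
    ((mobiusLadder n).adjMatrix ℤ).map (Int.castRingHom ℂ) with hAdef
  set F : Matrix (ZMod N) (ZMod N) ℂ := fun i j => ψ ^ (i * j).val with hFdef
  -- entry description of A
  have h2 : (2 : ZMod N) ≠ 0 := by
    have h : ((2 : ℕ) : ZMod N) ≠ 0 := by
      rw [Ne, ZMod.natCast_eq_zero_iff]
      intro h; have := Nat.le_of_dvd (by omega) h; omega
    exact_mod_cast h
  have hn1 : ((n - 1 : ℕ) : ZMod N) ≠ 0 := by
    rw [Ne, ZMod.natCast_eq_zero_iff]
    intro h; have := Nat.le_of_dvd (by omega) h; omega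
  have hn1' : ((n + 1 : ℕ) : ZMod N) ≠ 0 := by
    rw [Ne, ZMod.natCast_eq_zero_iff]
    intro h; have := Nat.le_of_dvd (by omega) h; omega
  have hne1n : (1 : ZMod N) ≠ (n : ZMod N) := by
    intro h
    apply hn1
    rw [Nat.cast_sub (by omega : 1 ≤ n)]
    push_cast
    linear_combination -h
  have hd12 : ∀ k : ZMod N, k + 1 ≠ k - 1 := by
    intro k h; exact h2 (by linear_combination h)
  have hd13 : ∀ k : ZMod N, k + 1 ≠ k + (n : ZMod N) := by
    intro k h
    apply hn1
    rw [Nat.cast_sub (by omega : 1 ≤ n)]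
    push_cast
    linear_combination -h
  have hd23 : ∀ k : ZMod N, k - 1 ≠ k + (n : ZMod N) := by
    intro k h
    apply hn1'
    push_cast
    linear_combination -h
  have hA : ∀ k i : ZMod N, A k i =
      (if i = k + 1 then 1 else 0) + (if i = k - 1 then 1 else 0) +
        (if i = k + (n : ZMod N) then 1 else 0) := by
    intro k i
    rw [hAdef]
    rw [Matrix.map_apply, SimpleGraph.adjMatrix_apply]
    rw [apply_ite (Int.castRingHom ℂ), map_one, map_zero]
    rw [if_congr (mobius_adj hn k i) rfl rfl]
    by_cases e1 : i = k + 1 <;> by_cases e2 : i = k - 1 <;>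
      by_cases e3 : i = k + (n : ZMod N) <;>
      first
        | (exact absurd (e1 ▸ e2 ▸ rfl : k + 1 = k - 1) (hd12 k))
        | (exact absurd (e1 ▸ e3 ▸ rfl : k + 1 = k + (n : ZMod N)) (hd13 k))
        | (exact absurd (e2 ▸ e3 ▸ rfl : k - 1 = k + (n : ZMod N)) (hd23 k))
        | simp [e1, e2, e3, hd12 k, hd13 k, hd23 k, (hd12 k).symm, (hd13 k).symm,
            (hd23 k).symm, hne1n, hne1n.symm]
  -- the eigenvalues
  set lam : ZMod N → ℂ := fun j =>
    ψ ^ ((1 : ZMod N) * j).val + ψ ^ ((-1 : ZMod N) * j).val + ψ ^ ((n : ZMod N) * j).val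
    with hlamdef
  have hAF : A * F = F * Matrix.diagonal lam := by
    ext k j
    rw [Matrix.mul_apply, Matrix.mul_diagonal]
    simp only [hA, add_mul, ite_mul, one_mul, zero_mul]
    rw [Finset.sum_add_distrib, Finset.sum_add_distrib, Finset.sum_ite_eq',
      Finset.sum_ite_eq', Finset.sum_ite_eq']
    simp only [Finset.mem_univ, if_true]
    simp only [hFdef, hlamdef]
    have hsh : ∀ c : ZMod N, ψ ^ ((k + c) * j).val = ψ ^ (k * j).val * ψ ^ (c * j).val := by
      intro c; rw [add_mul]; exact hkey _ _
    rw [show k - 1 = k + (-1 : ZMod N) by ring, hsh 1, hsh (-1), hsh (n : ZMod N)]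
    ring
  -- F is invertible: orthogonality
  have hco : ∀ f : ZMod N → ℂ, ∑ x : ZMod N, f x = ∑ m ∈ Finset.range N, f (m : ZMod N) := by
    intro f
    apply Finset.sum_nbij' (fun (x : ZMod N) => x.val) (fun (m : ℕ) => (m : ZMod N))
    · intro a _; exact Finset.mem_range.mpr (ZMod.val_lt a)
    · intro a _; exact Finset.mem_univ _
    · intro a _; exact ZMod.natCast_zmod_val a
    · intro a ha; exact ZMod.val_cast_of_lt (Finset.mem_range.mp ha)
    · intro a _; rw [ZMod.natCast_zmod_val]
  have hcoP : ∀ f : ZMod N → ℂ, ∏ x : ZMod N, f x = ∏ m ∈ Finset.range N, f (m : ZMod N) := by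
    intro f
    apply Finset.prod_nbij' (fun (x : ZMod N) => x.val) (fun (m : ℕ) => (m : ZMod N))
    · intro a _; exact Finset.mem_range.mpr (ZMod.val_lt a)
    · intro a _; exact Finset.mem_univ _
    · intro a _; exact ZMod.natCast_zmod_val a
    · intro a ha; exact ZMod.val_cast_of_lt (Finset.mem_range.mp ha)
    · intro a _; rw [ZMod.natCast_zmod_val]
  have hsum0 : ∀ d : ZMod N, d ≠ 0 → ∑ k : ZMod N, ψ ^ (k * d).val = 0 := by
    intro d hd
    have hterm : ∀ m : ℕ, ψ ^ (((m : ZMod N)) * d).val = (ψ ^ d.val) ^ m := by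
      intro m
      have h : ((m : ZMod N)) * d = ((m * d.val : ℕ) : ZMod N) := by
        push_cast
        rw [ZMod.natCast_zmod_val]
      rw [h, hval, mul_comm m d.val, pow_mul]
    rw [hco, Finset.sum_congr rfl fun m _ => hterm m]
    have hdv : 0 < d.val := by
      rcases Nat.eq_zero_or_pos d.val with h | h
      · exact absurd (by rw [← ZMod.natCast_zmod_val d, h, Nat.cast_zero]) hd
      · exact h
    have hz1 : ψ ^ d.val ≠ 1 := hψ.pow_ne_one_of_pos_of_lt hdv.ne' (ZMod.val_lt d)
    rw [geom_sum_eq hz1]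
    rw [← pow_mul, mul_comm d.val N, pow_mul, hψN, one_pow]
    simp
  have hFG : F * (Matrix.of fun i j => ψ ^ (-(i * j)).val : Matrix (ZMod N) (ZMod N) ℂ) =
      (N : ℂ) • 1 := by
    ext i j
    rw [Matrix.mul_apply]
    simp only [Matrix.of_apply]
    have hterm : ∀ k : ZMod N, F i k * ψ ^ (-(k * j)).val = ψ ^ (k * (i - j)).val := by
      intro k
      simp only [hFdef]
      rw [← hkey]
      congr 1
      ring
    rw [Finset.sum_congr rfl fun k _ => hterm k]
    by_cases hij : i = j
    · subst hij
      simp only [sub_self, mul_zero, ZMod.val_zero, pow_zero, Finset.sum_const,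
        Finset.card_univ, ZMod.card, nsmul_eq_mul, mul_one, Matrix.smul_apply,
        Matrix.one_apply_eq, smul_eq_mul]
    · rw [hsum0 (i - j) (sub_ne_zero.mpr hij)]
      simp [Matrix.one_apply_ne hij]
  have hdetF : F.det ≠ 0 := by
    intro h0
    have h := congrArg Matrix.det hFG
    rw [Matrix.det_mul, h0, zero_mul, Matrix.det_smul, Matrix.det_one, mul_one] at h
    have hNne : (N : ℂ) ≠ 0 := Nat.cast_ne_zero.mpr (by omega)
    exact pow_ne_zero _ hNne h.symm
  have hdetA : A.det = ∏ j : ZMod N, lam j := by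
    have h := congrArg Matrix.det hAF
    rw [Matrix.det_mul, Matrix.det_mul, Matrix.det_diagonal] at h
    apply mul_right_cancel₀ hdetF
    rw [h]; ring
  -- evaluate the product of eigenvalues
  have hlamk : ∀ k : ℕ, lam (k : ZMod N) = ψ ^ k + (ψ ^ k)⁻¹ + ψ ^ (n * k) := by
    intro k
    simp only [hlamdef]
    rw [one_mul, hval]
    rw [show ((-1 : ZMod N)) * (k : ZMod N) = -((k : ZMod N)) by ring, hinv, hval]
    rw [show ((n : ZMod N)) * (k : ZMod N) = ((n * k : ℕ) : ZMod N) by push_cast; ring, hval]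
  -- the cube root of unity
  set ω : ℂ := Complex.exp (2 * Real.pi * Complex.I / 3) with hωdef
  have hω3 : IsPrimitiveRoot ω 3 := Complex.isPrimitiveRoot_exp 3 (by norm_num)
  have hωc : ω ^ 3 = 1 := hω3.pow_eq_one
  have hω : ω ^ 2 + ω + 1 = 0 := by
    have h1 : ω ≠ 1 := hω3.ne_one (by norm_num)
    have h : (ω - 1) * (ω ^ 2 + ω + 1) = 0 := by linear_combination hωc
    rcases mul_eq_zero.mp h with h | h
    · exact absurd (by linear_combination h) h1
    · exact h
  -- auxiliary values
  set ξ : ℂ := ψ ^ 2 with hξdef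
  have hξ : IsPrimitiveRoot ξ n := hψ.pow (by omega) hN
  have hψn : ψ ^ n = -1 := by
    have hsq : ψ ^ n * ψ ^ n = 1 := by
      rw [← pow_add, show n + n = N by omega, hψN]
    have hne : ψ ^ n ≠ 1 := hψ.pow_ne_one_of_pos_of_lt (by omega) (by omega)
    have h : (ψ ^ n - 1) * (ψ ^ n + 1) = 0 := by linear_combination hsq
    rcases mul_eq_zero.mp h with h | h
    · exact absurd (by linear_combination h) hne
    · linear_combination h
  have hξ0 : ∀ m : ℕ, ξ ^ m ≠ 0 := fun m => pow_ne_zero m (pow_ne_zero 2 hψ0)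
  set o : ℂ := (-1) ^ (n - 1) with hodef
  set e : ℂ := (-1) ^ n with hedef
  have ho2 : o * o = 1 := by rw [hodef, ← mul_pow]; norm_num
  have he2 : e * e = 1 := by rw [hedef, ← mul_pow]; norm_num
  have hoinv : o⁻¹ = o := by
    rw [hodef, ← inv_pow, inv_neg, inv_one]
  have hprodt : ∏ m ∈ Finset.range n, ξ ^ m = o := by
    rw [Finset.prod_pow_eq_pow_sum, hξdef, ← pow_mul,
      show 2 * (∑ m ∈ Finset.range n, m) = n * (n - 1) by
        have := Finset.sum_range_id_mul_two n; omega,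
      pow_mul, hψn, hodef]
  have hsub : ∀ c : ℂ, ∏ m ∈ Finset.range n, (ξ ^ m - c) = e * (c ^ n - 1) := by
    intro c
    calc ∏ m ∈ Finset.range n, (ξ ^ m - c)
        = ∏ m ∈ Finset.range n, ((-1) * (c - ξ ^ m)) := by
          apply Finset.prod_congr rfl; intro m _; ring
      _ = ((-1 : ℂ) ^ n) * ∏ m ∈ Finset.range n, (c - ξ ^ m) := by
          rw [Finset.prod_mul_distrib, Finset.prod_const, Finset.card_range]
      _ = e * (c ^ n - 1) := by
          rw [prod_sub_pow (by omega) hξ c, hedef]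
  -- even terms
  have heven : ∏ m ∈ Finset.range n,
      (ψ ^ (2 * m) + (ψ ^ (2 * m))⁻¹ + ψ ^ (n * (2 * m))) =
      o * (e * (ω ^ n - 1)) * (e * ((ω ^ 2) ^ n - 1)) := by
    have hterm : ∀ m : ℕ, ψ ^ (2 * m) + (ψ ^ (2 * m))⁻¹ + ψ ^ (n * (2 * m)) =
        (ξ ^ m)⁻¹ * ((ξ ^ m - ω) * (ξ ^ m - ω ^ 2)) := by
      intro m
      have h1 : ψ ^ (2 * m) = ξ ^ m := by rw [hξdef, ← pow_mul]
      have h2 : ψ ^ (n * (2 * m)) = 1 := by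
        rw [show n * (2 * m) = N * m by rw [hN]; ring, pow_mul, hψN, one_pow]
      rw [h1, h2]
      have ht := hξ0 m
      have hti : ξ ^ m * (ξ ^ m)⁻¹ = 1 := mul_inv_cancel₀ ht
      rw [eq_comm, inv_mul_eq_iff_eq_mul₀ ht]
      linear_combination (ω - 1 - ξ ^ m) * hω - hti
    rw [Finset.prod_congr rfl fun m _ => hterm m]
    rw [Finset.prod_mul_distrib, Finset.prod_mul_distrib, Finset.prod_inv_distrib, hprodt,
      hoinv, hsub ω, hsub (ω ^ 2)]
    ring
  -- odd terms
  have hprodu : ∏ m ∈ Finset.range n, (ψ * ξ ^ m) = -o := by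
    rw [Finset.prod_mul_distrib, Finset.prod_const, Finset.card_range, hprodt, hψn]
    ring
  have hplus : ∀ c : ℂ, ∏ m ∈ Finset.range n, (ψ * ξ ^ m + c) = c ^ n + e := by
    intro c
    calc ∏ m ∈ Finset.range n, (ψ * ξ ^ m + c)
        = ∏ m ∈ Finset.range n, ((-ψ) * ((-c * ψ⁻¹) - ξ ^ m)) := by
          apply Finset.prod_congr rfl; intro m _
          field_simp
          ring
      _ = (-ψ) ^ n * ∏ m ∈ Finset.range n, ((-c * ψ⁻¹) - ξ ^ m) := by
          rw [Finset.prod_mul_distrib, Finset.prod_const, Finset.card_range]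
      _ = (-ψ) ^ n * ((-c * ψ⁻¹) ^ n - 1) := by
          rw [prod_sub_pow (by omega) hξ]
      _ = c ^ n + e := by
          rw [neg_pow ψ, show (-c * ψ⁻¹ : ℂ) = -(c * ψ⁻¹) by ring, neg_pow (c * ψ⁻¹),
            mul_pow, inv_pow, hψn, ← hedef]
          rw [show ((-1 : ℂ))⁻¹ = -1 by norm_num]
          linear_combination (c ^ n) * he2
  have hodd : ∏ m ∈ Finset.range n,
      (ψ ^ (2 * m + 1) + (ψ ^ (2 * m + 1))⁻¹ + ψ ^ (n * (2 * m + 1))) =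
      (-o) * ((ω ^ n + e) * ((ω ^ 2) ^ n + e)) := by
    have hterm : ∀ m : ℕ, ψ ^ (2 * m + 1) + (ψ ^ (2 * m + 1))⁻¹ + ψ ^ (n * (2 * m + 1)) =
        (ψ * ξ ^ m)⁻¹ * ((ψ * ξ ^ m + ω) * (ψ * ξ ^ m + ω ^ 2)) := by
      intro m
      have h1 : ψ ^ (2 * m + 1) = ψ * ξ ^ m := by
        rw [hξdef, ← pow_mul, pow_succ, mul_comm]
      have h2 : ψ ^ (n * (2 * m + 1)) = -1 := by
        rw [show n * (2 * m + 1) = N * m + n by rw [hN]; ring, pow_add, pow_mul, hψN,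
          one_pow, one_mul, hψn]
      rw [h1, h2]
      have hu : ψ * ξ ^ m ≠ 0 := mul_ne_zero hψ0 (hξ0 m)
      have hui : (ψ * ξ ^ m) * (ψ * ξ ^ m)⁻¹ = 1 := mul_inv_cancel₀ hu
      rw [eq_comm, inv_mul_eq_iff_eq_mul₀ hu]
      linear_combination (ψ * ξ ^ m + ω - 1) * hω - hui
    rw [Finset.prod_congr rfl fun m _ => hterm m]
    rw [Finset.prod_mul_distrib, Finset.prod_mul_distrib, Finset.prod_inv_distrib,
      hprodu, hplus ω, hplus (ω ^ 2)]
    rw [show ((-o : ℂ))⁻¹ = -o by rw [inv_neg, hoinv]]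
  -- assemble
  have hP : A.det = o * (e * (ω ^ n - 1)) * (e * ((ω ^ 2) ^ n - 1)) *
      ((-o) * ((ω ^ n + e) * ((ω ^ 2) ^ n + e))) := by
    rw [hdetA, hcoP lam, Finset.prod_congr rfl fun k _ => hlamk k, hN,
      prod_range_even_odd (fun k => ψ ^ k + (ψ ^ k)⁻¹ + ψ ^ (n * k)) n]
    rw [heven, hodd]
  -- relate to the integer determinant
  have hcast : ((((mobiusLadder n).adjMatrix ℤ).det : ℤ) : ℂ) = A.det := by
    rw [hAdef]
    exact RingHom.map_det (Int.castRingHom ℂ) _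
  -- power reduction
  have hpow3 : ∀ a : ℕ, ω ^ a = ω ^ (a % 3) := by
    intro a
    conv_lhs => rw [← Nat.div_add_mod a 3, pow_add, pow_mul, hωc, one_pow]
    exact one_mul _
  have hsq : (ω ^ 2) ^ n = ω ^ (2 * n % 3) := by
    rw [← pow_mul, hpow3]
  have hn3 : ω ^ n = ω ^ (n % 3) := hpow3 n
  -- case analysis on n % 6
  have h6 : n % 6 = 0 ∨ n % 6 = 1 ∨ n % 6 = 2 ∨ n % 6 = 3 ∨ n % 6 = 4 ∨ n % 6 = 5 := by
    omega
  have hoe : ∀ v : ℤ, A.det = (v : ℂ) → ((mobiusLadder n).adjMatrix ℤ).det = v := by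
    intro v hv
    have := hcast.trans hv
    exact_mod_cast this
  have hEo : n % 2 = 0 → e = 1 ∧ o = -1 := by
    intro hpar
    constructor
    · rw [hedef]; exact Even.neg_one_pow (Nat.even_iff.mpr hpar)
    · rw [hodef]; exact Odd.neg_one_pow (Nat.odd_iff.mpr (by omega))
  have hOo : n % 2 = 1 → e = -1 ∧ o = 1 := by
    intro hpar
    constructor
    · rw [hedef]; exact Odd.neg_one_pow (Nat.odd_iff.mpr hpar)
    · rw [hodef]; exact Even.neg_one_pow (Nat.even_iff.mpr (by omega))
  rcases h6 with hr | hr | hr | hr | hr | hr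
  · -- n % 6 = 0
    simp only [hr]
    norm_num
    apply hoe 0
    rw [hP, hn3, show n % 3 = 0 by omega]
    norm_num
  · -- n % 6 = 1
    simp only [hr]
    norm_num
    apply hoe (-9)
    obtain ⟨he', ho'⟩ := hOo (by omega)
    rw [hP, hn3, hsq, show n % 3 = 1 by omega, show 2 * n % 3 = 2 by omega, he', ho']
    push_cast
    linear_combination (8 - 6 * ω - ω ^ 2 + 3 * ω ^ 3 - ω ^ 4) * hω
  · -- n % 6 = 2
    simp only [hr]
    norm_num
    apply hoe (-3)
    obtain ⟨he', ho'⟩ := hEo (by omega)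
    rw [hP, hn3, hsq, show n % 3 = 2 by omega, show 2 * n % 3 = 1 by omega, he', ho']
    push_cast
    linear_combination (2 - 2 * ω + ω ^ 2 + ω ^ 3 - ω ^ 4) * hω
  · -- n % 6 = 3
    simp only [hr]
    norm_num
    apply hoe 0
    rw [hP, hn3, show n % 3 = 0 by omega]
    norm_num
  · -- n % 6 = 4
    simp only [hr]
    norm_num
    apply hoe (-3)
    obtain ⟨he', ho'⟩ := hEo (by omega)
    rw [hP, hn3, hsq, show n % 3 = 1 by omega, show 2 * n % 3 = 2 by omega, he', ho']
    push_cast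
    linear_combination (2 - 2 * ω + ω ^ 2 + ω ^ 3 - ω ^ 4) * hω
  · -- n % 6 = 5
    simp only [hr]
    norm_num
    apply hoe (-9)
    obtain ⟨he', ho'⟩ := hOo (by omega)
    rw [hP, hn3, hsq, show n % 3 = 2 by omega, show 2 * n % 3 = 1 by omega, he', ho']
    push_cast
    linear_combination (8 - 6 * ω - ω ^ 2 + 3 * ω ^ 3 - ω ^ 4) * hω
end

section
/- Let n be a positive integer and let a be an integer with gcd(a,n) = 1. Then for every real number x, sin(n x) = 2^(n-1) · (-1)^((a-1)(n-1)/2) · ∏_{j=0}^{n-1} sin(x + a j π / n). (Since gcd(a,n) = 1, a and n are not both even, so (a-1)(n-1) is even and the exponent is an integer.) -/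
open Real Finset

lemma sin_div_aux (s : ℂ) :
    Complex.sin s = (Complex.exp (s * Complex.I) - (Complex.exp (s * Complex.I))⁻¹) / (2 * Complex.I) := by
  have h := Complex.two_sin s
  rw [neg_mul, Complex.exp_neg] at h
  rw [eq_div_iff (by simp [Complex.I_ne_zero] : (2 : ℂ) * Complex.I ≠ 0)]
  linear_combination Complex.I * h + ((Complex.exp (s * Complex.I))⁻¹ - Complex.exp (s * Complex.I)) * Complex.I_sq

open Polynomial in
lemma prod_aux (n : ℕ) (hn : 0 < n) (u v : ℂ) (hu : u ≠ 0) (hv : v ≠ 0)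
    (hζ : IsPrimitiveRoot ((v ^ 2)⁻¹) n) :
    ∏ j ∈ Finset.range n, (u * v ^ j - (u * v ^ j)⁻¹)
      = (∏ j ∈ Finset.range n, v ^ j) * (u ^ n - (u ^ n)⁻¹) := by
  have hpoly : (u ^ 2) ^ n - 1 = ∏ j ∈ Finset.range n, (u ^ 2 - ((v ^ 2)⁻¹) ^ j) := by
    have h := X_pow_sub_C_eq_prod (R := ℂ) hζ hn (one_pow n)
    have h2 := congrArg (Polynomial.eval (u ^ 2)) h
    simpa [Polynomial.eval_prod] using h2
  have step1 : ∏ j ∈ Finset.range n, (u * v ^ j - (u * v ^ j)⁻¹)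
      = ∏ j ∈ Finset.range n, ((u * v ^ j)⁻¹ * ((v ^ 2) ^ j * (u ^ 2 - ((v ^ 2)⁻¹) ^ j))) := by
    refine Finset.prod_congr rfl fun j _ => ?_
    have hvj : (v : ℂ) ^ j ≠ 0 := pow_ne_zero _ hv
    field_simp
    ring_nf
    rw [← mul_pow, mul_inv_cancel₀ hv, one_pow]
    ring
  rw [step1, Finset.prod_mul_distrib, Finset.prod_mul_distrib, ← hpoly,
    Finset.prod_inv_distrib, Finset.prod_mul_distrib, Finset.prod_const,
    Finset.card_range]
  have hW : (∏ j ∈ Finset.range n, v ^ j) ≠ 0 := Finset.prod_ne_zero_iff.mpr fun j _ => pow_ne_zero _ hv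
  have h2 : ∏ j ∈ Finset.range n, (v ^ 2) ^ j = (∏ j ∈ Finset.range n, v ^ j) ^ 2 := by
    rw [← Finset.prod_pow]
    exact Finset.prod_congr rfl fun j _ => by ring
  rw [h2]
  have hun : u ^ n ≠ 0 := pow_ne_zero _ hu
  field_simp
  ring

lemma key_complex (n : ℕ) (hn : 0 < n) (a : ℤ) (ha : Int.gcd a n = 1) (e : ℤ)
    (he : 2 * e = (a - 1) * ((n : ℤ) - 1)) (z : ℂ) :
    Complex.sin (n * z) =
      2 ^ (n - 1) * (-1 : ℂ) ^ e * ∏ j ∈ Finset.range n, Complex.sin (z + a * j * π / n) := by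
  have hn0 : (n : ℂ) ≠ 0 := Nat.cast_ne_zero.mpr hn.ne'
  set u : ℂ := Complex.exp (z * Complex.I) with hu
  set v : ℂ := Complex.exp ((a : ℂ) * π * Complex.I / n) with hv
  have hu0 : u ≠ 0 := Complex.exp_ne_zero _
  have hv0 : v ≠ 0 := Complex.exp_ne_zero _
  have hζ : IsPrimitiveRoot ((v ^ 2)⁻¹) n := by
    have hw : IsPrimitiveRoot (Complex.exp (2 * π * Complex.I / n)) n :=
      Complex.isPrimitiveRoot_exp n hn.ne'
    have hv2 : v ^ 2 = Complex.exp (2 * π * Complex.I / n) ^ (a : ℤ) := by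
      rw [← Complex.exp_int_mul, hv, sq, ← Complex.exp_add]
      congr 1
      ring
    rw [hv2, ← zpow_neg]
    exact hw.zpow_of_gcd_eq_one (-a) (by rwa [Int.neg_gcd])
  have hterm : ∀ j ∈ Finset.range n, Complex.sin (z + a * j * π / n)
      = (u * v ^ j - (u * v ^ j)⁻¹) / (2 * Complex.I) := by
    intro j _
    rw [sin_div_aux]
    have hE : Complex.exp ((z + a * j * π / n) * Complex.I) = u * v ^ j := by
      rw [hu, hv, ← Complex.exp_nat_mul, ← Complex.exp_add]
      congr 1
      field_simp
    rw [hE]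
  rw [Finset.prod_congr rfl hterm, Finset.prod_div_distrib, Finset.prod_const, Finset.card_range,
    prod_aux n hn u v hu0 hv0 hζ]
  have hN : Complex.sin ((n : ℂ) * z) = (u ^ n - (u ^ n)⁻¹) / (2 * Complex.I) := by
    rw [sin_div_aux]
    have hE : Complex.exp (((n : ℂ) * z) * Complex.I) = u ^ n := by
      rw [hu, ← Complex.exp_nat_mul]
      ring_nf
    rw [hE]
  rw [hN]
  have hT : ((∑ j ∈ Finset.range n, j : ℕ) : ℂ) * 2 = (n : ℂ) * ((n : ℂ) - 1) := by
    have h := Finset.sum_range_id_mul_two n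
    calc ((∑ j ∈ Finset.range n, j : ℕ) : ℂ) * 2 = (((∑ j ∈ Finset.range n, j) * 2 : ℕ) : ℂ) := by
          push_cast; ring
      _ = ((n * (n - 1) : ℕ) : ℂ) := by exact_mod_cast congrArg (Nat.cast : ℕ → ℂ) h
      _ = (n : ℂ) * ((n : ℂ) - 1) := by push_cast [Nat.cast_sub hn]; ring
  have hec : 2 * (e : ℂ) = ((a : ℂ) - 1) * ((n : ℂ) - 1) := by exact_mod_cast he
  have hn1 : ((n - 1 : ℕ) : ℂ) = (n : ℂ) - 1 := by push_cast [Nat.cast_sub hn]; ring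
  have hsign : (-1 : ℂ) ^ e * ∏ j ∈ Finset.range n, v ^ j = Complex.I ^ (n - 1) := by
    have hIpow : Complex.I ^ (n - 1) = Complex.exp (((n - 1 : ℕ) : ℂ) * (↑π / 2 * Complex.I)) := by
      rw [Complex.exp_nat_mul, Complex.exp_mul_I]
      simp
    rw [Finset.prod_pow_eq_pow_sum, hv, ← Complex.exp_nat_mul,
      show ((-1 : ℂ)) = Complex.exp (↑π * Complex.I) from Complex.exp_pi_mul_I.symm,
      ← Complex.exp_int_mul, ← Complex.exp_add, hIpow]
    rw [Complex.exp_eq_exp_iff_exists_int]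
    refine ⟨e, ?_⟩
    rw [hn1]
    field_simp
    push_cast at hT ⊢
    linear_combination (a : ℂ) * hT + (-(n : ℂ)) * hec
  have hpow : (2 * Complex.I) ^ n = (2 : ℂ) ^ (n - 1) * Complex.I ^ (n - 1) * (2 * Complex.I) := by
    conv_lhs => rw [show n = (n - 1) + 1 from (Nat.succ_pred_eq_of_pos hn).symm]
    rw [pow_succ, mul_pow]
  have h2I : (2 : ℂ) * Complex.I ≠ 0 := by simp [Complex.I_ne_zero]
  have h2In : ((2 : ℂ) * Complex.I) ^ n ≠ 0 := pow_ne_zero _ h2I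
  have hW0 : (∏ j ∈ Finset.range n, v ^ j) ≠ 0 :=
    Finset.prod_ne_zero_iff.mpr fun j _ => pow_ne_zero _ hv0
  have hm1 : ((-1 : ℂ)) ^ e ≠ 0 := zpow_ne_zero _ (by norm_num)
  rw [hpow, ← hsign]
  have hun : u ^ n ≠ 0 := pow_ne_zero _ hu0
  have hden : u ^ n * (2 ^ (n - 1) * ((-1 : ℂ) ^ e * ∏ j ∈ Finset.range n, v ^ j) * (2 * Complex.I)) ≠ 0 :=
    mul_ne_zero hun (mul_ne_zero (mul_ne_zero (pow_ne_zero _ two_ne_zero) (mul_ne_zero hm1 hW0)) h2I)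
  field_simp

theorem sin_mul_eq_prod_sin (n : ℕ) (hn : 0 < n) (a : ℤ) (ha : Int.gcd a n = 1) (x : ℝ) :
    Real.sin (n * x) =
      2 ^ (n - 1) * (-1 : ℝ) ^ ((a - 1) * ((n : ℤ) - 1) / 2) *
        ∏ j ∈ Finset.range n, Real.sin (x + a * j * π / n) := by
  have h2 : (2 : ℤ) ∣ (a - 1) * ((n : ℤ) - 1) := by
    rcases Int.even_or_odd a with haE | haO
    · have hno : ¬ (2 : ℤ) ∣ (n : ℤ) := by
        intro hdn
        have hda : (2 : ℤ) ∣ a := haE.two_dvd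
        have : (2 : ℤ) ∣ (Int.gcd a n : ℤ) := Int.dvd_coe_gcd hda hdn
        rw [ha] at this
        norm_num at this
      have : (2 : ℤ) ∣ ((n : ℤ) - 1) := by omega
      exact this.mul_left _
    · have : (2 : ℤ) ∣ (a - 1) := by
        obtain ⟨k, hk⟩ := haO
        exact ⟨k, by omega⟩
      exact this.mul_right _
  have he : 2 * ((a - 1) * ((n : ℤ) - 1) / 2) = (a - 1) * ((n : ℤ) - 1) :=
    Int.mul_ediv_cancel' h2
  have key := key_complex n hn a ha ((a - 1) * ((n : ℤ) - 1) / 2) he (x : ℂ)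
  rw [← Complex.ofReal_inj]
  push_cast [Complex.ofReal_sin]
  convert key using 3
end

section
/- Let n be a positive integer and let a be an integer with gcd(a,n) = 1. Then ∏_{j=1}^{n-1} sin(a j π / n) = (-1)^((a-1)(n-1)/2) · n / 2^(n-1). (Since gcd(a,n) = 1, (a-1)(n-1) is even and the exponent is an integer; for n = 1 the empty product equals 1.) -/
open Real Finset

/-- distance from 1 to a point on the unit circle -/
lemma abs_one_sub_exp (θ : ℝ) :
    ‖1 - Complex.exp (θ * Complex.I)‖ = 2 * |Real.sin (θ / 2)| := by
  have h1 : Real.cos θ ≤ 1 := Real.cos_le_one θ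
  have hsq : ‖1 - Complex.exp (θ * Complex.I)‖ ^ 2 =
      (2 * |Real.sin (θ / 2)|) ^ 2 := by
    rw [← Complex.normSq_eq_norm_sq, Complex.normSq_apply]
    simp only [Complex.sub_re, Complex.sub_im, Complex.one_re, Complex.one_im,
      Complex.exp_ofReal_mul_I_re, Complex.exp_ofReal_mul_I_im]
    rw [mul_pow, sq_abs]
    have hhalf : Real.sin (θ / 2) ^ 2 = (1 - Real.cos θ) / 2 := by
      have h := Real.sin_sq_eq_half_sub (θ / 2)
      rw [show 2 * (θ / 2) = θ by ring] at h
      linarith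
    have := Real.sin_sq_add_cos_sq θ
    nlinarith
  have h2 : (0:ℝ) ≤ 2 * |Real.sin (θ / 2)| := by positivity
  nlinarith [norm_nonneg (1 - Complex.exp (θ * Complex.I)), hsq]

/-- the classical sine product -/
lemma base_prod (n : ℕ) (hn : 0 < n) :
    ∏ j ∈ Finset.Icc 1 (n - 1), Real.sin (j * π / n) = n / 2 ^ (n - 1) := by
  obtain ⟨m, rfl⟩ : ∃ m, n = m + 1 := ⟨n - 1, (Nat.succ_pred_eq_of_pos hn).symm⟩
  have hμ := Complex.isPrimitiveRoot_exp (m + 1) (Nat.succ_ne_zero m)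
  have key := hμ.prod_one_sub_pow_eq_order
  have habs : ∀ k ∈ Finset.range m,
      ‖1 - Complex.exp (2 * π * Complex.I / (m + 1)) ^ (k + 1)‖ =
        2 * Real.sin ((k + 1) * π / (m + 1)) := by
    intro k hk
    have hk' : (k : ℝ) + 1 ≤ m := by
      have := Finset.mem_range.mp hk
      exact_mod_cast Nat.succ_le_of_lt this
    have hm1 : (0:ℝ) < (m:ℝ) + 1 := by positivity
    have hexp : Complex.exp (2 * π * Complex.I / (m + 1)) ^ (k + 1) =
        Complex.exp ((2 * π * ((k:ℝ) + 1) / ((m:ℝ) + 1) : ℝ) * Complex.I) := by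
      rw [← Complex.exp_nat_mul]
      push_cast
      ring_nf
    rw [hexp, abs_one_sub_exp]
    have harg : 2 * π * ((k:ℝ) + 1) / ((m:ℝ) + 1) / 2 = ((k:ℝ) + 1) * π / ((m:ℝ) + 1) := by
      ring
    rw [harg, abs_of_nonneg (Real.sin_nonneg_of_nonneg_of_le_pi (by positivity) (by
      rw [div_le_iff₀ hm1]
      have hπ : (0:ℝ) < π := Real.pi_pos
      nlinarith))]
  have key2 : ∏ k ∈ Finset.range m, (2 * Real.sin ((k + 1) * π / (m + 1))) = (m + 1 : ℝ) := by
    have h := congrArg (‖·‖) key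
    rw [norm_prod] at h
    push_cast at h
    rw [Finset.prod_congr rfl habs] at h
    have habs1 : ‖(m:ℂ) + 1‖ = (m:ℝ) + 1 := by
      rw [show ((m:ℂ) + 1) = (((m:ℝ) + 1 : ℝ) : ℂ) by push_cast; ring,
        Complex.norm_real, Real.norm_eq_abs, abs_of_nonneg (by positivity)]
    rw [habs1] at h
    exact h
  rw [Finset.prod_mul_distrib, Finset.prod_const, Finset.card_range] at key2
  have h2m : (0:ℝ) < (2:ℝ) ^ m := by positivity
  have hIcc : ∏ j ∈ Finset.Icc 1 (m + 1 - 1), Real.sin (j * π / (m + 1)) =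
      ∏ k ∈ Finset.range m, Real.sin (((k:ℝ) + 1) * π / ((m:ℝ) + 1)) := by
    simp only [Nat.add_sub_cancel]
    rw [← Finset.Ico_add_one_right_eq_Icc, Finset.prod_Ico_eq_prod_range]
    apply Finset.prod_congr (by simp)
    intro k _
    push_cast
    ring_nf
  have hgoal : ∏ j ∈ Finset.Icc 1 (m + 1 - 1), Real.sin ((j:ℝ) * π / ((m + 1 : ℕ) : ℝ)) =
      ∏ j ∈ Finset.Icc 1 (m + 1 - 1), Real.sin ((j:ℝ) * π / ((m:ℝ) + 1)) := by
    apply Finset.prod_congr rfl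
    intro j _
    norm_num
  rw [hgoal, hIcc, show ((m + 1 : ℕ) : ℝ) = (m:ℝ) + 1 by push_cast; ring,
    Nat.add_sub_cancel, eq_div_iff h2m.ne', mul_comm]
  exact key2

lemma prod_neg_one_zpow {ι : Type*} (s : Finset ι) (f : ι → ℤ) :
    ∏ i ∈ s, ((-1 : ℝ) ^ (f i)) = (-1 : ℝ) ^ (∑ i ∈ s, f i) := by
  classical
  induction s using Finset.cons_induction with
  | empty => simp
  | cons i s hi ih =>
    rw [Finset.prod_cons, Finset.sum_cons, ih, ← zpow_add₀ (by norm_num : (-1:ℝ) ≠ 0)]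

theorem prod_sin_eq (n : ℕ) (hn : 0 < n) (a : ℤ) (ha : Int.gcd a n = 1) :
    ∏ j ∈ Finset.Icc 1 (n - 1), Real.sin (a * j * π / n) =
      (-1 : ℝ) ^ ((a - 1) * ((n : ℤ) - 1) / 2) * n / 2 ^ (n - 1) := by
  have hn0 : (n : ℤ) ≠ 0 := by exact_mod_cast hn.ne'
  have hnpos : (0 : ℤ) < n := by exact_mod_cast hn
  have hnR : (n : ℝ) ≠ 0 := Nat.cast_ne_zero.mpr hn.ne'
  have hcop : IsCoprime a (n : ℤ) := Int.isCoprime_iff_gcd_eq_one.mpr ha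
  obtain ⟨u, v, huv⟩ := hcop
  have hcop' : IsCoprime a (n : ℤ) := ⟨u, v, huv⟩
  have hucop : IsCoprime u (n : ℤ) := ⟨a, v, by linarith⟩
  set A : Finset ℕ := Finset.Icc 1 (n - 1) with hA
  -- membership of reduced residues
  have hrmem : ∀ b : ℤ, IsCoprime b (n : ℤ) → ∀ j ∈ A,
      ((b * j) % (n : ℤ)).toNat ∈ A := by
    intro b hb j hj
    rw [hA, Finset.mem_Icc] at hj ⊢
    have hj1 : 1 ≤ j := hj.1
    have hj2 : j ≤ n - 1 := hj.2
    have hmod_nonneg : 0 ≤ (b * j) % (n : ℤ) := Int.emod_nonneg _ hn0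
    have hmod_lt : (b * j) % (n : ℤ) < n := Int.emod_lt_of_pos _ hnpos
    have hne : (b * j) % (n : ℤ) ≠ 0 := by
      intro h0
      have hdvd : (n : ℤ) ∣ b * j := Int.dvd_of_emod_eq_zero h0
      have hnj : (n : ℤ) ∣ (j : ℤ) := hb.symm.dvd_of_dvd_mul_left hdvd
      have hjlt : (j : ℤ) < n := by
        have h2 : (j : ℤ) ≤ (n : ℤ) - 1 := by
          have : (j:ℤ) ≤ ((n-1 : ℕ) : ℤ) := by exact_mod_cast hj2
          omega
        omega
      have hjpos : (0 : ℤ) < j := by exact_mod_cast hj1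
      have := Int.le_of_dvd hjpos hnj
      omega
    omega
  -- composing two coprime multiplications inverts
  have hinv : ∀ b c : ℤ, ((n:ℤ) ∣ c * b - 1) →
      ∀ j ∈ A, ((c * (((b * j) % (n : ℤ)).toNat : ℤ)) % (n:ℤ)).toNat = j := by
    intro b c hcb j hj
    rw [hA, Finset.mem_Icc] at hj
    have hmod_nonneg : 0 ≤ (b * j) % (n : ℤ) := Int.emod_nonneg _ hn0
    rw [Int.toNat_of_nonneg hmod_nonneg]
    have h1 : (b * j) % (n:ℤ) ≡ b * j [ZMOD (n:ℤ)] := Int.emod_emod_of_dvd _ dvd_rfl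
    have h2 : c * ((b * j) % (n:ℤ)) ≡ c * (b * j) [ZMOD (n:ℤ)] := h1.mul_left c
    have h3 : c * (b * j) ≡ (j:ℤ) [ZMOD (n:ℤ)] := by
      obtain ⟨t, ht⟩ := hcb
      have : (n:ℤ) ∣ ((j:ℤ) - c * (b * j)) := ⟨-(t * j), by linear_combination (-(j:ℤ)) * ht⟩
      exact Int.modEq_iff_dvd.mpr this

    have h4 : (c * ((b * j) % (n:ℤ))) % (n:ℤ) = (j:ℤ) % (n:ℤ) := h2.trans h3
    have hjlt : (j : ℤ) < n := by
      have : (j:ℤ) ≤ ((n-1 : ℕ) : ℤ) := by exact_mod_cast hj.2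
      omega
    have hjnn : (0:ℤ) ≤ j := by positivity
    rw [h4, Int.emod_eq_of_lt hjnn hjlt]
    exact Int.toNat_natCast j
  have hdvd_ua : (n:ℤ) ∣ u * a - 1 := ⟨-v, by linarith⟩
  have hdvd_au : (n:ℤ) ∣ a * u - 1 := ⟨-v, by linarith⟩
  set σ : ℕ → ℕ := fun j => ((a * j) % (n : ℤ)).toNat with hσ
  set τ : ℕ → ℕ := fun k => ((u * k) % (n : ℤ)).toNat with hτ
  have hστ : ∀ j ∈ A, τ (σ j) = j := fun j hj => hinv a u hdvd_ua j hj
  have hτσ : ∀ k ∈ A, σ (τ k) = k := fun k hk => hinv u a hdvd_au k hk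
  have hσmem : ∀ j ∈ A, σ j ∈ A := fun j hj => hrmem a hcop' j hj
  have hτmem : ∀ k ∈ A, τ k ∈ A := fun k hk => hrmem u hucop k hk
  -- per-term decomposition
  have hterm : ∀ j ∈ A, Real.sin ((a:ℝ) * j * π / n) =
      (-1:ℝ) ^ ((a * j) / (n:ℤ)) * Real.sin ((σ j : ℝ) * π / n) := by
    intro j hj
    have hmod_nonneg : 0 ≤ (a * j) % (n : ℤ) := Int.emod_nonneg _ hn0
    have hcast : (σ j : ℝ) = (((a * (j:ℤ)) % (n:ℤ) : ℤ) : ℝ) := by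
      rw [hσ]; exact_mod_cast congrArg Int.cast (Int.toNat_of_nonneg hmod_nonneg)
    have hdecomp : (a:ℝ) * j * π / n =
        (σ j : ℝ) * π / n + ((a * (j:ℤ)) / (n:ℤ) : ℤ) * π := by
      rw [hcast]
      have h := Int.emod_add_mul_ediv (a * (j:ℤ)) (n:ℤ)
      have hR : ((a:ℝ) * j) = (((a * (j:ℤ)) % (n:ℤ) : ℤ) : ℝ) +
          (n:ℝ) * (((a * (j:ℤ)) / (n:ℤ) : ℤ) : ℝ) := by
        exact_mod_cast congrArg (Int.cast : ℤ → ℝ) h.symm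
      field_simp
      linear_combination hR
    rw [hdecomp, Real.sin_add_int_mul_pi]
  rw [show (∏ j ∈ Finset.Icc 1 (n-1), Real.sin ((a:ℝ) * j * π / n)) =
      ∏ j ∈ A, ((-1:ℝ) ^ ((a * j) / (n:ℤ)) * Real.sin ((σ j : ℝ) * π / n)) from
    Finset.prod_congr rfl hterm]
  rw [Finset.prod_mul_distrib, prod_neg_one_zpow]
  -- the sine part equals the base product
  have hsines : ∏ j ∈ A, Real.sin ((σ j : ℝ) * π / n) =
      ∏ k ∈ A, Real.sin ((k : ℝ) * π / n) := by
    exact Finset.prod_nbij' σ τ hσmem hτmem hστ hτσ (fun j hj => rfl)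
  rw [hsines, hA, base_prod n hn]
  -- now the sign
  have hsum_r : ∑ j ∈ A, ((a * j) % (n:ℤ)) = ∑ k ∈ A, (k : ℤ) := by
    apply Finset.sum_nbij' σ τ hσmem hτmem hστ hτσ
    intro j hj
    exact (Int.toNat_of_nonneg (Int.emod_nonneg _ hn0)).symm
  set S : ℤ := ∑ j ∈ A, (a * j) / (n:ℤ) with hS
  set T : ℤ := ∑ k ∈ A, (k : ℤ) with hT
  have hnS : (n:ℤ) * S = (a - 1) * T := by
    rw [hS, Finset.mul_sum]
    have : ∀ j ∈ A, (n:ℤ) * ((a * j) / (n:ℤ)) = a * j - (a * j) % (n:ℤ) := by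
      intro j _
      have h := Int.emod_add_mul_ediv (a * (j:ℤ)) (n:ℤ)
      linarith
    rw [Finset.sum_congr rfl this, Finset.sum_sub_distrib, hsum_r]
    rw [hT, ← Finset.mul_sum]
    ring
  have hGauss : 2 * T = (n:ℤ) * ((n:ℤ) - 1) := by
    have hset : Finset.range n = insert 0 A := by
      ext x
      simp only [Finset.mem_range, Finset.mem_insert, hA, Finset.mem_Icc]
      omega
    have h0A : 0 ∉ A := by simp [hA]
    have hnat : (∑ i ∈ Finset.range n, i) * 2 = n * (n - 1) := Finset.sum_range_id_mul_two n
    rw [hset, Finset.sum_insert h0A] at hnat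
    have hnat2 : (∑ i ∈ A, i) * 2 = n * (n - 1) := by omega
    have h3 := congrArg (Nat.cast : ℕ → ℤ) hnat2
    push_cast [Nat.cast_sub (by omega : 1 ≤ n)] at h3
    rw [← hT] at h3
    linarith
  have heven : (2:ℤ) ∣ (a - 1) * ((n:ℤ) - 1) := by
    rcases Int.even_or_odd a with he | ho
    · have hnodd : ¬ (2:ℤ) ∣ (n:ℤ) := by
        intro h2n
        have h2a : (2:ℤ) ∣ a := he.two_dvd
        have : (2:ℤ) ∣ (Int.gcd a n : ℤ) := Int.dvd_coe_gcd h2a h2n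
        rw [ha] at this
        norm_num at this
      have : (2:ℤ) ∣ (n:ℤ) - 1 := by omega
      exact this.mul_left _
    · have : (2:ℤ) ∣ a - 1 := by
        obtain ⟨t, ht⟩ := ho
        exact ⟨t, by omega⟩
      exact this.mul_right _
  set E : ℤ := (a - 1) * ((n:ℤ) - 1) / 2 with hE
  have hE2 : 2 * E = (a - 1) * ((n:ℤ) - 1) := by
    rw [hE]
    exact Int.mul_ediv_cancel' heven
  have hSE : S = E := by
    have h1 : (2 * (n:ℤ)) * S = (2 * (n:ℤ)) * E := by
      calc (2 * (n:ℤ)) * S = 2 * ((n:ℤ) * S) := by ring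
        _ = 2 * ((a - 1) * T) := by rw [hnS]
        _ = (a - 1) * (2 * T) := by ring
        _ = (a - 1) * ((n:ℤ) * ((n:ℤ) - 1)) := by rw [hGauss]
        _ = (n:ℤ) * ((a - 1) * ((n:ℤ) - 1)) := by ring
        _ = (n:ℤ) * (2 * E) := by rw [hE2]
        _ = (2 * (n:ℤ)) * E := by ring
    exact mul_left_cancel₀ (by omega : (2 * (n:ℤ)) ≠ 0) h1
  rw [hSE, hE]
  rw [mul_div_assoc]
end

section
/- Let n ≥ 3 be an integer. Then the determinant of the adjacency matrix of the cycle graph C_n on n vertices equals 2 if n is odd; equals -4 if n ≡ 2 (mod 4); and equals 0 if n ≡ 0 (mod 4). -/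
open SimpleGraph

open Equiv Matrix Finset in
private lemma one_add_perm_apply {n : ℕ} (σ : Equiv.Perm (Fin n)) (a b : Fin n) :
    ((1 : Matrix (Fin n) (Fin n) ℤ) + σ.permMatrix ℤ) a b
      = (if a = b then 1 else 0) + (if σ a = b then 1 else 0) := by
  simp [Matrix.one_apply, Equiv.Perm.permMatrix, PEquiv.toMatrix_apply, Equiv.toPEquiv_apply,
    eq_comm]

open Equiv Matrix Finset Fin.NatCast in
private lemma perm_struct {k : ℕ} (g : Equiv.Perm (Fin (k+2)))
    (h : ∀ i, g i = i ∨ g i = i - 1) : g = 1 ∨ g = (finRotate (k+2))⁻¹ := by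
  have h10 : (1 : Fin (k+2)) ≠ 0 := one_ne_zero
  by_cases hg : ∀ i, g i = i
  · left; ext i; simp [hg i]
  · right
    push_neg at hg
    obtain ⟨i0, hi0⟩ := hg
    have hbase : g i0 = i0 - 1 := (h i0).resolve_left hi0
    have step : ∀ j : Fin (k+2), g j = j - 1 → g (j - 1) = j - 1 - 1 := by
      intro j hj
      rcases h (j - 1) with h1 | h1
      · exfalso
        have : j - 1 = j := g.injective (by rw [h1, hj])
        rw [sub_eq_self] at this
        exact h10 this
      · exact h1
    have all : ∀ t : ℕ, g (i0 - (t : Fin (k+2))) = i0 - t - 1 := by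
      intro t
      induction t with
      | zero => simpa using hbase
      | succ t ih =>
        have := step _ ih
        push_cast
        rw [← sub_sub]
        exact this
    have hrot : ∀ x : Fin (k+2), (finRotate (k+2))⁻¹ x = x - 1 := by
      intro x
      rw [Equiv.Perm.inv_def, Equiv.symm_apply_eq, finRotate_succ_apply, sub_add_cancel]
    apply Equiv.ext; intro x
    have hx : (((i0 - x).val : ℕ) : Fin (k+2)) = i0 - x := Fin.cast_val_eq_self _
    have := all (i0 - x).val
    rw [hx, sub_sub_cancel] at this
    rw [this, hrot]

open Equiv Matrix Finset in
private lemma det_one_add_rotate (k : ℕ) :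
    ((1 : Matrix (Fin (k+2)) (Fin (k+2)) ℤ) + (finRotate (k+2)).permMatrix ℤ).det
      = 1 + (-1) ^ (k+1) := by
  set c := finRotate (k+2) with hc
  set M := (1 : Matrix (Fin (k+2)) (Fin (k+2)) ℤ) + c.permMatrix ℤ with hMdef
  have h10 : (1 : Fin (k+2)) ≠ 0 := one_ne_zero
  have hM : ∀ a b : Fin (k+2), M a b
      = (if a = b then 1 else 0) + (if a + 1 = b then 1 else 0) := by
    intro a b
    rw [hMdef, one_add_perm_apply, hc, finRotate_succ_apply]
  have hrotinv : ∀ x : Fin (k+2), c⁻¹ x = x - 1 := by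
    intro x
    rw [hc, Equiv.Perm.inv_def, Equiv.symm_apply_eq, finRotate_succ_apply, sub_add_cancel]
  rw [Matrix.det_apply]
  have hvanish : ∀ g ∈ (Finset.univ : Finset (Perm (Fin (k+2)))),
      g ∉ ({1, c⁻¹} : Finset (Perm (Fin (k+2)))) →
      Equiv.Perm.sign g • ∏ i, M (g i) i = 0 := by
    intro g _ hg
    simp only [Finset.mem_insert, Finset.mem_singleton] at hg
    push_neg at hg
    have hz : ∏ i, M (g i) i = 0 := by
      by_contra hp
      have hall : ∀ i, g i = i ∨ g i = i - 1 := by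
        intro i
        have hne := Finset.prod_ne_zero_iff.mp hp i (Finset.mem_univ i)
        rw [hM] at hne
        by_contra hcon
        push_neg at hcon
        obtain ⟨h1, h2⟩ := hcon
        rw [if_neg h1, if_neg (fun hh => h2 (eq_sub_iff_add_eq.mpr hh))] at hne
        exact hne rfl
      rcases perm_struct g hall with h | h
      exacts [hg.1 h, hg.2 h]
    rw [hz, smul_zero]
  rw [← Finset.sum_subset (Finset.subset_univ ({1, c⁻¹} : Finset (Perm (Fin (k+2))))) hvanish]
  have hne1 : (1 : Perm (Fin (k+2))) ≠ c⁻¹ := by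
    intro hh
    have hc1 : c = 1 := by rw [← inv_inv c, ← hh, inv_one]
    have : c 0 = (0 : Fin (k+2)) := by rw [hc1]; rfl
    rw [hc, finRotate_succ_apply, zero_add] at this
    exact h10 this
  rw [Finset.sum_pair hne1]
  have hprod1 : ∏ i, M ((1 : Perm (Fin (k+2))) i) i = 1 := by
    apply Finset.prod_eq_one
    intro i _
    rw [Equiv.Perm.coe_one, id_eq, hM, if_pos rfl, if_neg, add_zero]
    intro hh
    exact h10 (add_eq_left.mp hh)
  have hprod2 : ∏ i, M (c⁻¹ i) i = 1 := by
    apply Finset.prod_eq_one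
    intro i _
    rw [hrotinv, hM, if_neg, if_pos (sub_add_cancel i 1), zero_add]
    intro hh
    exact h10 (sub_eq_self.mp hh)
  rw [hprod1, hprod2]
  have hs : Equiv.Perm.sign c⁻¹ = (-1 : ℤˣ) ^ (k+1) := by
    rw [Equiv.Perm.sign_inv, hc, sign_finRotate]; rfl
  rw [hs, Equiv.Perm.sign_one]
  simp [Units.smul_def]

open Equiv Matrix Finset in
private lemma det_even_case (s : ℕ) :
    ((1 : Matrix (Fin (2*s+4)) (Fin (2*s+4)) ℤ)
      + (finRotate (2*s+4) * finRotate (2*s+4)).permMatrix ℤ).det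
      = (1 + (-1 : ℤ) ^ (s+1)) ^ 2 := by
  set c := finRotate (2*s+4) with hc
  set M := (1 : Matrix (Fin (2*s+4)) (Fin (2*s+4)) ℤ) + (c * c).permMatrix ℤ with hMdef
  have hinj : Function.Injective
      (fun p : Fin (s+2) × Fin 2 => (⟨2 * p.1.val + p.2.val, by omega⟩ : Fin (2*s+4))) := by
    rintro ⟨i, b⟩ ⟨j, b'⟩ h
    simp only [Fin.mk.injEq] at h
    have := i.isLt; have := j.isLt; have := b.isLt; have := b'.isLt
    rw [Prod.mk.injEq]
    exact ⟨Fin.ext (by omega), Fin.ext (by omega)⟩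
  have hbij : Function.Bijective
      (fun p : Fin (s+2) × Fin 2 => (⟨2 * p.1.val + p.2.val, by omega⟩ : Fin (2*s+4))) := by
    rw [Fintype.bijective_iff_injective_and_card]
    refine ⟨hinj, by simp; ring⟩
  set e := Equiv.ofBijective _ hbij with he
  have heval : ∀ (i : Fin (s+2)) (b : Fin 2), (e (i, b)).val = 2 * i.val + b.val := fun _ _ => rfl
  have hplus2 : ∀ x : Fin (2*s+4), ((c * c) x).val = (x.val + 2) % (2*s+4) := by
    intro x
    have h1 : ((1 : Fin (2*s+4))).val = 1 := by
      rw [Fin.val_one']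
      exact Nat.mod_eq_of_lt (by omega)
    rw [Equiv.Perm.mul_apply, hc, finRotate_succ_apply, finRotate_succ_apply,
      Fin.val_add, Fin.val_add, h1]
    rcases Nat.lt_or_ge (x.val + 1) (2*s+4) with hlt | hge
    · rw [Nat.mod_eq_of_lt hlt]
    · have hx := x.isLt
      have hxe : x.val + 1 = 2*s+4 := by omega
      rw [hxe, Nat.mod_self]
      have : (0 + 1) % (2*s+4) = 1 := Nat.mod_eq_of_lt (by omega)
      rw [this]
      have : x.val + 2 = (2*s+4) + 1 := by omega
      rw [this, Nat.add_mod_left]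
      exact (Nat.mod_eq_of_lt (by omega)).symm
  have hsub : M.submatrix e e
      = blockDiagonal (fun _ : Fin 2 =>
          (1 : Matrix (Fin (s+2)) (Fin (s+2)) ℤ) + (finRotate (s+2)).permMatrix ℤ) := by
    ext ⟨i, b⟩ ⟨j, b'⟩
    rw [Matrix.submatrix_apply, hMdef, one_add_perm_apply, Matrix.blockDiagonal_apply]
    have h1 : (e (i, b) = e (j, b')) ↔ (i = j ∧ b = b') := by
      rw [Equiv.apply_eq_iff_eq, Prod.mk.injEq]
    have h2 : ((c * c) (e (i, b)) = e (j, b')) ↔ (b = b' ∧ i + 1 = j) := by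
      have hb1 : ((1 : Fin (s+2))).val = 1 := by
        rw [Fin.val_one']; exact Nat.mod_eq_of_lt (by omega)
      have hL : ((c * c) (e (i, b)) = e (j, b'))
          ↔ (2*i.val + b.val + 2) % (2*s+4) = 2*j.val + b'.val := by
        rw [Fin.ext_iff, hplus2, heval, heval]
      have hR : (b = b' ∧ i + 1 = j)
          ↔ (b.val = b'.val ∧ (i.val + 1) % (s+2) = j.val) := by
        rw [Fin.ext_iff, Fin.ext_iff, Fin.val_add, hb1]
      rw [hL, hR]
      have := i.isLt; have := j.isLt; have := b.isLt; have := b'.isLt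
      rcases Nat.lt_or_ge (i.val + 1) (s+2) with hlt | hge
      · rw [Nat.mod_eq_of_lt (show 2*i.val + b.val + 2 < 2*s+4 by omega),
          Nat.mod_eq_of_lt hlt]
        omega
      · have hie : i.val + 1 = s + 2 := by omega
        rw [show 2*i.val + b.val + 2 = (2*s+4) + b.val by omega, Nat.add_mod_left,
          Nat.mod_eq_of_lt (show b.val < 2*s+4 by omega), hie, Nat.mod_self]
        omega
    rw [if_congr h1 rfl rfl, if_congr h2 rfl rfl, one_add_perm_apply, finRotate_succ_apply]
    by_cases hb : b = b'
    · by_cases hij : i = j <;> simp [hb, hij]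
    · simp [hb, fun h : b = b' => hb h]
  have hd := Matrix.det_submatrix_equiv_self e M
  rw [hsub] at hd
  rw [← hd, Matrix.det_blockDiagonal]
  rw [Finset.prod_const, det_one_add_rotate s]
  simp

open Equiv Matrix Finset Fin.CommRing in
private lemma det_odd_case (s : ℕ) :
    ((1 : Matrix (Fin (2*s+3)) (Fin (2*s+3)) ℤ)
      + (finRotate (2*s+3) * finRotate (2*s+3)).permMatrix ℤ).det = 2 := by
  set c := finRotate (2*s+3) with hc
  set M := (1 : Matrix (Fin (2*s+3)) (Fin (2*s+3)) ℤ) + (c * c).permMatrix ℤ with hMdef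
  have inj2 : Function.Injective (fun x : Fin (2*s+3) => x + x) := by
    intro x y h
    have hval : (x.val + x.val) % (2*s+3) = (y.val + y.val) % (2*s+3) := by
      rw [Fin.ext_iff, Fin.val_add, Fin.val_add] at h; exact h
    have hm : 2 * x.val ≡ 2 * y.val [MOD 2*s+3] := by
      show (2 * x.val) % (2*s+3) = (2 * y.val) % (2*s+3)
      rw [two_mul x.val, two_mul y.val]; exact hval
    have hco : Nat.gcd (2*s+3) 2 = 1 :=
      Nat.coprime_two_right.mpr ⟨s+1, by ring⟩
    have hxy := Nat.ModEq.cancel_left_of_coprime hco hm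
    have hx := x.isLt; have hy := y.isLt
    have h2 : x.val % (2*s+3) = y.val % (2*s+3) := hxy
    rw [Nat.mod_eq_of_lt hx, Nat.mod_eq_of_lt hy] at h2
    exact Fin.ext h2
  set e2 := Equiv.ofBijective _ (Finite.injective_iff_bijective.mp inj2) with he2
  have he2a : ∀ a : Fin (2*s+3), e2 a = a + a := fun _ => rfl
  have happ : ∀ a : Fin (2*s+3), (c * c) a = a + 1 + 1 := by
    intro a
    rw [Equiv.Perm.mul_apply, hc, finRotate_succ_apply, finRotate_succ_apply]
  have hsub : M.submatrix e2 e2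
      = (1 : Matrix (Fin (2*s+3)) (Fin (2*s+3)) ℤ) + (finRotate (2*s+3)).permMatrix ℤ := by
    ext x y
    rw [Matrix.submatrix_apply, hMdef, one_add_perm_apply, one_add_perm_apply,
      finRotate_succ_apply]
    have h1 : (e2 x = e2 y) ↔ x = y := Equiv.apply_eq_iff_eq e2
    have h2 : ((c * c) (e2 x) = e2 y) ↔ x + 1 = y := by
      rw [happ, he2a, he2a]
      constructor
      · intro h
        apply inj2
        show (x + 1) + (x + 1) = y + y
        rw [show (x+1) + (x+1) = x + x + 1 + 1 from by ring]
        exact h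
      · rintro rfl; ring
    rw [if_congr h1 rfl rfl, if_congr h2 rfl rfl]
  have hdet := Matrix.det_submatrix_equiv_self e2 M
  rw [hsub] at hdet
  rw [← hdet, det_one_add_rotate (2*s+1)]
  have : ((-1 : ℤ)) ^ (2*s+1+1) = 1 := Even.neg_one_pow ⟨s+1, by ring⟩
  rw [this]; norm_num

open Equiv Matrix Finset Fin.CommRing in
private lemma det_adj_helper (j : ℕ) :
    ((cycleGraph (j+3)).adjMatrix ℤ).det
      = (-1 : ℤ)^(j+2) *
        ((1 : Matrix (Fin (j+3)) (Fin (j+3)) ℤ)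
          + (finRotate (j+3) * finRotate (j+3)).permMatrix ℤ).det := by
  set c := finRotate (j+3) with hc
  set M := (1 : Matrix (Fin (j+3)) (Fin (j+3)) ℤ) + (c * c).permMatrix ℤ with hMdef
  have h10 : (1 : Fin (j+3)) ≠ 0 := one_ne_zero
  have hrotinv : ∀ x : Fin (j+3), c⁻¹ x = x - 1 := by
    intro x
    rw [hc, Equiv.Perm.inv_def, Equiv.symm_apply_eq, finRotate_succ_apply, sub_add_cancel]
  have h2ne : (1 + 1 : Fin (j+3)) ≠ 0 := by
    intro hh
    rw [Fin.ext_iff, Fin.val_add, Fin.val_one', Fin.val_zero] at hh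
    have e1 : (1 : ℕ) % (j+3) = 1 := Nat.mod_eq_of_lt (by omega)
    rw [e1] at hh
    have e2 : (1 + 1 : ℕ) % (j+3) = 2 := Nat.mod_eq_of_lt (by omega)
    rw [e2] at hh
    omega
  have hA : (cycleGraph (j+3)).adjMatrix ℤ = M.submatrix ⇑(c⁻¹) id := by
    ext u v
    rw [Matrix.submatrix_apply, id_eq, hMdef, one_add_perm_apply, hrotinv,
      SimpleGraph.adjMatrix_apply]
    have happ : (c * c) (u - 1) = u + 1 := by
      rw [Equiv.Perm.mul_apply, hc, finRotate_succ_apply, finRotate_succ_apply,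
        sub_add_cancel]
    rw [happ]
    have hadj : (cycleGraph (j+3)).Adj u v ↔ (u - 1 = v ∨ u + 1 = v) := by
      rw [cycleGraph_adj]
      constructor
      · rintro (h | h)
        · left; rw [sub_eq_iff_eq_add] at h ⊢; rw [h]; exact add_comm _ _
        · right; rw [sub_eq_iff_eq_add] at h; rw [h]; ring
      · rintro (h | h)
        · left; rw [← h]; ring
        · right; rw [← h]; ring
    by_cases h1 : u - 1 = v
    · by_cases h2 : u + 1 = v
      · exfalso
        apply h2ne
        have h3 : u - 1 = u + 1 := by rw [h1, h2]
        have h4 : u = u + (1 + 1) := by rw [← add_assoc, ← h3, sub_add_cancel]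
        exact (left_eq_add.mp h4)
      · rw [if_pos (hadj.mpr (Or.inl h1)), if_pos h1, if_neg h2]; norm_num
    · by_cases h2 : u + 1 = v
      · rw [if_pos (hadj.mpr (Or.inr h2)), if_neg h1, if_pos h2]; norm_num
      · rw [if_neg (fun h => (hadj.mp h).elim h1 h2), if_neg h1, if_neg h2]
        norm_num
  rw [hA, Matrix.det_permute]
  congr 1
  rw [Equiv.Perm.sign_inv, hc, sign_finRotate]
  push_cast
  ring

theorem det_adjMatrix_cycle (n : ℕ) (hn : 3 ≤ n) :
    ((cycleGraph n).adjMatrix ℤ).det =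
      if Odd n then 2
      else if n % 4 = 2 then -4
      else 0 := by
  rcases Nat.even_or_odd n with he | ho
  · obtain ⟨s, rfl⟩ : ∃ s, n = 2*s+4 := by
      obtain ⟨t, ht⟩ := he; exact ⟨t - 2, by omega⟩
    have hodd : ¬ Odd (2*s+4) := by
      intro h; rw [Nat.odd_iff] at h; omega
    rw [if_neg hodd]
    rw [show 2*s+4 = 2*s+1+3 from by ring]
    rw [det_adj_helper (2*s+1)]
    rw [show 2*s+1+3 = 2*s+4 from by ring]
    rw [det_even_case s]
    have hsign : (-1:ℤ)^(2*s+1+2) = -1 := Odd.neg_one_pow ⟨s+1, by ring⟩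
    rw [hsign]
    rcases Nat.even_or_odd s with hs | hs
    · obtain ⟨t, rfl⟩ := hs
      rw [if_neg (by omega)]
      have : (-1:ℤ)^(t+t+1) = -1 := Odd.neg_one_pow ⟨t, by ring⟩
      rw [this]; ring
    · obtain ⟨t, rfl⟩ := hs
      rw [if_pos (by omega)]
      have : (-1:ℤ)^(2*t+1+1) = 1 := Even.neg_one_pow ⟨t+1, by ring⟩
      rw [this]; ring
  · obtain ⟨s, rfl⟩ : ∃ s, n = 2*s+3 := by
      obtain ⟨t, ht⟩ := ho; exact ⟨t - 1, by omega⟩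
    rw [if_pos ⟨s+1, by ring⟩]
    rw [det_adj_helper (2*s), det_odd_case s]
    have hsign : (-1:ℤ)^(2*s+2) = 1 := Even.neg_one_pow ⟨s+1, by ring⟩
    rw [hsign]; ring
end

section
/- Let m ≥ 1 and n ≥ 1 be integers. Then the double product ∏_{i=1}^{m} ∏_{j=1}^{n} (2 cos(2 i π / m) + 2 cos(2 j π / n)) equals 4^gcd(m,n) if both m and n are odd, and equals 0 otherwise. -/
open Real Finset

lemma aux_prod_range_sub {n : ℕ} (hn : 0 < n) {ω : ℂ} (hω : IsPrimitiveRoot ω n)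
    (x α : ℂ) : ∏ j ∈ Finset.range n, (x - α * ω ^ j) = x ^ n - α ^ n := by
  have base : ∀ y : ℂ, ∏ j ∈ Finset.range n, (y - ω ^ j) = y ^ n - 1 := by
    intro y
    have himg : Polynomial.nthRootsFinset n (1 : ℂ) = (Finset.range n).image (ω ^ ·) := by
      ext μ
      rw [Polynomial.mem_nthRootsFinset hn (1 : ℂ)]
      simp only [Finset.mem_image, Finset.mem_range]
      constructor
      · intro h
        haveI : NeZero n := ⟨hn.ne'⟩
        obtain ⟨i, hi, hieq⟩ := hω.eq_pow_of_pow_eq_one (ξ := μ) h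
        exact ⟨i, hi, hieq⟩
      · rintro ⟨i, -, rfl⟩
        rw [← pow_mul, mul_comm, pow_mul, hω.pow_eq_one, one_pow]
    have := congrArg (Polynomial.eval y) (Polynomial.X_pow_sub_one_eq_prod hn hω)
    simp only [Polynomial.eval_sub, Polynomial.eval_pow, Polynomial.eval_X,
      Polynomial.eval_one, Polynomial.eval_prod, Polynomial.eval_C] at this
    rw [this, himg, Finset.prod_image (fun i hi j hj h => hω.injOn_pow
      (by simpa using hi) (by simpa using hj) h)]
  rcases eq_or_ne α 0 with rfl | hα
  · simp [zero_pow hn.ne']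
  · have : ∀ j ∈ Finset.range n, x - α * ω ^ j = α * (x / α - ω ^ j) := by
      intro j _; field_simp
    rw [Finset.prod_congr rfl this, Finset.prod_mul_distrib, Finset.prod_const,
      Finset.card_range, base, div_pow, mul_sub, mul_one,
      mul_div_cancel₀ _ (pow_ne_zero n hα)]

lemma aux_prod_period {η : ℂ} {p : ℕ} (h : η ^ p = 1) (d : ℕ) :
    ∏ i ∈ Finset.range (d * p), (1 + η ^ i) = (∏ i ∈ Finset.range p, (1 + η ^ i)) ^ d := by
  induction d with
  | zero => simp
  | succ k ih =>
    rw [Nat.succ_mul, Finset.prod_range_add, ih, pow_succ]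
    congr 1
    refine Finset.prod_congr rfl fun x _ => ?_
    rw [pow_add, pow_mul', h, one_pow, one_mul]

lemma aux_Icc_range {n : ℕ} (hn : 0 < n) (f : ℕ → ℂ) (hf : f n = f 0) :
    ∏ j ∈ Finset.Icc 1 n, f j = ∏ j ∈ Finset.range n, f j := by
  have h1 : Finset.Icc 1 n = insert n (Finset.Ico 1 n) := (Finset.Ico_insert_right hn).symm
  have h2 : Finset.range n = insert 0 (Finset.Ico 1 n) := by
    ext x; simp only [Finset.mem_range, Finset.mem_insert, Finset.mem_Ico]; omega
  rw [h1, h2, Finset.prod_insert (by simp), Finset.prod_insert (by simp), hf]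

lemma aux_prod_zpow_one {m : ℕ} (hm : 0 < m) (hmo : Odd m) {ζ : ℂ} (hζ : ζ ^ m = 1) :
    ∏ i ∈ Finset.Icc 1 m, ζ ^ i = 1 := by
  rw [Finset.prod_pow_eq_pow_sum]
  obtain ⟨k, hk⟩ := hmo
  have he : ∑ i ∈ Finset.Icc 1 m, i = ∑ i ∈ Finset.range (m + 1), i := by
    have : Finset.range (m + 1) = insert 0 (Finset.Icc 1 m) := by
      ext x; simp only [Finset.mem_range, Finset.mem_insert, Finset.mem_Icc]; omega
    rw [this, Finset.sum_insert (by simp), zero_add]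
  have hg : (∑ i ∈ Finset.range (m + 1), i) * 2 = (m + 1) * m :=
    (Finset.sum_range_id_mul_two (m + 1)).trans (by simp)
  have hs : ∑ i ∈ Finset.Icc 1 m, i = (k + 1) * m := by
    have h2 : (∑ i ∈ Finset.Icc 1 m, i) * 2 = ((k + 1) * m) * 2 := by
      rw [he, hg]; subst hk; ring
    omega
  rw [hs, pow_mul', hζ, one_pow]

lemma aux_key (m n : ℕ) (hm : 0 < m) (hn : 0 < n) (hmo : Odd m) (hno : Odd n) :
    ∏ i ∈ Finset.Icc 1 m, ∏ j ∈ Finset.Icc 1 n,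
      (2 * Complex.cos (2 * (i : ℂ) * (π : ℂ) / (m : ℂ)) +
        2 * Complex.cos (2 * (j : ℂ) * (π : ℂ) / (n : ℂ))) =
      4 ^ Nat.gcd m n := by
  set d := Nat.gcd m n with hd
  have hdpos : 0 < d := Nat.gcd_pos_of_pos_left n hm
  have hζprim := Complex.isPrimitiveRoot_exp m hm.ne'
  have hωprim := Complex.isPrimitiveRoot_exp n hn.ne'
  set ζ : ℂ := Complex.exp (2 * π * Complex.I / m) with hζdef
  set ω : ℂ := Complex.exp (2 * π * Complex.I / n) with hωdef
  have hzpow : ∀ (N : ℕ) (i : ℕ),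
      Complex.exp (2 * (i : ℂ) * (π : ℂ) / (N : ℂ) * Complex.I) =
        Complex.exp (2 * π * Complex.I / N) ^ i := by
    intro N i
    rw [← Complex.exp_nat_mul]
    congr 1
    ring
  have hζne : ζ ≠ 0 := Complex.exp_ne_zero _
  have hωne : ω ≠ 0 := Complex.exp_ne_zero _
  -- factor each term
  have hfac : ∀ i ∈ Finset.Icc 1 m, ∀ j ∈ Finset.Icc 1 n,
      2 * Complex.cos (2 * (i : ℂ) * (π : ℂ) / (m : ℂ)) +
        2 * Complex.cos (2 * (j : ℂ) * (π : ℂ) / (n : ℂ)) =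
      (ζ ^ i + ω ^ j) * (1 + ζ ^ i * ω ^ j) * (ζ ^ i * ω ^ j)⁻¹ := by
    intro i _ j _
    rw [Complex.two_cos, Complex.two_cos, hzpow m i, hzpow n j,
      neg_mul, neg_mul, Complex.exp_neg, Complex.exp_neg, hzpow m i, hzpow n j,
      ← hζdef, ← hωdef]
    have ha : ζ ^ i ≠ 0 := pow_ne_zero _ hζne
    have hb : ω ^ j ≠ 0 := pow_ne_zero _ hωne
    field_simp
    ring
  rw [Finset.prod_congr rfl fun i hi => Finset.prod_congr rfl fun j hj => hfac i hi j hj]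
  simp only [Finset.prod_mul_distrib, Finset.prod_inv_distrib]
  -- the primitive root η = ζ ^ n of order m' = m / d
  set m' := m / d with hm'
  have hmdm' : m = d * m' := (Nat.mul_div_cancel' (Nat.gcd_dvd_left m n)).symm
  have hm'pos : 0 < m' := Nat.div_pos (Nat.le_of_dvd hm (Nat.gcd_dvd_left m n)) hdpos
  have hm'odd : Odd m' := (Nat.odd_mul.mp (hmdm' ▸ hmo)).2
  have hη : IsPrimitiveRoot (ζ ^ n) m' := by
    have h1 : IsPrimitiveRoot (ζ ^ d) m' := hζprim.pow hm hmdm'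
    have h2 : IsPrimitiveRoot ((ζ ^ d) ^ (n / d)) m' :=
      h1.pow_of_coprime _ (Nat.coprime_div_gcd_div_gcd hdpos).symm
    rwa [← pow_mul, Nat.mul_div_cancel' (Nat.gcd_dvd_right m n)] at h2
  -- the common outer product
  have houter : ∏ i ∈ Finset.Icc 1 m, (1 + (ζ ^ n) ^ i) = 2 ^ d := by
    rw [aux_Icc_range hm (fun i => 1 + (ζ ^ n) ^ i)
      (by show (1 : ℂ) + (ζ ^ n) ^ m = 1 + (ζ ^ n) ^ 0
          rw [pow_zero, pow_right_comm, hζprim.pow_eq_one, one_pow])]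
    have hstep : ∏ i ∈ Finset.range m', (1 + (ζ ^ n) ^ i) = 2 := by
      have : ∀ i ∈ Finset.range m', (1 : ℂ) + (ζ ^ n) ^ i = 1 - (-1) * (ζ ^ n) ^ i := by
        intro i _; ring
      rw [Finset.prod_congr rfl this, aux_prod_range_sub hm'pos hη 1 (-1),
        hm'odd.neg_one_pow, one_pow, sub_neg_eq_add]
      norm_num
    calc ∏ i ∈ Finset.range m, (1 + (ζ ^ n) ^ i)
        = ∏ i ∈ Finset.range (d * m'), (1 + (ζ ^ n) ^ i) := by rw [← hmdm']
      _ = (∏ i ∈ Finset.range m', (1 + (ζ ^ n) ^ i)) ^ d := aux_prod_period hη.pow_eq_one d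
      _ = 2 ^ d := by rw [hstep]
  -- part A
  have hA : ∏ i ∈ Finset.Icc 1 m, ∏ j ∈ Finset.Icc 1 n, (ζ ^ i + ω ^ j) = 2 ^ d := by
    have hinner : ∀ i ∈ Finset.Icc 1 m,
        ∏ j ∈ Finset.Icc 1 n, (ζ ^ i + ω ^ j) = 1 + (ζ ^ n) ^ i := by
      intro i _
      rw [aux_Icc_range hn (fun j => ζ ^ i + ω ^ j)
        (by show ζ ^ i + ω ^ n = ζ ^ i + ω ^ 0; rw [hωprim.pow_eq_one, pow_zero])]
      have : ∀ j ∈ Finset.range n, ζ ^ i + ω ^ j = ζ ^ i - (-1) * ω ^ j := by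
        intro j _; ring
      rw [Finset.prod_congr rfl this, aux_prod_range_sub hn hωprim (ζ ^ i) (-1),
        hno.neg_one_pow, sub_neg_eq_add, pow_right_comm, add_comm]
    rw [Finset.prod_congr rfl hinner, houter]
  -- part B
  have hB : ∏ i ∈ Finset.Icc 1 m, ∏ j ∈ Finset.Icc 1 n, (1 + ζ ^ i * ω ^ j) = 2 ^ d := by
    have hinner : ∀ i ∈ Finset.Icc 1 m,
        ∏ j ∈ Finset.Icc 1 n, (1 + ζ ^ i * ω ^ j) = 1 + (ζ ^ n) ^ i := by
      intro i _
      rw [aux_Icc_range hn (fun j => 1 + ζ ^ i * ω ^ j)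
        (by show (1 : ℂ) + ζ ^ i * ω ^ n = 1 + ζ ^ i * ω ^ 0
            rw [hωprim.pow_eq_one, pow_zero])]
      have : ∀ j ∈ Finset.range n, (1 : ℂ) + ζ ^ i * ω ^ j = 1 - (-(ζ ^ i)) * ω ^ j := by
        intro j _; ring
      rw [Finset.prod_congr rfl this, aux_prod_range_sub hn hωprim 1 (-(ζ ^ i)),
        hno.neg_pow, one_pow, sub_neg_eq_add, pow_right_comm]
    rw [Finset.prod_congr rfl hinner, houter]
  -- part D
  have hcardn : (Finset.Icc 1 n).card = n := by rw [Nat.card_Icc]; omega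
  have hD1 : ∏ i ∈ Finset.Icc 1 m, ∏ _j ∈ Finset.Icc 1 n, ζ ^ i = 1 := by
    calc ∏ i ∈ Finset.Icc 1 m, ∏ _j ∈ Finset.Icc 1 n, ζ ^ i
        = ∏ i ∈ Finset.Icc 1 m, (ζ ^ i) ^ n := by
          refine Finset.prod_congr rfl fun i _ => ?_
          rw [Finset.prod_const, hcardn]
      _ = (∏ i ∈ Finset.Icc 1 m, ζ ^ i) ^ n := Finset.prod_pow _ _ _
      _ = 1 := by rw [aux_prod_zpow_one hm hmo hζprim.pow_eq_one, one_pow]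
  have hD2 : ∏ _i ∈ Finset.Icc 1 m, ∏ j ∈ Finset.Icc 1 n, ω ^ j = 1 := by
    have h1 : ∀ i ∈ Finset.Icc 1 m, ∏ j ∈ Finset.Icc 1 n, ω ^ j = 1 :=
      fun i _ => aux_prod_zpow_one hn hno hωprim.pow_eq_one
    rw [Finset.prod_congr rfl h1]
    simp
  rw [hA, hB, hD1, hD2, one_mul, inv_one, mul_one, ← mul_pow]
  norm_num

theorem prod_torus_eigenvalues (m n : ℕ) (hm : 1 ≤ m) (hn : 1 ≤ n) :
    (∏ i ∈ Finset.Icc 1 m, ∏ j ∈ Finset.Icc 1 n,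
        (2 * Real.cos (2 * i * π / m) + 2 * Real.cos (2 * j * π / n))) =
      if Odd m ∧ Odd n then (4 : ℝ) ^ Nat.gcd m n else 0 := by
  have hmR : (m : ℝ) ≠ 0 := by positivity
  have hnR : (n : ℝ) ≠ 0 := by positivity
  by_cases h : Odd m ∧ Odd n
  · rw [if_pos h]
    apply Complex.ofReal_injective
    push_cast
    exact aux_key m n hm hn h.1 h.2
  · rw [if_neg h]
    rcases (Decidable.not_and_iff_or_not.mp h) with hme | hne
    · obtain ⟨k, hk⟩ := (Nat.not_odd_iff_even.mp hme)
      rw [← two_mul] at hk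
      have hk1 : 1 ≤ k := by omega
      apply Finset.prod_eq_zero (Finset.mem_Icc.mpr ⟨hk1, by omega⟩ : k ∈ Finset.Icc 1 m)
      apply Finset.prod_eq_zero (Finset.mem_Icc.mpr ⟨hn, le_refl n⟩ : n ∈ Finset.Icc 1 n)
      have h1 : 2 * (k : ℝ) * π / (m : ℝ) = π := by
        rw [hk]; push_cast; field_simp
      have h2 : 2 * (n : ℝ) * π / (n : ℝ) = 2 * π := by field_simp
      rw [h1, h2, Real.cos_pi, Real.cos_two_pi]; ring
    · obtain ⟨k, hk⟩ := (Nat.not_odd_iff_even.mp hne)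
      rw [← two_mul] at hk
      have hk1 : 1 ≤ k := by omega
      apply Finset.prod_eq_zero (Finset.mem_Icc.mpr ⟨hm, le_refl m⟩ : m ∈ Finset.Icc 1 m)
      apply Finset.prod_eq_zero (Finset.mem_Icc.mpr ⟨hk1, by omega⟩ : k ∈ Finset.Icc 1 n)
      have h1 : 2 * (m : ℝ) * π / (m : ℝ) = 2 * π := by field_simp
      have h2 : 2 * (k : ℝ) * π / (n : ℝ) = π := by
        rw [hk]; push_cast; field_simp
      rw [h1, h2, Real.cos_pi, Real.cos_two_pi]; ring
end

section
/- Let m > 1 and n ≥ 1 be integers. Then the double product ∏_{i=1}^{m-1} ∏_{j=1}^{n} (2 cos(i π / m) + 2 cos(2 j π / n)) equals m if n is odd and gcd(m,n) = 1; equals (-1)^(m-1) · m^2 if n is even and gcd(m, n/2) = 1; and equals 0 otherwise. -/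
open Real Finset Polynomial

lemma prod_range_X_sub_C {n : ℕ} (hn : 0 < n) {ζ : ℂ} (h : IsPrimitiveRoot ζ n) :
    ∏ i ∈ Finset.range n, (Polynomial.X - Polynomial.C (ζ ^ i)) = Polynomial.X ^ n - 1 := by
  rw [Polynomial.X_pow_sub_one_eq_prod hn h]
  haveI : NeZero n := ⟨hn.ne'⟩
  refine Finset.prod_nbij (fun i => ζ ^ i) ?_ ?_ ?_ ?_
  · intro i _
    rw [Polynomial.mem_nthRootsFinset hn, ← pow_mul, mul_comm, pow_mul, h.pow_eq_one, one_pow]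
  · intro i hi j hj hij
    exact h.pow_inj (Finset.mem_range.mp hi) (Finset.mem_range.mp hj) hij
  · intro μ hμ
    obtain ⟨i, hlt, rfl⟩ := h.eq_pow_of_pow_eq_one ((Polynomial.mem_nthRootsFinset hn 1).mp hμ)
    exact ⟨i, Finset.mem_coe.mpr (Finset.mem_range.mpr hlt), rfl⟩
  · intro i _; rfl

lemma prod_range_eval {n : ℕ} (hn : 0 < n) {ζ : ℂ} (h : IsPrimitiveRoot ζ n) (x : ℂ) :
    ∏ i ∈ Finset.range n, (x - ζ ^ i) = x ^ n - 1 := by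
  have := congrArg (Polynomial.eval x) (prod_range_X_sub_C hn h)
  simpa [Polynomial.eval_prod] using this

lemma lemA {m : ℕ} (hm : 0 < m) {v : ℂ} (hv : IsPrimitiveRoot v m) :
    ∏ i ∈ Finset.Icc 1 (m-1), (Polynomial.X - Polynomial.C (v ^ i)) =
      ∑ k ∈ Finset.range m, (Polynomial.X : Polynomial ℂ) ^ k := by
  have h0 : (Polynomial.X - Polynomial.C (1:ℂ)) ≠ 0 := Polynomial.X_sub_C_ne_zero 1
  apply mul_left_cancel₀ h0
  have hins : Finset.range m = insert 0 (Finset.Icc 1 (m-1)) := by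
    ext x; simp [Finset.mem_Icc, Finset.mem_range]; omega
  have h1 : (Polynomial.X - Polynomial.C (1:ℂ)) * ∏ i ∈ Finset.Icc 1 (m-1),
      (Polynomial.X - Polynomial.C (v ^ i)) = Polynomial.X ^ m - 1 := by
    rw [← prod_range_X_sub_C hm hv, hins, Finset.prod_insert (by simp)]
    simp
  rw [h1, ← geom_sum_mul (Polynomial.X : Polynomial ℂ) m]
  rw [Polynomial.C_1]
  ring

lemma lemA_eval {m : ℕ} (hm : 0 < m) {v : ℂ} (hv : IsPrimitiveRoot v m) (x : ℂ) :
    ∏ i ∈ Finset.Icc 1 (m-1), (x - v ^ i) = ∑ k ∈ Finset.range m, x ^ k := by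
  have := congrArg (Polynomial.eval x) (lemA hm hv)
  simpa [Polynomial.eval_prod, Polynomial.eval_finset_sum] using this

lemma evenProd {m : ℕ} (hm : 0 < m) {v : ℂ} (hv : IsPrimitiveRoot v m) :
    ∏ i ∈ Finset.Icc 1 (m-1), (1 - v ^ i) = (m : ℂ) := by
  have := lemA_eval hm hv 1
  simpa using this

lemma geom_two {α : Type*} [CommRing α] (x : α) (m : ℕ) :
    ∑ k ∈ Finset.range (2*m), x ^ k = (1 + x) * ∑ k ∈ Finset.range m, x ^ (2*k) := by
  induction m with
  | zero => simp
  | succ p ih =>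
    have h : 2*(p+1) = 2*p+1+1 := by ring
    rw [h, Finset.sum_range_succ, Finset.sum_range_succ, ih, Finset.sum_range_succ]
    ring

lemma oddProd {m : ℕ} (hm : 0 < m) {v : ℂ} (hv : IsPrimitiveRoot v (2*m)) :
    (∏ i ∈ Finset.Icc 1 (m-1), (1 + v ^ i)) * (∏ i ∈ Finset.Icc 1 (m-1), (1 + (v⁻¹) ^ i)) = (m : ℂ) := by
  have hvm : v ^ m = -1 := by
    have h2 : v ^ m * v ^ m = 1 := by rw [← pow_add]; rw [show m + m = 2*m by ring]; exact hv.pow_eq_one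
    rcases mul_self_eq_one_iff.mp h2 with h | h
    · exact absurd h (hv.pow_ne_one_of_pos_of_lt hm.ne' (by omega))
    · exact h
  -- polynomial identity
  have P2m := lemA (show 0 < 2*m by omega) hv
  have hsplit : Finset.Icc 1 (2*m-1) = Finset.Icc 1 (m-1) ∪ Finset.Icc m (2*m-1) := by
    ext x; simp only [Finset.mem_Icc, Finset.mem_union]; omega
  have hdisj : Disjoint (Finset.Icc 1 (m-1)) (Finset.Icc m (2*m-1)) := by
    simp only [Finset.disjoint_left, Finset.mem_Icc]; omega
  have h2 : Finset.Icc m (2*m-1) = insert m (Finset.Icc (m+1) (2*m-1)) := by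
    ext x; simp only [Finset.mem_Icc, Finset.mem_insert]; omega
  have hre : ∏ i ∈ Finset.Icc (m+1) (2*m-1), (Polynomial.X - Polynomial.C (v ^ i)) =
      ∏ i ∈ Finset.Icc 1 (m-1), (Polynomial.X - Polynomial.C ((v⁻¹) ^ i)) := by
    refine Finset.prod_nbij' (fun i => 2*m - i) (fun i => 2*m - i) ?_ ?_ ?_ ?_ ?_
    · intro a ha; simp only [Finset.mem_Icc] at *; omega
    · intro a ha; simp only [Finset.mem_Icc] at *; omega
    · intro a ha; simp only [Finset.mem_Icc] at ha; show 2*m - (2*m - a) = a; omega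
    · intro a ha; simp only [Finset.mem_Icc] at ha; show 2*m - (2*m - a) = a; omega
    · intro a ha
      simp only [Finset.mem_Icc] at ha
      have key : v ^ (2*m - a) * v ^ a = 1 := by
        rw [← pow_add, show 2*m - a + a = 2*m by omega, hv.pow_eq_one]
      show Polynomial.X - Polynomial.C (v ^ a) = Polynomial.X - Polynomial.C ((v⁻¹) ^ (2*m - a))
      rw [inv_pow, inv_eq_of_mul_eq_one_right key]
  rw [hsplit, Finset.prod_union hdisj, h2, Finset.prod_insert (by simp), hvm, geom_two, hre] at P2m
  have hXne : ((1:Polynomial ℂ) + Polynomial.X) ≠ 0 := by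
    have := Polynomial.X_sub_C_ne_zero (-1 : ℂ)
    simpa [sub_neg_eq_add, add_comm] using this
  have key : (∏ i ∈ Finset.Icc 1 (m-1), (Polynomial.X - Polynomial.C (v ^ i))) *
      (∏ i ∈ Finset.Icc 1 (m-1), (Polynomial.X - Polynomial.C ((v⁻¹) ^ i))) =
      ∑ k ∈ Finset.range m, (Polynomial.X : Polynomial ℂ) ^ (2*k) := by
    apply mul_left_cancel₀ hXne
    calc ((1:Polynomial ℂ) + Polynomial.X) * _ =
        (∏ i ∈ Finset.Icc 1 (m-1), (Polynomial.X - Polynomial.C (v ^ i))) *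
        ((Polynomial.X - Polynomial.C (-1:ℂ)) *
          ∏ i ∈ Finset.Icc 1 (m-1), (Polynomial.X - Polynomial.C ((v⁻¹) ^ i))) := by
          simp only [map_neg, map_one, sub_neg_eq_add]; ring
      _ = (1 + Polynomial.X) * ∑ k ∈ Finset.range m, (Polynomial.X : Polynomial ℂ) ^ (2*k) := P2m
  have keyev := congrArg (Polynomial.eval (-1 : ℂ)) key
  simp only [Polynomial.eval_mul, Polynomial.eval_prod, Polynomial.eval_sub, Polynomial.eval_X,
    Polynomial.eval_C, Polynomial.eval_finset_sum, Polynomial.eval_pow, pow_mul, neg_one_sq,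
    one_pow, Finset.sum_const, Finset.card_range, nsmul_eq_mul, mul_one] at keyev
  have hneg : ∀ (w : ℂ), ∏ i ∈ Finset.Icc 1 (m-1), (-1 - w ^ i) =
      (-1:ℂ)^(m-1) * ∏ i ∈ Finset.Icc 1 (m-1), (1 + w ^ i) := by
    intro w
    have : ∀ a : ℂ, -1 - a = -1 * (1 + a) := fun a => by ring
    simp_rw [this, Finset.prod_mul_distrib, Finset.prod_const, Nat.card_Icc,
      Nat.add_sub_cancel]
  rw [hneg v, hneg v⁻¹] at keyev
  have hsq : ((-1:ℂ)^(m-1)) * ((-1:ℂ)^(m-1)) = 1 := by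
    rw [← pow_add]; exact Even.neg_one_pow ⟨m-1, rfl⟩
  calc (∏ i ∈ Finset.Icc 1 (m-1), (1 + v ^ i)) * (∏ i ∈ Finset.Icc 1 (m-1), (1 + (v⁻¹) ^ i))
      = (((-1:ℂ)^(m-1)) * ((-1:ℂ)^(m-1))) *
        ((∏ i ∈ Finset.Icc 1 (m-1), (1 + v ^ i)) * (∏ i ∈ Finset.Icc 1 (m-1), (1 + (v⁻¹) ^ i))) := by
        rw [hsq, one_mul]
    _ = ((-1:ℂ)^(m-1) * ∏ i ∈ Finset.Icc 1 (m-1), (1 + v ^ i)) *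
        ((-1:ℂ)^(m-1) * ∏ i ∈ Finset.Icc 1 (m-1), (1 + (v⁻¹) ^ i)) := by ring
    _ = (m : ℂ) := keyev

lemma prod_Icc_pow {n : ℕ} (hn : 0 < n) {ζ : ℂ} (hζ : ζ ^ n = 1) (g : ℂ → ℂ) :
    ∏ j ∈ Finset.Icc 1 n, g (ζ ^ j) = ∏ j ∈ Finset.range n, g (ζ ^ j) := by
  have h1 : Finset.Icc 1 n = insert n (Finset.Icc 1 (n-1)) := by
    ext x; simp only [Finset.mem_Icc, Finset.mem_insert]; omega
  have h2 : Finset.range n = insert 0 (Finset.Icc 1 (n-1)) := by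
    ext x; simp only [Finset.mem_range, Finset.mem_Icc, Finset.mem_insert]; omega
  rw [h1, h2, Finset.prod_insert (by simp only [Finset.mem_Icc]; omega),
    Finset.prod_insert (by simp only [Finset.mem_Icc]; omega), hζ, pow_zero]

lemma prod_roots_eq {n : ℕ} (hn : 0 < n) {ζ : ℂ} (h : IsPrimitiveRoot ζ n) :
    ∏ j ∈ Finset.range n, ζ ^ j = (-1:ℂ) ^ (n+1) := by
  have h0 := prod_range_eval hn h 0
  rw [zero_pow hn.ne', zero_sub] at h0
  have : ∏ j ∈ Finset.range n, (0 - ζ ^ j) = (-1:ℂ)^n * ∏ j ∈ Finset.range n, ζ ^ j := by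
    rw [Finset.prod_congr rfl (fun j _ => show (0:ℂ) - ζ ^ j = (-1) * ζ ^ j by ring),
      Finset.prod_mul_distrib, Finset.prod_const, Finset.card_range]
  rw [this] at h0
  have hsq : ((-1:ℂ)^n) * ((-1:ℂ)^n) = 1 := by
    rw [← pow_add]; exact Even.neg_one_pow ⟨n, rfl⟩
  calc ∏ j ∈ Finset.range n, ζ ^ j
      = ((-1:ℂ)^n * (-1:ℂ)^n) * ∏ j ∈ Finset.range n, ζ ^ j := by rw [hsq, one_mul]
    _ = (-1:ℂ)^n * ((-1:ℂ)^n * ∏ j ∈ Finset.range n, ζ ^ j) := by ring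
    _ = (-1:ℂ)^n * (-1) := by rw [h0]
    _ = (-1:ℂ) ^ (n+1) := by rw [pow_succ]

lemma inner_prod (n : ℕ) (hn : 1 ≤ n) (θ : ℝ) :
    ∏ j ∈ Finset.Icc 1 n, (2 * Real.cos θ + 2 * Real.cos (2 * j * π / n)) =
      2 * Real.cos (n * θ) - 2 * (-1:ℝ) ^ n := by
  have hn0 : 0 < n := hn
  have hnR : (n:ℂ) ≠ 0 := by exact_mod_cast hn0.ne'
  set ζ : ℂ := Complex.exp (2 * π * Complex.I / n) with hζdef
  have hζ : IsPrimitiveRoot ζ n := Complex.isPrimitiveRoot_exp n hn0.ne'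
  have hζn : ζ ^ n = 1 := hζ.pow_eq_one
  have hζ0 : ζ ≠ 0 := Complex.exp_ne_zero _
  set u : ℂ := Complex.exp (θ * Complex.I) with hudef
  have hu0 : u ≠ 0 := Complex.exp_ne_zero _
  apply Complex.ofReal_injective
  push_cast [Complex.ofReal_cos]
  -- rewrite each cosine factor
  have hterm : ∀ j : ℕ, 2 * Complex.cos (2 * (j:ℂ) * (π:ℂ) / (n:ℂ)) = ζ ^ j + (ζ ^ j)⁻¹ := by
    intro j
    rw [Complex.two_cos]
    have h1 : (2 * (j:ℂ) * (π:ℂ) / (n:ℂ)) * Complex.I = (j:ℂ) * (2 * π * Complex.I / n) := by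
      ring
    rw [neg_mul, Complex.exp_neg, h1, Complex.exp_nat_mul]
  have hcosθ : 2 * Complex.cos ((θ : ℝ) : ℂ) = u + u⁻¹ := by
    rw [Complex.two_cos, neg_mul, Complex.exp_neg]
  have hL : (∏ j ∈ Finset.Icc 1 n, (2 * Complex.cos ((θ:ℝ):ℂ) + 2 * Complex.cos (2 * (j:ℂ) * (π:ℂ) / (n:ℂ))))
      = ∏ j ∈ Finset.Icc 1 n, (u + u⁻¹ + (ζ ^ j + (ζ ^ j)⁻¹)) := by
    refine Finset.prod_congr rfl fun j _ => by rw [hterm j, hcosθ]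
  rw [hL]
  rw [prod_Icc_pow hn0 hζn (fun z => u + u⁻¹ + (z + z⁻¹))]
  have hfac : ∀ j : ℕ, u + u⁻¹ + (ζ ^ j + (ζ ^ j)⁻¹) =
      (u⁻¹ * (ζ ^ j)⁻¹) * ((u * ζ ^ j + 1) * (u + ζ ^ j)) := by
    intro j
    have hz : ζ ^ j ≠ 0 := pow_ne_zero _ hζ0
    field_simp
    ring
  rw [Finset.prod_congr rfl fun j _ => hfac j, Finset.prod_mul_distrib, Finset.prod_mul_distrib,
    Finset.prod_mul_distrib]
  have e1 : ∏ j ∈ Finset.range n, u⁻¹ = (u⁻¹) ^ n := by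
    rw [Finset.prod_const, Finset.card_range]
  have e2 : ∏ j ∈ Finset.range n, (ζ ^ j)⁻¹ = ((-1:ℂ) ^ (n+1))⁻¹ := by
    rw [Finset.prod_inv_distrib, prod_roots_eq hn0 hζ]
  have e3 : ∏ j ∈ Finset.range n, (u * ζ ^ j + 1) = (-u)^n * ((-u⁻¹)^n - 1) := by
    have : ∀ j : ℕ, u * ζ ^ j + 1 = (-u) * ((-u⁻¹) - ζ ^ j) := by
      intro j; field_simp; ring
    rw [Finset.prod_congr rfl fun j _ => this j, Finset.prod_mul_distrib, Finset.prod_const,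
      Finset.card_range, prod_range_eval hn0 hζ]
  have e4 : ∏ j ∈ Finset.range n, (u + ζ ^ j) = (-1:ℂ)^n * ((-u)^n - 1) := by
    have : ∀ j : ℕ, u + ζ ^ j = (-1) * ((-u) - ζ ^ j) := by intro j; ring
    rw [Finset.prod_congr rfl fun j _ => this j, Finset.prod_mul_distrib, Finset.prod_const,
      Finset.card_range, prod_range_eval hn0 hζ]
  rw [e1, e2, e3, e4]
  -- RHS cosine
  have hR : 2 * Complex.cos ((n:ℂ) * (θ:ℂ)) = u ^ n + (u ^ n)⁻¹ := by
    rw [Complex.two_cos, neg_mul, Complex.exp_neg]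
    have h1 : ((n:ℂ) * (θ:ℂ)) * Complex.I = (n:ℂ) * ((θ:ℂ) * Complex.I) := by ring
    rw [h1, Complex.exp_nat_mul]
  rw [hR]
  have hun : u ^ n ≠ 0 := pow_ne_zero _ hu0
  rcases Nat.even_or_odd n with he | ho
  · simp only [he.neg_one_pow, Even.neg_pow he, inv_pow]
    have : (-1:ℂ) ^ (n+1) = -1 := by
      rw [pow_succ, he.neg_one_pow, one_mul]
    rw [this]
    field_simp
    ring
  · simp only [ho.neg_one_pow, Odd.neg_pow ho, inv_pow]
    have : (-1:ℂ) ^ (n+1) = 1 := by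
      rw [pow_succ, ho.neg_one_pow, neg_one_mul, neg_neg]
    rw [this]
    field_simp
    ring

lemma outer_odd {m n : ℕ} (hm : 1 < m) (hco : Nat.Coprime n (2*m)) :
    ∏ i ∈ Finset.Icc 1 (m-1), (2 * Real.cos ((n:ℝ) * ((i:ℝ) * π / m)) + 2) = (m:ℝ) := by
  have h2m : (2*m) ≠ 0 := by omega
  have hm0 : (m:ℂ) ≠ 0 := by exact_mod_cast (by omega : m ≠ 0)
  set v : ℂ := Complex.exp (2 * (π:ℂ) * Complex.I * ((n:ℂ) / ((2*m : ℕ):ℂ))) with hvdef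
  have hv : IsPrimitiveRoot v (2*m) := Complex.isPrimitiveRoot_exp_of_coprime n (2*m) h2m hco
  have hv0 : v ≠ 0 := Complex.exp_ne_zero _
  apply Complex.ofReal_injective
  push_cast [Complex.ofReal_cos]
  have hpt : ∀ i : ℕ, 2 * Complex.cos ((n:ℂ) * ((i:ℂ) * (π:ℂ) / (m:ℂ))) + 2 =
      (1 + v ^ i) * (1 + (v⁻¹) ^ i) := by
    intro i
    rw [Complex.two_cos, neg_mul, Complex.exp_neg]
    have h1 : ((n:ℂ) * ((i:ℂ) * (π:ℂ) / (m:ℂ))) * Complex.I =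
        (i:ℂ) * (2 * (π:ℂ) * Complex.I * ((n:ℂ) / ((2*m : ℕ):ℂ))) := by
      push_cast
      field_simp
    rw [h1, Complex.exp_nat_mul, ← hvdef]
    have hvi : v ^ i ≠ 0 := pow_ne_zero _ hv0
    rw [inv_pow]
    field_simp
    ring
  rw [Finset.prod_congr rfl fun i _ => hpt i, Finset.prod_mul_distrib]
  exact oddProd (by omega) hv

lemma outer_even {m s : ℕ} (hm : 1 < m) (hco : Nat.Coprime s m) :
    ∏ i ∈ Finset.Icc 1 (m-1), (2 * Real.cos (2 * (s:ℝ) * ((i:ℝ) * π / m)) - 2) =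
      (-1:ℝ)^(m-1) * (m:ℝ)^2 := by
  have hm0' : m ≠ 0 := by omega
  have hm0 : (m:ℂ) ≠ 0 := by exact_mod_cast hm0'
  set v : ℂ := Complex.exp (2 * (π:ℂ) * Complex.I * ((s:ℂ) / (m:ℂ))) with hvdef
  have hv : IsPrimitiveRoot v m := Complex.isPrimitiveRoot_exp_of_coprime s m hm0' hco
  have hv0 : v ≠ 0 := Complex.exp_ne_zero _
  apply Complex.ofReal_injective
  push_cast [Complex.ofReal_cos]
  have hpt : ∀ i : ℕ, 2 * Complex.cos (2 * (s:ℂ) * ((i:ℂ) * (π:ℂ) / (m:ℂ))) - 2 =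
      (-1) * ((1 - v ^ i) * (1 - (v⁻¹) ^ i)) := by
    intro i
    rw [Complex.two_cos, neg_mul, Complex.exp_neg]
    have h1 : (2 * (s:ℂ) * ((i:ℂ) * (π:ℂ) / (m:ℂ))) * Complex.I =
        (i:ℂ) * (2 * (π:ℂ) * Complex.I * ((s:ℂ) / (m:ℂ))) := by
      field_simp
    rw [h1, Complex.exp_nat_mul, ← hvdef]
    have hvi : v ^ i ≠ 0 := pow_ne_zero _ hv0
    rw [inv_pow]
    field_simp
    ring
  rw [Finset.prod_congr rfl fun i _ => hpt i, Finset.prod_mul_distrib, Finset.prod_mul_distrib,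
    Finset.prod_const, Nat.card_Icc, Nat.add_sub_cancel, evenProd (by omega) hv,
    evenProd (by omega) hv.inv]
  ring

lemma cos_odd_pi {b : ℕ} (hb : Odd b) : Real.cos ((b:ℝ) * π) = -1 := by
  obtain ⟨c, hc⟩ := hb
  have h1 : ((b:ℝ)) * π = (c:ℝ) * (2*π) + π := by rw [hc]; push_cast; ring
  have h2 : (c:ℝ) * (2*π) = ((2*c : ℕ):ℝ) * π := by push_cast; ring
  rw [h1, Real.cos_add, Real.cos_nat_mul_two_pi, h2, Real.sin_nat_mul_pi]
  simp

theorem prod_cylinder_eigenvalues (m n : ℕ) (hm : 1 < m) (hn : 1 ≤ n) :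
    (∏ i ∈ Finset.Icc 1 (m - 1), ∏ j ∈ Finset.Icc 1 n,
        (2 * Real.cos (i * π / m) + 2 * Real.cos (2 * j * π / n))) =
      if Odd n ∧ Nat.gcd m n = 1 then (m : ℝ)
      else if Even n ∧ Nat.gcd m (n / 2) = 1 then (-1 : ℝ) ^ (m - 1) * (m : ℝ) ^ 2
      else 0 := by
  have hm0' : m ≠ 0 := by omega
  have hmR : (m:ℝ) ≠ 0 := by exact_mod_cast hm0'
  rw [Finset.prod_congr rfl fun (i : ℕ) _ => inner_prod n hn ((i:ℝ) * π / m)]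
  rcases Nat.even_or_odd n with he | ho
  · -- n even
    obtain ⟨s, hs⟩ := he
    have hn2 : n = 2 * s := by omega
    have hnd2 : n / 2 = s := by omega
    have he' : Even n := ⟨s, hs⟩
    rw [if_neg (fun h => (Nat.not_odd_iff_even.mpr he') h.1)]
    by_cases hg : Nat.gcd m s = 1
    · rw [if_pos ⟨he', by rw [hnd2]; exact hg⟩]
      have hpt : ∀ i : ℕ, 2 * Real.cos ((n:ℝ) * ((i:ℝ) * π / m)) - 2 * (-1:ℝ)^n =
          2 * Real.cos (2 * (s:ℝ) * ((i:ℝ) * π / m)) - 2 := by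
        intro i
        rw [he'.neg_one_pow, hn2]
        push_cast
        norm_num
      rw [Finset.prod_congr rfl fun i _ => hpt i]
      exact outer_even hm (Nat.coprime_comm.mp hg)
    · rw [if_neg (fun h => hg (hnd2 ▸ h.2))]
      set d := Nat.gcd m s with hd
      have hdm : d ∣ m := by rw [hd]; exact Nat.gcd_dvd_left m s
      have hds : d ∣ s := by rw [hd]; exact Nat.gcd_dvd_right m s
      have hd0 : d ≠ 0 := by
        intro h
        rw [hd] at h
        exact hm0' (Nat.gcd_eq_zero_iff.mp h).1
      have hd2 : 2 ≤ d := by omega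
      obtain ⟨a, ha⟩ := hdm
      obtain ⟨b, hb⟩ := hds
      have ha0 : a ≠ 0 := by rintro rfl; simp at ha; exact hm0' ha
      have h2a : 2 * a ≤ m := by rw [ha]; exact Nat.mul_le_mul_right a hd2
      apply Finset.prod_eq_zero (i := a) (by simp only [Finset.mem_Icc]; omega)
      have harg : (n:ℝ) * ((a:ℝ) * π / m) = (b:ℝ) * (2 * π) := by
        rw [hn2, hb, ha]
        push_cast
        have hdR : (d:ℝ) ≠ 0 := by exact_mod_cast hd0
        have haR : (a:ℝ) ≠ 0 := by exact_mod_cast ha0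
        field_simp
      rw [harg, Real.cos_nat_mul_two_pi, he'.neg_one_pow]
      ring
  · -- n odd
    by_cases hg : Nat.gcd m n = 1
    · rw [if_pos ⟨ho, hg⟩]
      have hpt : ∀ i : ℕ, 2 * Real.cos ((n:ℝ) * ((i:ℝ) * π / m)) - 2 * (-1:ℝ)^n =
          2 * Real.cos ((n:ℝ) * ((i:ℝ) * π / m)) + 2 := by
        intro i; rw [ho.neg_one_pow]; ring
      rw [Finset.prod_congr rfl fun i _ => hpt i]
      exact outer_odd hm (Nat.Coprime.mul_right ho.coprime_two_right (Nat.coprime_comm.mp hg))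
    · rw [if_neg (fun h => hg h.2), if_neg (fun h => (Nat.not_odd_iff_even.mpr h.1) ho)]
      set d := Nat.gcd m n with hd
      have hdm : d ∣ m := by rw [hd]; exact Nat.gcd_dvd_left m n
      have hds : d ∣ n := by rw [hd]; exact Nat.gcd_dvd_right m n
      have hd0 : d ≠ 0 := by
        intro h
        rw [hd] at h
        exact hm0' (Nat.gcd_eq_zero_iff.mp h).1
      have hd2 : 2 ≤ d := by omega
      obtain ⟨a, ha⟩ := hdm
      obtain ⟨b, hb⟩ := hds
      have ha0 : a ≠ 0 := by rintro rfl; simp at ha; exact hm0' ha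
      have h2a : 2 * a ≤ m := by rw [ha]; exact Nat.mul_le_mul_right a hd2
      have hbodd : Odd b := (Nat.odd_mul.mp (hb ▸ ho)).2
      apply Finset.prod_eq_zero (i := a) (by simp only [Finset.mem_Icc]; omega)
      have harg : (n:ℝ) * ((a:ℝ) * π / m) = (b:ℝ) * π := by
        rw [hb, ha]
        push_cast
        have hdR : (d:ℝ) ≠ 0 := by exact_mod_cast hd0
        have haR : (a:ℝ) ≠ 0 := by exact_mod_cast ha0
        field_simp
      rw [harg, cos_odd_pi hbodd, ho.neg_one_pow]
      ring
end

section
/- Let n > 1 be an integer. Then the product ∏_{j=1}^{2n} ((-1)^j + 2 cos(j π / n)) equals -3 if n ≡ 2 or n ≡ -2 (mod 6); equals -9 if n ≡ 1 or n ≡ -1 (mod 6); and equals 0 if n ≡ 0 or n ≡ 3 (mod 6). -/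
open Real Finset

section MobiusAux

open Complex Polynomial

set_option linter.unnecessarySimpa false

noncomputable def eθ (x : ℝ) : ℂ := Complex.exp (x * Complex.I)

lemma he_add (a b : ℝ) : eθ a * eθ b = eθ (a + b) := by
  rw [eθ, eθ, eθ, ← Complex.exp_add]; push_cast; ring_nf

lemma he_eq {a b : ℝ} (h : a = b) : eθ a = eθ b := by rw [h]

lemma he_pow (a : ℝ) (k : ℕ) : eθ a ^ k = eθ (k * a) := by
  rw [eθ, eθ, ← Complex.exp_nat_mul]; push_cast; ring_nf

lemma he_zero : eθ 0 = 1 := by simp [eθ]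

lemma he_pi : eθ π = -1 := by simpa [eθ] using Complex.exp_pi_mul_I

lemma he_neg_pi : eθ (-π) = -1 := by
  have h := he_add (-π) π
  rw [he_pi, neg_add_cancel, he_zero] at h
  linear_combination -h

lemma he_two_pi : eθ (2 * π) = 1 := by
  have := he_add π π; rw [he_pi] at this
  have h2 : π + π = 2 * π := by ring
  rw [h2] at this; linear_combination -this

lemma he_neg_two_pi : eθ (-(2 * π)) = 1 := by
  have h := he_add (-(2*π)) (2*π)
  rw [he_two_pi, neg_add_cancel, he_zero] at h
  linear_combination h

lemma he_cos (a : ℝ) : eθ a + eθ (-a) = 2 * (Real.cos a : ℂ) := by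
  rw [eθ, eθ]
  push_cast
  rw [Complex.exp_mul_I, Complex.exp_mul_I, Complex.cos_neg, Complex.sin_neg]
  ring

lemma prod_sub_pow (n : ℕ) (hn : n ≠ 0) (x : ℂ) :
    ∏ k ∈ Finset.range n, (x - eθ (2 * π / n) ^ k) = x ^ n - 1 := by
  have he : eθ (2 * π / n) = Complex.exp (2 * ↑π * Complex.I / ↑n) := by
    rw [eθ]; push_cast; ring_nf
  have h := Complex.isPrimitiveRoot_exp n hn
  have h2 := X_pow_sub_C_eq_prod h (Nat.pos_of_ne_zero hn) (one_pow n : (1:ℂ)^n = 1)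
  have h3 := congrArg (Polynomial.eval x) h2
  simp only [Polynomial.eval_sub, Polynomial.eval_pow, Polynomial.eval_X, Polynomial.eval_one,
    Polynomial.eval_prod, Polynomial.eval_mul, Polynomial.eval_C, mul_one] at h3
  rw [he, ← h3]

lemma prod_pair_aux {M : Type*} [CommMonoid M] (f : ℕ → M) (m : ℕ) :
    ∏ j ∈ Finset.Icc 1 (2 * m), f j = ∏ k ∈ Finset.range m, (f (2 * k + 1) * f (2 * k + 2)) := by
  induction m with
  | zero => simp
  | succ m ih =>
    have h1 : 2 * (m + 1) = (2 * m + 1) + 1 := by ring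
    rw [h1, Finset.prod_Icc_succ_top (by omega), Finset.prod_Icc_succ_top (by omega), ih,
      Finset.prod_range_succ, mul_assoc]

lemma sum_Icc_one (m : ℕ) : (∑ j ∈ Finset.Icc 1 m, j) * 2 = m * (m + 1) := by
  induction m with
  | zero => simp
  | succ m ih => rw [Finset.sum_Icc_succ_top (by omega), add_mul, ih]; ring

lemma prod_lin (n : ℕ) (hn : n ≠ 0) (α β : ℝ) :
    ∏ k ∈ Finset.range n, (eθ α * eθ (2 * π / n) ^ k - eθ β)
      = eθ (n * α) * ((-1 : ℂ) ^ n * (eθ (n * (β - α)) - 1)) := by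
  have key : ∀ k : ℕ, eθ α * eθ (2 * π / n) ^ k - eθ β
      = eθ α * (eθ (2 * π / n) ^ k - eθ (β - α)) := by
    intro k
    have : eθ α * eθ (β - α) = eθ β := (he_add _ _).trans (he_eq (by ring))
    rw [mul_sub, this]
  rw [Finset.prod_congr rfl (fun k _ => key k), Finset.prod_mul_distrib, Finset.prod_const,
    Finset.card_range, he_pow]
  congr 1
  have h2 : ∀ k : ℕ, eθ (2 * π / n) ^ k - eθ (β - α)
      = (-1) * (eθ (β - α) - eθ (2 * π / n) ^ k) := by intro k; ring
  rw [Finset.prod_congr rfl (fun k _ => h2 k), Finset.prod_mul_distrib, Finset.prod_const,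
    Finset.card_range, prod_sub_pow n hn, he_pow]

end MobiusAux

theorem prod_mobius_eigenvalues (n : ℕ) (hn : 1 < n) :
    (∏ j ∈ Finset.Icc 1 (2 * n), ((-1 : ℝ) ^ j + 2 * Real.cos (j * π / n))) =
      if n % 6 = 2 ∨ n % 6 = 4 then -3
      else if n % 6 = 1 ∨ n % 6 = 5 then -9
      else 0 := by
  have hn0 : n ≠ 0 := by omega
  have hnR : (n : ℝ) ≠ 0 := Nat.cast_ne_zero.mpr hn0
  set u : ℂ := eθ (π / 3) with hu_def
  set ub : ℂ := eθ (-(π / 3)) with hub_def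
  set η : ℂ := eθ (π / n) with hη_def
  set A : ℂ := eθ (n * (π / 3)) with hA_def
  set Ab : ℂ := eθ (n * (-(π / 3))) with hAb_def
  have huu : u * ub = 1 := by
    rw [hu_def, hub_def, he_add]
    simpa using he_zero
  have hsum : u + ub = 1 := by
    rw [hu_def, hub_def, he_cos, Real.cos_pi_div_three]; norm_num
  have hηn : η ^ n = -1 := by
    rw [hη_def, he_pow, show (n : ℝ) * (π / n) = π by field_simp, he_pi]
  -- term identity
  have hterm : ∀ j : ℕ, η ^ j * ((((-1 : ℝ) ^ j + 2 * Real.cos (j * π / n) : ℝ)) : ℂ)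
      = (η ^ j + (-1) ^ j * u) * (η ^ j + (-1) ^ j * ub) := by
    intro j
    have hz : η ^ j = eθ ((j : ℝ) * π / n) := by
      rw [hη_def, he_pow]; exact he_eq (by ring)
    have hc := he_cos ((j : ℝ) * π / n)
    rw [Complex.ofReal_cos] at hc
    push_cast at hc
    have h1 : eθ ((j : ℝ) * π / n) * eθ (-((j : ℝ) * π / n)) = 1 := by
      rw [he_add]; simpa using he_zero
    have he2 : ((-1 : ℂ)) ^ j * (-1) ^ j = 1 := by
      rw [← pow_add, show j + j = 2 * j by ring, pow_mul]; norm_num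
    push_cast
    rw [hz]
    linear_combination (-(eθ ((j : ℝ) * π / n))) * hc + h1
      + (-(((-1 : ℂ)) ^ j * eθ ((j : ℝ) * π / n))) * hsum + (-(u * ub)) * he2 + (-1 : ℂ) * huu
  -- product of η^j
  have hP : ∏ j ∈ Finset.Icc 1 (2 * n), η ^ j = -1 := by
    rw [Finset.prod_pow_eq_pow_sum]
    have h2 := sum_Icc_one (2 * n)
    have h3 : ∑ j ∈ Finset.Icc 1 (2 * n), j = n * (2 * n + 1) := by
      have h4 : 2 * n * (2 * n + 1) = 2 * (n * (2 * n + 1)) := by ring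
      omega
    rw [h3, pow_mul, hηn]
    exact Odd.neg_one_pow ⟨n, by ring⟩
  -- cast and flip
  have hcast : ((∏ j ∈ Finset.Icc 1 (2 * n), ((-1 : ℝ) ^ j + 2 * Real.cos (j * π / n)) : ℝ) : ℂ)
      = - ∏ j ∈ Finset.Icc 1 (2 * n), ((η ^ j + (-1) ^ j * u) * (η ^ j + (-1) ^ j * ub)) := by
    rw [Complex.ofReal_prod, ← Finset.prod_congr rfl (fun j _ => hterm j),
      Finset.prod_mul_distrib, hP]
    ring
  -- pair and compute the four products
  set ζ : ℂ := eθ (2 * π / n) with hζ_def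
  have hζ : η ^ 2 = ζ := by rw [hη_def, he_pow, hζ_def]; exact he_eq (by ring)
  have hodd : ∀ k : ℕ, η ^ (2 * k + 1) = eθ (π / n) * ζ ^ k := by
    intro k
    rw [pow_add, pow_mul, hζ, pow_one, hη_def, mul_comm]
  have heven : ∀ k : ℕ, η ^ (2 * k + 2) = eθ (2 * π / n) * ζ ^ k := by
    intro k
    rw [pow_add, pow_mul, hζ, ← hζ_def, mul_comm]
  have hεodd : ∀ k : ℕ, ((-1 : ℂ)) ^ (2 * k + 1) = -1 := by
    intro k; rw [pow_add, pow_mul]; norm_num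
  have hεeven : ∀ k : ℕ, ((-1 : ℂ)) ^ (2 * k + 2) = 1 := by
    intro k; rw [pow_add, pow_mul]; norm_num
  have hs2 : ((-1 : ℂ)) ^ n * (-1) ^ n = 1 := by
    rw [← pow_add, show n + n = 2 * n by ring, pow_mul]; norm_num
  -- product 1 : ∏ (η^(2k+1) - u)
  have hp1 : ∏ k ∈ Finset.range n, (eθ (π / n) * ζ ^ k - u) = (-1 : ℂ) ^ n * (A + 1) := by
    rw [hu_def, hζ_def, prod_lin n hn0 (π / n) (π / 3),
      show (n : ℝ) * (π / n) = π by field_simp, he_pi,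
      show (n : ℝ) * (π / 3 - π / n) = n * (π / 3) + -π by field_simp; ring,
      ← he_add, he_neg_pi, ← hA_def]
    ring
  have hp2 : ∏ k ∈ Finset.range n, (eθ (π / n) * ζ ^ k - ub) = (-1 : ℂ) ^ n * (Ab + 1) := by
    rw [hub_def, hζ_def, prod_lin n hn0 (π / n) (-(π / 3)),
      show (n : ℝ) * (π / n) = π by field_simp, he_pi,
      show (n : ℝ) * (-(π / 3) - π / n) = n * (-(π / 3)) + -π by field_simp; ring,
      ← he_add, he_neg_pi, ← hAb_def]
    ring
  have hmu : -u = eθ (π / 3 + π) := by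
    rw [← he_add, he_pi, hu_def]; ring
  have hmub : -ub = eθ (-(π / 3) + π) := by
    rw [← he_add, he_pi, hub_def]; ring
  have hπn : eθ ((n : ℝ) * π) = (-1 : ℂ) ^ n := by
    rw [← he_pow, he_pi]
  have hp3 : ∏ k ∈ Finset.range n, (eθ (2 * π / n) * ζ ^ k + u) = A - (-1 : ℂ) ^ n := by
    have h : ∀ k : ℕ, eθ (2 * π / n) * ζ ^ k + u = eθ (2 * π / n) * ζ ^ k - eθ (π / 3 + π) := by
      intro k; rw [← hmu]; ring
    rw [Finset.prod_congr rfl fun k _ => h k, hζ_def, prod_lin n hn0 (2 * π / n) (π / 3 + π),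
      show (n : ℝ) * (2 * π / n) = 2 * π by field_simp, he_two_pi,
      show (n : ℝ) * (π / 3 + π - 2 * π / n) = n * (π / 3) + ((n : ℝ) * π + -(2 * π)) by
        field_simp; ring,
      ← he_add, ← he_add, hπn, he_neg_two_pi, ← hA_def]
    linear_combination A * hs2
  have hp4 : ∏ k ∈ Finset.range n, (eθ (2 * π / n) * ζ ^ k + ub) = Ab - (-1 : ℂ) ^ n := by
    have h : ∀ k : ℕ, eθ (2 * π / n) * ζ ^ k + ub
        = eθ (2 * π / n) * ζ ^ k - eθ (-(π / 3) + π) := by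
      intro k; rw [← hmub]; ring
    rw [Finset.prod_congr rfl fun k _ => h k, hζ_def, prod_lin n hn0 (2 * π / n) (-(π / 3) + π),
      show (n : ℝ) * (2 * π / n) = 2 * π by field_simp, he_two_pi,
      show (n : ℝ) * (-(π / 3) + π - 2 * π / n) = n * (-(π / 3)) + ((n : ℝ) * π + -(2 * π)) by
        field_simp; ring,
      ← he_add, ← he_add, hπn, he_neg_two_pi, ← hAb_def]
    linear_combination Ab * hs2
  -- master identity
  have hmaster : ((∏ j ∈ Finset.Icc 1 (2 * n), ((-1 : ℝ) ^ j + 2 * Real.cos (j * π / n)) : ℝ) : ℂ)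
      = -((A + 1) * (Ab + 1) * (A - (-1) ^ n) * (Ab - (-1) ^ n)) := by
    rw [hcast, prod_pair_aux]
    have hF : ∀ k : ℕ, ((η ^ (2 * k + 1) + (-1) ^ (2 * k + 1) * u)
          * (η ^ (2 * k + 1) + (-1) ^ (2 * k + 1) * ub))
        * ((η ^ (2 * k + 2) + (-1) ^ (2 * k + 2) * u)
          * (η ^ (2 * k + 2) + (-1) ^ (2 * k + 2) * ub))
        = ((eθ (π / n) * ζ ^ k - u) * (eθ (π / n) * ζ ^ k - ub))
          * ((eθ (2 * π / n) * ζ ^ k + u) * (eθ (2 * π / n) * ζ ^ k + ub)) := by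
      intro k
      rw [hodd, heven, hεodd, hεeven]; ring
    rw [Finset.prod_congr rfl fun k _ => hF k]
    rw [Finset.prod_mul_distrib, Finset.prod_mul_distrib, Finset.prod_mul_distrib,
      hp1, hp2, hp3, hp4]
    linear_combination (-(A + 1) * (Ab + 1) * (A - (-1 : ℂ) ^ n) * (Ab - (-1 : ℂ) ^ n)) * hs2
  -- reduce A, Ab, sign mod 6
  have hu2 : u ^ 2 = u - 1 := by linear_combination u * hsum - huu
  have hb2 : ub ^ 2 = ub - 1 := by linear_combination ub * hsum - huu
  have hu3 : u ^ 3 = -1 := by linear_combination (u + 1) * hu2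
  have hb3 : ub ^ 3 = -1 := by linear_combination (ub + 1) * hb2
  have hu6 : u ^ 6 = 1 := by linear_combination (u ^ 3 - 1) * hu3
  have hb6 : ub ^ 6 = 1 := by linear_combination (ub ^ 3 - 1) * hb3
  have hAu : A = u ^ (n % 6) := by
    rw [hA_def, hu_def, ← he_pow]
    conv_lhs => rw [← Nat.div_add_mod n 6]
    rw [pow_add, pow_mul, hu6, one_pow, one_mul]
  have hAb2 : Ab = ub ^ (n % 6) := by
    rw [hAb_def, hub_def, ← he_pow]
    conv_lhs => rw [← Nat.div_add_mod n 6]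
    rw [pow_add, pow_mul, hb6, one_pow, one_mul]
  have hsn : ((-1 : ℂ)) ^ n = (-1) ^ (n % 6) := by
    conv_lhs => rw [← Nat.div_add_mod n 6]
    rw [pow_add, pow_mul]; norm_num
  rw [hAu, hAb2, hsn] at hmaster
  have hub1 : ub = 1 - u := by linear_combination hsum
  rw [hub1] at hmaster
  have h6 : n % 6 = 0 ∨ n % 6 = 1 ∨ n % 6 = 2 ∨ n % 6 = 3 ∨ n % 6 = 4 ∨ n % 6 = 5 := by omega
  rcases h6 with h | h | h | h | h | h <;> rw [h] at hmaster <;> rw [h]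
  · norm_num
    have hfin : ((∏ j ∈ Finset.Icc 1 (2 * n), ((-1 : ℝ) ^ j + 2 * Real.cos (j * π / n)) : ℝ) : ℂ)
        = (0 : ℂ) := by
      rw [hmaster]; norm_num
    exact_mod_cast hfin
  · norm_num
    have hfin : ((∏ j ∈ Finset.Icc 1 (2 * n), ((-1 : ℝ) ^ j + 2 * Real.cos (j * π / n)) : ℝ) : ℂ)
        = (-9 : ℂ) := by
      rw [hmaster]; linear_combination (5 + u - u^2 : ℂ) * hu2
    exact_mod_cast hfin
  · norm_num
    have hfin : ((∏ j ∈ Finset.Icc 1 (2 * n), ((-1 : ℝ) ^ j + 2 * Real.cos (j * π / n)) : ℝ) : ℂ)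
        = (-3 : ℂ) := by
      rw [hmaster]; linear_combination (3 - u + 2*u^2 - u^3 - 2*u^4 + 3*u^5 - u^6 : ℂ) * hu2
    exact_mod_cast hfin
  · norm_num
    have hfin : ((∏ j ∈ Finset.Icc 1 (2 * n), ((-1 : ℝ) ^ j + 2 * Real.cos (j * π / n)) : ℝ) : ℂ)
        = (0 : ℂ) := by
      rw [hmaster]; linear_combination (-4 + 8*u - 9*u^2 - 3*u^3 + 15*u^4 - 18*u^5 + 6*u^6 + 6*u^7 - 9*u^8 + 5*u^9 - u^10 : ℂ) * hu2
    exact_mod_cast hfin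
  · norm_num
    have hfin : ((∏ j ∈ Finset.Icc 1 (2 * n), ((-1 : ℝ) ^ j + 2 * Real.cos (j * π / n)) : ℝ) : ℂ)
        = (-3 : ℂ) := by
      rw [hmaster]; linear_combination (3 - 5*u + 20*u^2 - 31*u^3 + 19*u^4 - 6*u^5 + 3*u^6 + u^7 - u^8 + 6*u^9 - 21*u^10 + 29*u^11 - 20*u^12 + 7*u^13 - u^14 : ℂ) * hu2
    exact_mod_cast hfin
  · norm_num
    have hfin : ((∏ j ∈ Finset.Icc 1 (2 * n), ((-1 : ℝ) ^ j + 2 * Real.cos (j * π / n)) : ℝ) : ℂ)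
        = (-9 : ℂ) := by
      rw [hmaster]; linear_combination (5 + 25*u - 45*u^2 + 70*u^3 - 105*u^4 + 71*u^5 + 6*u^6 - 75*u^7 + 154*u^8 - 201*u^9 + 148*u^10 - 51*u^11 - 24*u^12 + 77*u^13 - 99*u^14 + 76*u^15 - 35*u^16 + 9*u^17 - u^18 : ℂ) * hu2
    exact_mod_cast hfin
end

section
/- Let m > 1 and n > 1 be integers. Then 2^((m-1)(n-1)) · ∏_{i=1}^{m-1} ∏_{j=1}^{n-1} sin(i π / m + j π / n) = ∏_{i=1}^{m-1} sin(n i π / m) / ∏_{i=1}^{m-1} sin(i π / m). -/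
open Real Finset

lemma two_sin_complex (w : ℂ) :
    2 * Complex.sin w = Complex.I * Complex.exp (-w * Complex.I) *
      (1 - Complex.exp (2 * w * Complex.I)) := by
  have h : Complex.exp (-w * Complex.I) * Complex.exp (2 * w * Complex.I)
      = Complex.exp (w * Complex.I) := by
    rw [← Complex.exp_add]; ring_nf
  rw [Complex.sin]
  linear_combination Complex.I * h

lemma one_sub_pow_eq_prod (n : ℕ) (hn : 0 < n) (α : ℂ) :
    1 - α ^ n = ∏ i ∈ Finset.range n,
      (1 - Complex.exp (2 * ↑π * Complex.I / n) ^ i * α) := by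
  have h := X_pow_sub_C_eq_prod (Complex.isPrimitiveRoot_exp n hn.ne') hn
    (rfl : α ^ n = α ^ n)
  have h2 := congrArg (Polynomial.eval 1) h
  simpa [Polynomial.eval_prod] using h2

lemma exp_neg_pi_div_two : Complex.exp (-(↑π / 2) * Complex.I) = -Complex.I := by
  rw [show (-(↑π / 2 : ℂ) * Complex.I) = (↑(-(π / 2)) : ℂ) * Complex.I by push_cast; ring,
    Complex.exp_mul_I, ← Complex.ofReal_cos, ← Complex.ofReal_sin]
  simp

lemma prod_two_sin_complex (n : ℕ) (hn : 0 < n) (z : ℂ) :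
    ∏ j ∈ Finset.range n, (2 * Complex.sin (z + j * ↑π / n))
      = 2 * Complex.sin (n * z) := by
  obtain ⟨k, rfl⟩ : ∃ k, n = k + 1 := ⟨n - 1, (Nat.succ_pred_eq_of_pos hn).symm⟩
  have hn' : ((k : ℂ) + 1) ≠ 0 := Nat.cast_add_one_ne_zero k
  push_cast
  have hstep : ∀ j ∈ Finset.range (k + 1),
      (2 * Complex.sin (z + j * ↑π / (k + 1)))
        = Complex.I * Complex.exp (-(z + j * ↑π / (k + 1)) * Complex.I) *
          (1 - Complex.exp (2 * ↑π * Complex.I / (k + 1)) ^ j *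
            Complex.exp (2 * z * Complex.I)) := by
    intro j _
    rw [two_sin_complex]
    congr 1
    rw [← Complex.exp_nat_mul, ← Complex.exp_add]
    push_cast
    congr 1
    field_simp
    ring
  have hone := one_sub_pow_eq_prod (k + 1) (Nat.succ_pos k) (Complex.exp (2 * z * Complex.I))
  push_cast at hone
  rw [Finset.prod_congr rfl hstep, Finset.prod_mul_distrib, Finset.prod_mul_distrib,
    Finset.prod_const, Finset.card_range, ← Complex.exp_sum, ← hone]
  have hS : (∑ j ∈ Finset.range (k + 1), (j : ℂ)) * 2 = ((k : ℂ) + 1) * k := by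
    have h := Finset.sum_range_id_mul_two (k + 1)
    simp only [Nat.add_sub_cancel] at h
    rw [← Nat.cast_sum]
    exact_mod_cast congrArg (Nat.cast (R := ℂ)) h
  have hsum : (∑ j ∈ Finset.range (k + 1), (-(z + j * ↑π / (k + 1)) * Complex.I))
      = -(((k : ℂ) + 1) * z) * Complex.I + k * (-(↑π / 2) * Complex.I) := by
    have hterm : ∀ j ∈ Finset.range (k + 1),
        (-(z + j * ↑π / (k + 1)) * Complex.I)
          = (j : ℂ) * (-(↑π / (k + 1)) * Complex.I) + (-z * Complex.I) := by
      intro j _; ring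
    rw [Finset.sum_congr rfl hterm, Finset.sum_add_distrib, ← Finset.sum_mul,
      Finset.sum_const, Finset.card_range, nsmul_eq_mul]
    field_simp
    push_cast
    linear_combination (-(↑π : ℂ)) * hS
  rw [hsum, Complex.exp_add, Complex.exp_nat_mul, exp_neg_pi_div_two]
  have hpow : Complex.I ^ (k + 1) * (-Complex.I) ^ k = Complex.I := by
    have hII : Complex.I * -Complex.I = 1 := by
      simp [mul_neg, Complex.I_mul_I]
    calc Complex.I ^ (k + 1) * (-Complex.I) ^ k
        = (Complex.I * -Complex.I) ^ k * Complex.I := by ring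
      _ = Complex.I := by rw [hII, one_pow, one_mul]
  have hexp2 : Complex.exp (2 * z * Complex.I) ^ (k + 1)
      = Complex.exp (2 * (((k : ℂ) + 1) * z) * Complex.I) := by
    rw [← Complex.exp_nat_mul]
    congr 1
    push_cast
    ring
  rw [hexp2, two_sin_complex (((k : ℂ) + 1) * z)]
  push_cast
  linear_combination (Complex.exp (-(((k : ℂ) + 1) * z) * Complex.I) *
    (1 - Complex.exp (2 * (((k : ℂ) + 1) * z) * Complex.I))) * hpow

lemma prod_two_sin_real (n : ℕ) (hn : 0 < n) (θ : ℝ) :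
    ∏ j ∈ Finset.range n, (2 * Real.sin (θ + j * π / n)) = 2 * Real.sin (n * θ) := by
  have h := prod_two_sin_complex n hn (θ : ℂ)
  exact_mod_cast h

lemma prod_two_sin_Icc (n : ℕ) (hn : 1 < n) (θ : ℝ) (hθ : Real.sin θ ≠ 0) :
    ∏ j ∈ Finset.Icc 1 (n - 1), (2 * Real.sin (θ + j * π / n))
      = Real.sin (n * θ) / Real.sin θ := by
  have h := prod_two_sin_real n (by omega) θ
  have hins : Finset.range n = insert 0 (Finset.Icc 1 (n - 1)) := by
    ext x; simp only [Finset.mem_range, Finset.mem_insert, Finset.mem_Icc]; omega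
  rw [hins, Finset.prod_insert (by simp)] at h
  simp only [Nat.cast_zero, zero_mul, zero_div, add_zero] at h
  rw [eq_div_iff hθ]
  linear_combination h / 2

theorem prod_sin_grid (m n : ℕ) (hm : 1 < m) (hn : 1 < n) :
    (2 : ℝ) ^ ((m - 1) * (n - 1)) *
        ∏ i ∈ Finset.Icc 1 (m - 1), ∏ j ∈ Finset.Icc 1 (n - 1),
          Real.sin (i * π / m + j * π / n) =
      (∏ i ∈ Finset.Icc 1 (m - 1), Real.sin (n * i * π / m)) /
        ∏ i ∈ Finset.Icc 1 (m - 1), Real.sin (i * π / m) := by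
  have hsin : ∀ i ∈ Finset.Icc 1 (m - 1), 0 < Real.sin (i * π / m) := by
    intro i hi
    rw [Finset.mem_Icc] at hi
    have h1 : (1 : ℝ) ≤ (i : ℝ) := by exact_mod_cast hi.1
    have h2 : (i : ℝ) < (m : ℝ) := by exact_mod_cast (by omega : i < m)
    have hmpos : (0 : ℝ) < m := by positivity
    apply Real.sin_pos_of_pos_of_lt_pi
    · positivity
    · rw [div_lt_iff₀ hmpos]
      calc (i : ℝ) * π < m * π := by
            apply mul_lt_mul_of_pos_right h2 Real.pi_pos
        _ = π * m := by ring
  have key : ∀ i ∈ Finset.Icc 1 (m - 1),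
      ∏ j ∈ Finset.Icc 1 (n - 1), (2 * Real.sin (i * π / m + j * π / n))
        = Real.sin (n * i * π / m) / Real.sin (i * π / m) := by
    intro i hi
    rw [prod_two_sin_Icc n hn _ (ne_of_gt (hsin i hi))]
    congr 2
    ring
  have hL : (2 : ℝ) ^ ((m - 1) * (n - 1)) *
        ∏ i ∈ Finset.Icc 1 (m - 1), ∏ j ∈ Finset.Icc 1 (n - 1),
          Real.sin (i * π / m + j * π / n)
      = ∏ i ∈ Finset.Icc 1 (m - 1), ∏ j ∈ Finset.Icc 1 (n - 1),
          (2 * Real.sin (i * π / m + j * π / n)) := by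
    have hinner : ∀ i ∈ Finset.Icc 1 (m - 1),
        ∏ j ∈ Finset.Icc 1 (n - 1), (2 * Real.sin (i * π / m + j * π / n))
          = 2 ^ (n - 1) * ∏ j ∈ Finset.Icc 1 (n - 1), Real.sin (i * π / m + j * π / n) := by
      intro i _
      rw [Finset.prod_mul_distrib, Finset.prod_const, Nat.card_Icc]
      norm_num
    rw [Finset.prod_congr rfl hinner, Finset.prod_mul_distrib, Finset.prod_const,
      Nat.card_Icc, ← pow_mul, Nat.mul_comm]
    simp
  rw [hL, Finset.prod_congr rfl key, Finset.prod_div_distrib]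
end

section
/- Let n ≥ 1 be an integer and regard the adjacency matrix of the path graph P_n on n vertices as a real matrix. Then for every real number x, det(x · I_n - A(P_n)) = ∏_{k=1}^{n} (x - 2 cos(k π / (n+1))). -/
open SimpleGraph Matrix Real Finset

-- auxiliary: sum over Fin n of an indicator at value c
private lemma sum_ite_fin (n c : ℕ) (g : ℕ → ℝ) :
    ∑ i : Fin n, (if (i : ℕ) = c then g (i : ℕ) else 0) =
      if c < n then g c else 0 := by
  split_ifs with h
  · rw [Finset.sum_eq_single (⟨c, h⟩ : Fin n)]
    · simp
    · intro b _ hb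
      rw [if_neg]
      intro hbc
      exact hb (Fin.ext hbc)
    · simp
  · apply Finset.sum_eq_zero
    intro i _
    rw [if_neg]
    omega

private lemma trig_key (θ m : ℝ) :
    Real.sin (m * θ) + Real.sin ((m + 2) * θ) = 2 * Real.cos θ * Real.sin ((m + 1) * θ) := by
  rw [show m * θ = (m + 1) * θ - θ by ring, show (m + 2) * θ = (m + 1) * θ + θ by ring,
    Real.sin_add, Real.sin_sub]
  ring

-- a monic polynomial of degree n with n distinct roots is the product of the linear factors
private lemma eval_eq_prod_of_roots {p : Polynomial ℝ} (hm : p.Monic) {n : ℕ}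
    (hdeg : p.natDegree = n) (r : Fin n → ℝ) (hinj : Function.Injective r)
    (hroot : ∀ k, p.eval (r k) = 0) (x : ℝ) :
    p.eval x = ∏ k : Fin n, (x - r k) := by
  classical
  have hp0 : p ≠ 0 := hm.ne_zero
  set s : Finset ℝ := Finset.image r Finset.univ with hs
  have hscard : s.card = n := by
    rw [hs, Finset.card_image_of_injective _ hinj, Finset.card_univ, Fintype.card_fin]
  have hsub : s.val ⊆ p.roots := by
    intro a ha
    simp only [hs, Finset.mem_val, Finset.mem_image] at ha
    obtain ⟨k, _, rfl⟩ := ha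
    rw [Polynomial.mem_roots hp0]
    exact hroot k
  have hle : s.val ≤ p.roots := (Multiset.le_iff_subset s.nodup).2 hsub
  have hcard : Multiset.card p.roots ≤ n := hdeg ▸ p.card_roots'
  have hroots : p.roots = s.val := by
    refine (Multiset.eq_of_le_of_card_le hle ?_).symm
    simpa [hscard] using hcard
  have hsplit : p.Splits := by
    rw [Polynomial.splits_iff_card_roots, hroots]
    simp [hscard, hdeg]
  have hfact := hsplit.eq_prod_roots_of_monic hm
  rw [hfact, Polynomial.eval_multiset_prod, hroots]
  rw [show ((s.val.map fun a => Polynomial.X - Polynomial.C a).map (Polynomial.eval x))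
      = s.val.map (fun a => x - a) by rw [Multiset.map_map]; congr 1; funext a; simp]
  rw [← Finset.prod_eq_multiset_prod, Finset.prod_image (by intro a _ b _ h; exact hinj h)]

open scoped Classical in
theorem charpoly_path (n : ℕ) (hn : 1 ≤ n) (x : ℝ) :
    (x • (1 : Matrix (Fin n) (Fin n) ℝ) - (pathGraph n).adjMatrix ℝ).det =
      ∏ k ∈ Finset.Icc 1 n, (x - 2 * Real.cos (k * π / (n + 1))) := by
  classical
  set M : Matrix (Fin n) (Fin n) ℝ := (pathGraph n).adjMatrix ℝ with hM
  set p := M.charpoly with hp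
  -- evaluation of the characteristic polynomial
  have heval : ∀ y : ℝ, p.eval y = (y • (1 : Matrix (Fin n) (Fin n) ℝ) - M).det := by
    intro y
    have : (Matrix.charmatrix M).map (Polynomial.eval y) =
        y • (1 : Matrix (Fin n) (Fin n) ℝ) - M := by
      ext i j
      by_cases h : i = j <;>
        simp [Matrix.charmatrix_apply, Matrix.map_apply, Matrix.one_apply, h,
          Matrix.diagonal_apply, Matrix.smul_apply]
    rw [hp, Matrix.charpoly, ← this]
    have h := RingHom.map_det (Polynomial.evalRingHom y) (Matrix.charmatrix M)
    simp only [RingHom.mapMatrix_apply, Polynomial.coe_evalRingHom] at h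
    exact h
  -- the candidate eigenvalues
  set r : Fin n → ℝ := fun k => 2 * Real.cos (((k : ℝ) + 1) * π / (n + 1)) with hr
  have hnpos : (0 : ℝ) < (n : ℝ) + 1 := by positivity
  have hθmem : ∀ k : Fin n, ((k : ℝ) + 1) * π / (n + 1) ∈ Set.Ioo 0 π := by
    intro k
    constructor
    · positivity
    · rw [div_lt_iff₀ hnpos]
      have hk : (k : ℝ) + 1 < (n : ℝ) + 1 := by
        have := k.isLt; push_cast; exact_mod_cast by exact_mod_cast Nat.add_lt_add_right this 1
      nlinarith [Real.pi_pos]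
  have hinj : Function.Injective r := by
    intro a b hab
    have h1 := hθmem a
    have h2 := hθmem b
    have hcos : Real.cos (((a : ℝ) + 1) * π / (n + 1)) =
        Real.cos (((b : ℝ) + 1) * π / (n + 1)) :=
      mul_left_cancel₀ (two_ne_zero (α := ℝ)) hab
    have hθeq := Real.injOn_cos ⟨h1.1.le, h1.2.le⟩ ⟨h2.1.le, h2.2.le⟩ hcos
    have hne : ((n : ℝ) + 1) ≠ 0 := ne_of_gt hnpos
    have h3 : ((a : ℝ) + 1) * π = ((b : ℝ) + 1) * π := by
      have := congrArg (· * ((n : ℝ) + 1)) hθeq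
      simpa [div_mul_cancel₀, hne] using this
    have h4 : ((a : ℝ) + 1) = ((b : ℝ) + 1) := mul_right_cancel₀ Real.pi_ne_zero h3
    have h5 : (a : ℝ) = b := by linarith
    exact Fin.ext (by exact_mod_cast h5)
  -- each r k is a root of p
  have hroot : ∀ k : Fin n, p.eval (r k) = 0 := by
    intro k
    set θ : ℝ := ((k : ℝ) + 1) * π / (n + 1) with hθ
    have hθ0 : 0 < θ := (hθmem k).1
    have hθπ : θ < π := (hθmem k).2
    rw [heval]
    rw [← Matrix.exists_mulVec_eq_zero_iff]
    refine ⟨fun j => Real.sin (((j : ℝ) + 1) * θ), ?_, ?_⟩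
    · intro hzero
      have h0 : (0 : ℕ) < n := hn
      have hthis := congrFun hzero ⟨0, h0⟩
      simp only [Pi.zero_apply] at hthis
      have hval : (((⟨0, h0⟩ : Fin n) : ℕ) : ℝ) = 0 := by norm_num
      rw [hval, zero_add, one_mul] at hthis
      exact absurd hthis (ne_of_gt (Real.sin_pos_of_pos_of_lt_pi hθ0 hθπ))
    · funext j
      have hsub : ((r k • (1 : Matrix (Fin n) (Fin n) ℝ) - M) *ᵥ
          fun j => Real.sin (((j : ℝ) + 1) * θ)) j
          = r k * Real.sin (((j : ℝ) + 1) * θ)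
            - (M *ᵥ fun j => Real.sin (((j : ℝ) + 1) * θ)) j := by
        simp [Matrix.sub_mulVec, Matrix.smul_mulVec]
      -- compute the adjacency sum
      have hadj : (M *ᵥ fun j => Real.sin (((j : ℝ) + 1) * θ)) j
          = Real.sin ((j : ℝ) * θ) + Real.sin (((j : ℝ) + 2) * θ) := by
        rw [hM, SimpleGraph.adjMatrix_mulVec_apply]
        rw [SimpleGraph.neighborFinset_eq_filter, Finset.sum_filter]
        have hsplit : ∀ i : Fin n, (if (pathGraph n).Adj j i
              then Real.sin (((i : ℝ) + 1) * θ) else 0)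
            = (if (i : ℕ) = (j : ℕ) + 1 then Real.sin ((((i : ℕ) : ℝ) + 1) * θ) else 0)
              + (if (i : ℕ) + 1 = (j : ℕ) then Real.sin ((((i : ℕ) : ℝ) + 1) * θ) else 0) := by
          intro i
          rw [SimpleGraph.pathGraph_adj]
          by_cases h1 : (i : ℕ) = (j : ℕ) + 1
          · have h2 : ¬((i : ℕ) + 1 = (j : ℕ)) := by omega
            rw [if_pos (Or.inl h1.symm), if_pos h1, if_neg h2, add_zero]
          · by_cases h2 : (i : ℕ) + 1 = (j : ℕ)
            · rw [if_pos (Or.inr h2), if_neg h1, if_pos h2, zero_add]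
            · rw [if_neg (by omega : ¬((j : ℕ) + 1 = (i : ℕ) ∨ (i : ℕ) + 1 = (j : ℕ))),
                if_neg h1, if_neg h2, add_zero]
        rw [Finset.sum_congr rfl (fun i _ => hsplit i), Finset.sum_add_distrib]
        have hs1 : ∑ i : Fin n, (if (i : ℕ) = (j : ℕ) + 1
              then Real.sin ((((i : ℕ) : ℝ) + 1) * θ) else 0)
            = Real.sin (((j : ℝ) + 2) * θ) := by
          rw [sum_ite_fin n ((j : ℕ) + 1) (fun m => Real.sin (((m : ℝ) + 1) * θ))]
          by_cases h : (j : ℕ) + 1 < n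
          · rw [if_pos h]; push_cast; ring_nf
          · rw [if_neg h]
            have hjn : (j : ℕ) + 1 = n := by have := j.isLt; omega
            have : ((j : ℝ) + 2) * θ = ((k : ℝ) + 1) * π := by
              rw [hθ]
              have : ((j : ℝ) + 2) = (n : ℝ) + 1 := by
                have : ((j : ℕ) : ℝ) + 1 = (n : ℝ) := by exact_mod_cast congrArg Nat.cast hjn
                linarith
              rw [this]
              field_simp
            rw [this]
            have : ∃ m : ℤ, ((k : ℝ) + 1) * π = m * π := ⟨(k : ℤ) + 1, by push_cast; ring⟩
            obtain ⟨m, hm⟩ := this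
            rw [hm, Real.sin_int_mul_pi]
        have hs2 : ∑ i : Fin n, (if (i : ℕ) + 1 = (j : ℕ)
              then Real.sin ((((i : ℕ) : ℝ) + 1) * θ) else 0)
            = Real.sin ((j : ℝ) * θ) := by
          rcases Nat.eq_zero_or_pos (j : ℕ) with hj0 | hjpos
          · rw [Finset.sum_eq_zero (fun i _ => by rw [if_neg]; omega)]
            have : ((j : ℕ) : ℝ) = 0 := by exact_mod_cast hj0
            rw [this, zero_mul, Real.sin_zero]
          · obtain ⟨m, hm⟩ : ∃ m, (j : ℕ) = m + 1 := ⟨(j : ℕ) - 1, by omega⟩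
            have hmn : m < n := by have := j.isLt; omega
            have hcongr : ∀ i : Fin n, (if (i : ℕ) + 1 = (j : ℕ)
                  then Real.sin ((((i : ℕ) : ℝ) + 1) * θ) else 0)
                = (if (i : ℕ) = m then Real.sin ((((i : ℕ) : ℝ) + 1) * θ) else 0) := by
              intro i
              by_cases h : (i : ℕ) + 1 = (j : ℕ)
              · rw [if_pos h, if_pos (by omega)]
              · rw [if_neg h, if_neg (by omega)]
            rw [Finset.sum_congr rfl (fun i _ => hcongr i)]
            rw [sum_ite_fin n m (fun l => Real.sin (((l : ℝ) + 1) * θ)), if_pos hmn]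
            have : ((m : ℝ) + 1) = ((j : ℕ) : ℝ) := by exact_mod_cast (congrArg Nat.cast hm).symm
            rw [this]
        rw [hs1, hs2]; ring
      rw [hsub, hadj]
      have := trig_key θ (j : ℝ)
      rw [hr]
      simp only [Pi.zero_apply]
      nlinarith [this]
  -- put it together
  have hmonic : p.Monic := Matrix.charpoly_monic M
  have hdeg : p.natDegree = n := by
    rw [hp, Matrix.charpoly_natDegree_eq_dim, Fintype.card_fin]
  have hprod := eval_eq_prod_of_roots hmonic hdeg r hinj hroot x
  rw [← heval x] at *
  rw [hprod]
  -- reindex the product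
  rw [show Finset.Icc 1 n = Finset.Ico 1 (n + 1) by rw [Finset.Ico_add_one_right_eq_Icc],
    Finset.prod_Ico_eq_prod_range]
  simp only [Nat.add_sub_cancel]
  rw [← Fin.prod_univ_eq_prod_range (fun i => x - 2 * Real.cos ((↑(1 + i)) * π / (n + 1))) n]
  apply Finset.prod_congr rfl
  intro k _
  rw [hr]
  push_cast
  ring_nf
end
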